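/- arXiv:1410.5505 — 7 statements merged into one kernel-verified Lean document; each statement's English description precedes it below -/
import Mathlib

section
/- Let 0 → Y →(j) X →(q) Z → 0 be an exact sequence of Banach spaces with Y and Z infinite-dimensional. Then X is hereditarily indecomposable if and only if Y is hereditarily indecomposable and q is strictly singular. -/
def IndecomposableSpace (X : Type*) [NormedAddCommGroup X] [NormedSpace ℝ X] : Prop :=
  ¬ ∃ A B : Submodule ℝ X, IsClosed (A : Set X) ∧ IsClosed (B : Set X) ∧
      ¬ FiniteDimensional ℝ A ∧ ¬ FiniteDimensional ℝ B ∧ IsCompl A B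

def HI (X : Type*) [NormedAddCommGroup X] [NormedSpace ℝ X] : Prop :=
  ¬ FiniteDimensional ℝ X ∧
    ∀ M : Submodule ℝ X, IsClosed (M : Set X) → ¬ FiniteDimensional ℝ M →
      IndecomposableSpace M

def StrictlySingular {X Z : Type*} [NormedAddCommGroup X] [NormedSpace ℝ X]
    [NormedAddCommGroup Z] [NormedSpace ℝ Z] (q : X →L[ℝ] Z) : Prop :=
  ∀ M : Submodule ℝ X, IsClosed (M : Set X) → ¬ FiniteDimensional ℝ M →
    ¬ ∃ c : ℝ, 0 < c ∧ ∀ x ∈ M, c * ‖x‖ ≤ ‖q x‖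

section Aux

variable {E F : Type*} [NormedAddCommGroup E] [NormedSpace ℝ E]
  [NormedAddCommGroup F] [NormedSpace ℝ F]

theorem indec_congr (e : E ≃L[ℝ] F) (h : IndecomposableSpace E) : IndecomposableSpace F := by
  rintro ⟨A, B, hAc, hBc, hAf, hBf, hco⟩
  refine h ⟨A.map (e.symm.toLinearEquiv : F →ₗ[ℝ] E), B.map (e.symm.toLinearEquiv : F →ₗ[ℝ] E),
    ?_, ?_, ?_, ?_, ?_⟩
  · show IsClosed ((A.map (e.symm.toLinearEquiv : F →ₗ[ℝ] E)) : Set E)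
    rw [Submodule.map_coe]
    exact e.symm.toHomeomorph.isClosedMap _ hAc
  · rw [Submodule.map_coe]
    exact e.symm.toHomeomorph.isClosedMap _ hBc
  · intro hfin
    haveI := hfin
    exact hAf ((e.symm.toLinearEquiv.submoduleMap A).symm.finiteDimensional)
  · intro hfin
    haveI := hfin
    exact hBf ((e.symm.toLinearEquiv.submoduleMap B).symm.finiteDimensional)
  · have := (Submodule.orderIsoMapComap e.symm.toLinearEquiv).isCompl hco
    exact this

theorem HI_congr (e : E ≃L[ℝ] F) (h : HI E) : HI F := by
  obtain ⟨hfin, hsub⟩ := h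
  constructor
  · intro hf
    haveI := hf
    exact hfin e.symm.toLinearEquiv.finiteDimensional
  · intro M hMc hMf
    have hMc' : IsClosed ((M.map (e.symm.toLinearEquiv : F →ₗ[ℝ] E)) : Set E) := by
      rw [Submodule.map_coe]; exact e.symm.toHomeomorph.isClosedMap _ hMc
    have hMf' : ¬ FiniteDimensional ℝ (M.map (e.symm.toLinearEquiv : F →ₗ[ℝ] E)) := by
      intro hfin'
      haveI := hfin'
      exact hMf ((e.symm.toLinearEquiv.submoduleMap M).symm.finiteDimensional)
    have hind := hsub _ hMc' hMf'
    have e2 := (e.symm.submoduleMap M).symm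
    exact indec_congr e2 hind

end Aux


section Aux2

variable {E : Type*} [NormedAddCommGroup E] [NormedSpace ℝ E]

/-- The natural continuous linear equiv between a submodule of a submodule and its image. -/
noncomputable def subMapEquiv (M : Submodule ℝ E) (N : Submodule ℝ M) :
    N ≃L[ℝ] (N.map M.subtype) :=
  { Submodule.equivMapOfInjective M.subtype M.injective_subtype N with
    continuous_toFun := by
      apply Continuous.subtype_mk
      have : ∀ x : N, ((Submodule.equivMapOfInjective M.subtype M.injective_subtype N x : E)) =
          ((x : M) : E) := fun x =>
        Submodule.coe_equivMapOfInjective_apply M.subtype M.injective_subtype N x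
      exact (continuous_congr this).mpr
        (continuous_subtype_val.comp continuous_subtype_val)
    continuous_invFun := by
      apply Continuous.subtype_mk
      apply Continuous.subtype_mk
      have : ∀ y : (N.map M.subtype),
          ((((Submodule.equivMapOfInjective M.subtype M.injective_subtype N).symm y : M)) : E)
            = (y : E) := by
        intro y
        have h1 := (Submodule.equivMapOfInjective M.subtype M.injective_subtype N).apply_symm_apply y
        have h2 := Submodule.coe_equivMapOfInjective_apply M.subtype M.injective_subtype N
          ((Submodule.equivMapOfInjective M.subtype M.injective_subtype N).symm y)
        rw [h1] at h2
        exact h2.symm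
      exact (continuous_congr this).mpr continuous_subtype_val }

theorem HI_subspace (h : HI E) (M : Submodule ℝ E) (hMc : IsClosed (M : Set E))
    (hMf : ¬ FiniteDimensional ℝ M) : HI M := by
  refine ⟨hMf, ?_⟩
  intro N hNc hNf
  have hNc' : IsClosed ((N.map M.subtype) : Set E) := by
    rw [Submodule.map_coe]
    have : ⇑M.subtype = (Subtype.val : M → E) := rfl
    rw [this]
    exact (hMc.isClosedEmbedding_subtypeVal.isClosedMap) _ hNc
  have hNf' : ¬ FiniteDimensional ℝ (N.map M.subtype) := by
    intro hfin
    haveI := hfin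
    exact hNf (subMapEquiv M N).symm.toLinearEquiv.finiteDimensional
  have hind := h.2 _ hNc' hNf'
  exact indec_congr (subMapEquiv M N).symm hind

theorem not_HI_of_decomp [CompleteSpace E] (A B : Submodule ℝ E)
    (hAc : IsClosed (A : Set E)) (hBc : IsClosed (B : Set E))
    (hAf : ¬ FiniteDimensional ℝ A) (hBf : ¬ FiniteDimensional ℝ B)
    (C : ℝ) (h : ∀ a ∈ A, ∀ b ∈ B, ‖a‖ ≤ C * ‖a + b‖) : ¬ HI E := by
  intro hHI
  -- C can be assumed positive
  set C' : ℝ := max C 1 with hC'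
  have hC'1 : (1:ℝ) ≤ C' := le_max_right _ _
  have hC'0 : (0:ℝ) < C' := lt_of_lt_of_le one_pos hC'1
  have h' : ∀ a ∈ A, ∀ b ∈ B, ‖a‖ ≤ C' * ‖a + b‖ := fun a ha b hb =>
    (h a ha b hb).trans (mul_le_mul_of_nonneg_right (le_max_left _ _) (norm_nonneg _))
  set N : Submodule ℝ E := A ⊔ B with hN
  have hNc : IsClosed (N : Set E) := by
    apply IsSeqClosed.isClosed
    intro x p hx hlim
    have hmem : ∀ n, ∃ a ∈ A, ∃ b ∈ B, a + b = x n := by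
      intro n
      have := hx n
      rw [hN, SetLike.mem_coe, Submodule.mem_sup] at this
      obtain ⟨a, ha, b, hb, hab⟩ := this
      exact ⟨a, ha, b, hb, hab⟩
    choose a ha b hb hab using hmem
    have hcx : CauchySeq x := hlim.cauchySeq
    have hca : CauchySeq a := by
      rw [Metric.cauchySeq_iff] at hcx ⊢
      intro ε hε
      obtain ⟨K, hK⟩ := hcx (ε / C') (by positivity)
      refine ⟨K, fun m hm n hn => ?_⟩
      have key : ‖a m - a n‖ ≤ C' * ‖(a m - a n) + (b m - b n)‖ :=
        h' _ (sub_mem (ha m) (ha n)) _ (sub_mem (hb m) (hb n))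
      have : (a m - a n) + (b m - b n) = x m - x n := by
        rw [← hab m, ← hab n]; abel
      rw [this] at key
      have hd := hK m hm n hn
      rw [dist_eq_norm] at hd ⊢
      calc ‖a m - a n‖ ≤ C' * ‖x m - x n‖ := key
        _ < C' * (ε / C') := by
            exact mul_lt_mul_of_pos_left hd hC'0
        _ = ε := by field_simp
    obtain ⟨α, hα⟩ := cauchySeq_tendsto_of_complete hca
    have hαA : α ∈ A := hAc.mem_of_tendsto hα (Filter.Eventually.of_forall ha)
    have hbl : Filter.Tendsto b Filter.atTop (nhds (p - α)) := by
      have : ∀ n, b n = x n - a n := by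
        intro n; rw [← hab n]; abel
      rw [funext this]
      exact hlim.sub hα
    have hβB : p - α ∈ B := hBc.mem_of_tendsto hbl (Filter.Eventually.of_forall hb)
    rw [hN, SetLike.mem_coe, Submodule.mem_sup]
    exact ⟨α, hαA, p - α, hβB, by abel⟩
  have hNf : ¬ FiniteDimensional ℝ N := by
    intro hfin
    haveI := hfin
    exact hAf (Submodule.finiteDimensional_of_le (le_sup_left : A ≤ N))
  have hind := hHI.2 N hNc hNf
  apply hind
  refine ⟨A.comap N.subtype, B.comap N.subtype, ?_, ?_, ?_, ?_, ?_⟩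
  · exact IsClosed.preimage continuous_subtype_val hAc
  · exact IsClosed.preimage continuous_subtype_val hBc
  · intro hfin
    haveI := hfin
    exact hAf (Submodule.comapSubtypeEquivOfLe (le_sup_left : A ≤ N)).finiteDimensional
  · intro hfin
    haveI := hfin
    exact hBf (Submodule.comapSubtypeEquivOfLe (le_sup_right : B ≤ N)).finiteDimensional
  · constructor
    · rw [disjoint_iff]
      ext x
      simp only [Submodule.mem_inf, Submodule.mem_comap, Submodule.mem_bot]
      constructor
      · rintro ⟨hxA, hxB⟩
        have := h' _ hxA _ (neg_mem hxB)
        rw [add_neg_cancel, norm_zero, mul_zero] at this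
        have : (x : E) = 0 := norm_le_zero_iff.mp this
        exact Subtype.ext this
      · rintro rfl
        simp
    · rw [codisjoint_iff]
      rw [eq_top_iff]
      intro x _
      have hx : (x : E) ∈ A ⊔ B := x.2
      rw [Submodule.mem_sup] at hx
      obtain ⟨a, haA, b, hbB, hab⟩ := hx
      have haN : a ∈ N := (le_sup_left : A ≤ N) haA
      have hbN : b ∈ N := (le_sup_right : B ≤ N) hbB
      rw [Submodule.mem_sup]
      exact ⟨⟨a, haN⟩, by simpa [Submodule.mem_comap] using haA,
             ⟨b, hbN⟩, by simpa [Submodule.mem_comap] using hbB,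
             by ext; simp [hab]⟩

end Aux2

section Aux3

variable {X Z : Type*} [NormedAddCommGroup X] [NormedSpace ℝ X]
  [NormedAddCommGroup Z] [NormedSpace ℝ Z]

theorem infdim_inter_ker (V : Submodule ℝ X) (hV : ¬ FiniteDimensional ℝ V)
    {ι : Type*} [Fintype ι] (φ : ι → (X →L[ℝ] ℝ)) :
    ¬ FiniteDimensional ℝ (V ⊓ ⨅ i, LinearMap.ker (φ i : X →ₗ[ℝ] ℝ) : Submodule ℝ X) := by
  intro hfin
  set K : Submodule ℝ X := ⨅ i, LinearMap.ker (φ i : X →ₗ[ℝ] ℝ) with hK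
  set Φ : V →ₗ[ℝ] (ι → ℝ) := LinearMap.pi (fun i => ((φ i).toLinearMap.comp V.subtype)) with hΦ
  have hker : LinearMap.ker Φ = (V ⊓ K).comap V.subtype := by
    ext x
    simp [hΦ, LinearMap.mem_ker, hK, Submodule.mem_iInf, funext_iff, Submodule.mem_comap,
      LinearMap.pi_apply]
  haveI hkerfin : FiniteDimensional ℝ (LinearMap.ker Φ) := by
    rw [hker]
    haveI := hfin
    exact (Submodule.comapSubtypeEquivOfLe (inf_le_left : V ⊓ K ≤ V)).symm.finiteDimensional
  haveI : FiniteDimensional ℝ (ι → ℝ) := inferInstance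
  haveI : FiniteDimensional ℝ (LinearMap.range Φ) :=
    FiniteDimensional.finiteDimensional_submodule _
  apply hV
  have hrk := LinearMap.lift_rank_range_add_rank_ker Φ
  have h1 : Module.rank ℝ (LinearMap.range Φ) < Cardinal.aleph0 := Module.rank_lt_aleph0 ℝ _
  have h2 : Module.rank ℝ (LinearMap.ker Φ) < Cardinal.aleph0 := Module.rank_lt_aleph0 ℝ _
  have : Cardinal.lift.{_} (Module.rank ℝ V) < Cardinal.aleph0 := by
    rw [← hrk]
    apply Cardinal.add_lt_aleph0
    · exact Cardinal.lift_lt_aleph0.mpr h1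
    · exact Cardinal.lift_lt_aleph0.mpr h2
  exact Module.rank_lt_aleph0_iff.mp (Cardinal.lift_lt_aleph0.mp this)

theorem mazur_step (q : X →L[ℝ] Z) (hSS : StrictlySingular q)
    (V : Submodule ℝ X) (hVc : IsClosed (V : Set X)) (hVf : ¬ FiniteDimensional ℝ V)
    (F : Submodule ℝ X) (hF : FiniteDimensional ℝ F) {ε δ : ℝ} (hε : 0 < ε) (hδ : 0 < δ) :
    ∃ x ∈ V, ‖x‖ = 1 ∧ ‖q x‖ < δ ∧ ∀ f ∈ F, ∀ l : ℝ, ‖f‖ ≤ (1 + ε) * ‖f + l • x‖ := by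
  haveI := hF
  classical
  set r : ℝ := ε / (2 * (1 + ε)) with hr
  have hr0 : 0 < r := by positivity
  have hr12 : r < 1/2 := by
    rw [hr, div_lt_div_iff₀ (by positivity) (by norm_num)]
    nlinarith
  -- compact sphere and finite net
  set S : Set X := Subtype.val '' (Metric.sphere (0 : F) 1) with hS
  have hScomp : IsCompact S := (isCompact_sphere (0 : F) 1).image continuous_subtype_val
  have htb := hScomp.totallyBounded
  rw [Metric.totallyBounded_iff] at htb
  obtain ⟨t, htfin, htcov⟩ := htb r hr0
  have hSnorm : ∀ g ∈ S, ‖g‖ = 1 := by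
    rintro g ⟨⟨g', hg'F⟩, hg's, rfl⟩
    have : ‖(⟨g', hg'F⟩ : F)‖ = 1 := by simpa using hg's
    simpa using this
  set t' : Set X := {y ∈ t | y ≠ 0} with ht'
  haveI : Fintype t' := (htfin.subset (fun y hy => hy.1)).fintype
  have hφex : ∀ y : t', ∃ g : X →L[ℝ] ℝ, ‖g‖ = 1 ∧ g y = ‖(y : X)‖ :=
    fun y => exists_dual_vector ℝ (y : X) (norm_ne_zero_iff.mpr y.2.2)
  choose φ hφ1 hφ2 using hφex
  set W : Submodule ℝ X := V ⊓ ⨅ y : t', LinearMap.ker (φ y : X →ₗ[ℝ] ℝ) with hW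
  have hWc : IsClosed (W : Set X) := by
    rw [hW]
    have : ((V ⊓ ⨅ y : t', LinearMap.ker (φ y : X →ₗ[ℝ] ℝ) : Submodule ℝ X) : Set X)
        = (V : Set X) ∩ ⋂ y : t', ((LinearMap.ker (φ y : X →ₗ[ℝ] ℝ) : Submodule ℝ X) : Set X) := by
      rw [Submodule.coe_inf]
      congr 1
      rw [Submodule.coe_iInf]
    rw [this]
    exact hVc.inter (isClosed_iInter (fun y => ContinuousLinearMap.isClosed_ker (φ y)))
  have hWf : ¬ FiniteDimensional ℝ W := infdim_inter_ker V hVf φ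
  -- find an almost-kernel unit vector in W
  have hnb := hSS W hWc hWf
  have : ¬ (∀ x ∈ W, (δ/2) * ‖x‖ ≤ ‖q x‖) := fun hcon => hnb ⟨δ/2, by positivity, hcon⟩
  push_neg at this
  obtain ⟨x₀, hx₀W, hx₀⟩ := this
  have hx₀ne : x₀ ≠ 0 := by
    intro h0
    rw [h0] at hx₀
    simp only [map_zero, norm_zero, mul_zero] at hx₀
    exact lt_irrefl 0 hx₀
  set e : X := ‖x₀‖⁻¹ • x₀ with he
  have hx₀n : 0 < ‖x₀‖ := norm_pos_iff.mpr hx₀ne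
  have heW : e ∈ W := Submodule.smul_mem _ _ hx₀W
  have heV : e ∈ V := heW.1
  have hen : ‖e‖ = 1 := norm_smul_inv_norm hx₀ne
  have heq : ‖q e‖ < δ := by
    rw [he, map_smul, norm_smul, norm_inv, Real.norm_eq_abs, abs_of_pos hx₀n]
    calc ‖x₀‖⁻¹ * ‖q x₀‖ < ‖x₀‖⁻¹ * ((δ/2) * ‖x₀‖) := by
          exact mul_lt_mul_of_pos_left hx₀ (by positivity)
      _ = δ/2 := by field_simp
      _ < δ := by linarith
  have heker : ∀ y : t', φ y e = 0 := by
    intro y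
    have : e ∈ (⨅ y : t', LinearMap.ker (φ y : X →ₗ[ℝ] ℝ) : Submodule ℝ X) := heW.2
    rw [Submodule.mem_iInf] at this
    exact this y
  refine ⟨e, heV, hen, heq, ?_⟩
  intro f hfF l
  by_cases hf0 : f = 0
  · rw [hf0, norm_zero]
    positivity
  · have hfn : 0 < ‖f‖ := norm_pos_iff.mpr hf0
    set g : X := ‖f‖⁻¹ • f with hg
    have hgF : g ∈ F := Submodule.smul_mem _ _ hfF
    have hgn : ‖g‖ = 1 := norm_smul_inv_norm hf0
    have hgS : g ∈ S := by
      refine ⟨⟨g, hgF⟩, ?_, rfl⟩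
      have h : ‖(⟨g, hgF⟩ : F)‖ = 1 := by rw [Submodule.coe_norm]; exact hgn
      simpa [Metric.mem_sphere, dist_zero_right] using h
    obtain ⟨y, hyt, hgy⟩ : ∃ y ∈ t, g ∈ Metric.ball y r := by
      have := htcov hgS
      simpa using this
    have hgyd : ‖g - y‖ < r := by
      rw [← dist_eq_norm]
      exact Metric.mem_ball.mp hgy
    have hyn : 1 - r ≤ ‖y‖ := by
      have : ‖g‖ - ‖g - y‖ ≤ ‖y‖ := by
        have := norm_sub_norm_le g (g - y)
        simpa using this
      rw [hgn] at this
      linarith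
    have hyne : y ≠ 0 := by
      intro h0
      rw [h0, norm_zero] at hyn
      linarith
    set y' : t' := ⟨y, hyt, hyne⟩ with hy'
    -- the key lower bound
    have hkey : 1 - 2*r ≤ ‖g + (‖f‖⁻¹ * l) • e‖ := by
      have h1 : φ y' (g + (‖f‖⁻¹ * l) • e) = φ y' g := by
        simp [map_add, map_smul, heker y']
      have h2 : |φ y' g| ≤ ‖g + (‖f‖⁻¹ * l) • e‖ := by
        rw [← h1]
        calc |φ y' (g + (‖f‖⁻¹ * l) • e)| ≤ ‖φ y'‖ * ‖g + (‖f‖⁻¹ * l) • e‖ :=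
              (φ y').le_opNorm _
          _ = ‖g + (‖f‖⁻¹ * l) • e‖ := by rw [hφ1 y']; ring
      have h3 : |φ y' (y - g)| ≤ r := by
        calc |φ y' (y - g)| ≤ ‖φ y'‖ * ‖y - g‖ := (φ y').le_opNorm _
          _ = ‖y - g‖ := by rw [hφ1 y']; ring
          _ = ‖g - y‖ := by rw [norm_sub_rev]
          _ ≤ r := le_of_lt hgyd
      have h4 : φ y' g = ‖y‖ - φ y' (y - g) := by
        have : φ y' y = ‖y‖ := hφ2 y'
        rw [map_sub]
        rw [this]
        ring
      have h5 : 1 - 2*r ≤ φ y' g := by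
        rw [h4]
        have := abs_le.mp h3
        linarith
      calc 1 - 2*r ≤ φ y' g := h5
        _ ≤ |φ y' g| := le_abs_self _
        _ ≤ ‖g + (‖f‖⁻¹ * l) • e‖ := h2
    -- scale back
    have hfe : f + l • e = ‖f‖ • (g + (‖f‖⁻¹ * l) • e) := by
      rw [hg]
      match_scalars <;> (field_simp; try ring)
    have hnorm : ‖f + l • e‖ = ‖f‖ * ‖g + (‖f‖⁻¹ * l) • e‖ := by
      rw [hfe, norm_smul, Real.norm_eq_abs, abs_of_pos hfn]
    rw [hnorm]
    have hrr : (1 + ε) * (1 - 2*r) = 1 := by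
      rw [hr]
      field_simp
      ring
    calc ‖f‖ = ‖f‖ * ((1+ε) * (1 - 2*r)) := by rw [hrr, mul_one]
      _ ≤ ‖f‖ * ((1+ε) * ‖g + (‖f‖⁻¹ * l) • e‖) := by
          apply mul_le_mul_of_nonneg_left _ (le_of_lt hfn)
          exact mul_le_mul_of_nonneg_left hkey (by positivity)
      _ = (1 + ε) * (‖f‖ * ‖g + (‖f‖⁻¹ * l) • e‖) := by ring

end Aux3

section Aux4

theorem sum_even_split {M : Type*} [AddCommMonoid M] (f : ℕ → M) (m : ℕ) :
    ∑ i ∈ Finset.range (2*m), (if Even i then f i else 0) = ∑ j ∈ Finset.range m, f (2*j) := by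
  induction m with
  | zero => simp
  | succ m ih =>
    have h2 : 2*(m+1) = (2*m + 1) + 1 := by ring
    rw [h2, Finset.sum_range_succ, Finset.sum_range_succ, Finset.sum_range_succ, ih]
    have he : Even (2*m) := even_two_mul m
    have ho : ¬ Even (2*m + 1) := by simp [Nat.even_add_one, he]
    rw [if_pos he, if_neg ho, add_zero]

theorem sum_odd_split {M : Type*} [AddCommMonoid M] (f : ℕ → M) (m : ℕ) :
    ∑ i ∈ Finset.range (2*m), (if Even i then 0 else f i) = ∑ j ∈ Finset.range m, f (2*j+1) := by
  induction m with
  | zero => simp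
  | succ m ih =>
    have h2 : 2*(m+1) = (2*m + 1) + 1 := by ring
    rw [h2, Finset.sum_range_succ, Finset.sum_range_succ, Finset.sum_range_succ, ih]
    have he : Even (2*m) := even_two_mul m
    have ho : ¬ Even (2*m + 1) := by simp [Nat.even_add_one, he]
    rw [if_pos he, if_neg ho, add_zero]

theorem one_le_prod_real {ι : Type*} (s : Finset ι) (f : ι → ℝ) (h : ∀ i ∈ s, 1 ≤ f i) :
    1 ≤ ∏ i ∈ s, f i :=
  Finset.prod_induction f (fun x => 1 ≤ x) (fun a b ha hb => by nlinarith) le_rfl h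

theorem prod_one_add_le (n : ℕ) :
    ∏ k ∈ Finset.range n, (1+((2:ℝ)⁻¹)^(k+2)) ≤ 2 - ((2:ℝ)⁻¹)^n := by
  induction n with
  | zero => norm_num
  | succ n ih =>
    rw [Finset.prod_range_succ]
    have ha : (0:ℝ) < ((2:ℝ)⁻¹)^n := by positivity
    have ha1 : ((2:ℝ)⁻¹)^n ≤ 1 := by
      apply pow_le_one₀ <;> norm_num
    have hstep : ((2:ℝ)⁻¹)^(n+2) = ((2:ℝ)⁻¹)^n / 4 := by
      rw [pow_add]; norm_num; ring
    have hstep1 : ((2:ℝ)⁻¹)^(n+1) = ((2:ℝ)⁻¹)^n / 2 := by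
      rw [pow_add]; norm_num; ring
    calc (∏ k ∈ Finset.range n, (1+((2:ℝ)⁻¹)^(k+2))) * (1+((2:ℝ)⁻¹)^(n+2))
        ≤ (2 - ((2:ℝ)⁻¹)^n) * (1+((2:ℝ)⁻¹)^(n+2)) := by
          apply mul_le_mul_of_nonneg_right ih
          positivity
      _ ≤ 2 - ((2:ℝ)⁻¹)^(n+1) := by
          rw [hstep, hstep1]
          nlinarith [ha, ha1]

theorem sum_pow_half_le (n : ℕ) :
    ∑ i ∈ Finset.range n, ((2:ℝ)⁻¹)^(i+5) ≤ 1/16 := by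
  have h : ∀ i : ℕ, ((2:ℝ)⁻¹)^(i+5) = (1/32) * (1/2)^i := by
    intro i
    rw [pow_add]
    norm_num
    ring
  calc ∑ i ∈ Finset.range n, ((2:ℝ)⁻¹)^(i+5)
      = (1/32) * ∑ i ∈ Finset.range n, ((1:ℝ)/2)^i := by
        rw [Finset.mul_sum]
        exact Finset.sum_congr rfl (fun i _ => h i)
    _ ≤ (1/32) * 2 := by
        apply mul_le_mul_of_nonneg_left (sum_geometric_two_le n)
        norm_num
    _ = 1/16 := by norm_num

theorem bound_closure {E : Type*} [NormedAddCommGroup E] [NormedSpace ℝ E]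
    (A B : Submodule ℝ E) (C : ℝ)
    (h : ∀ a ∈ A, ∀ b ∈ B, ‖a‖ ≤ C * ‖a + b‖) :
    ∀ a ∈ A.topologicalClosure, ∀ b ∈ B.topologicalClosure, ‖a‖ ≤ C * ‖a + b‖ := by
  intro a ha b hb
  set f : E × E → ℝ := fun p => C * ‖p.1 + p.2‖ - ‖p.1‖ with hf
  have hfc : Continuous f := by
    apply Continuous.sub
    · exact continuous_const.mul ((continuous_fst.add continuous_snd).norm)
    · exact continuous_fst.norm
  have hclosed : IsClosed {p : E × E | 0 ≤ f p} := isClosed_le continuous_const hfc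
  have hsub : (A : Set E) ×ˢ (B : Set E) ⊆ {p : E × E | 0 ≤ f p} := by
    rintro ⟨x, y⟩ ⟨hx, hy⟩
    have := h x hx y hy
    simp only [Set.mem_setOf_eq, hf]
    linarith
  have hmem : (a, b) ∈ closure ((A : Set E) ×ˢ (B : Set E)) := by
    rw [closure_prod_eq]
    constructor
    · exact ha
    · exact hb
  have := (closure_minimal hsub hclosed) hmem
  simp only [Set.mem_setOf_eq, hf] at this
  linarith

end Aux4

section Core

variable {X Z : Type*} [NormedAddCommGroup X] [NormedSpace ℝ X] [CompleteSpace X]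
  [NormedAddCommGroup Z] [NormedSpace ℝ Z] [CompleteSpace Z]

set_option maxHeartbeats 2000000 in
/-- Core construction: a topological decomposition inside `X` plus strict singularity of a
surjective `q` yields a decomposition inside `ker q`. -/
theorem not_HI_ker (q : X →L[ℝ] Z) (hq : Function.Surjective q) (hSS : StrictlySingular q)
    (Abar Bbar : Submodule ℝ X)
    (hAc : IsClosed (Abar : Set X)) (hBc : IsClosed (Bbar : Set X))
    (hAf : ¬ FiniteDimensional ℝ Abar) (hBf : ¬ FiniteDimensional ℝ Bbar)
    (C : ℝ) (hC : 0 < C)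
    (hbound : ∀ a ∈ Abar, ∀ b ∈ Bbar, ‖a‖ ≤ C * ‖a + b‖) :
    ¬ HI (LinearMap.ker (q : X →ₗ[ℝ] Z)) := by
  classical
  obtain ⟨C₀, hC₀pos, hlift⟩ := q.exists_preimage_norm_le hq
  -- selection of the next vector
  have hsel : ∀ (n : ℕ) (F : Submodule ℝ X), FiniteDimensional ℝ F →
      ∃ x, (x ∈ (if Even n then Abar else Bbar)) ∧ ‖x‖ = 1 ∧
        ‖q x‖ < ((2:ℝ)⁻¹)^(n+5) / C₀ ∧
        ∀ f ∈ F, ∀ l : ℝ, ‖f‖ ≤ (1 + ((2:ℝ)⁻¹)^(n+2)) * ‖f + l • x‖ := by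
    intro n F hF
    by_cases hpar : Even n
    · rw [if_pos hpar]
      exact mazur_step q hSS Abar hAc hAf F hF (by positivity) (by positivity)
    · rw [if_neg hpar]
      exact mazur_step q hSS Bbar hBc hBf F hF (by positivity) (by positivity)
  choose pick hp1 hp2 hp3 hp4 using hsel
  set step : ℕ → (ℕ → X) → (ℕ → X) := fun n f => Function.update f n
    (pick n (Submodule.span ℝ (f '' Set.Iio n))
      (FiniteDimensional.span_of_finite ℝ ((Set.finite_Iio n).image f))) with hstep
  set Fs : ℕ → ℕ → X := fun n => Nat.rec (fun _ => (0:X)) step n with hFsdef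
  set e : ℕ → X := fun n => Fs (n+1) n with he
  have hFss : ∀ n, Fs (n+1) = step n (Fs n) := fun n => rfl
  have hcoh : ∀ n m, m < n → Fs n m = e m := by
    intro n
    induction n with
    | zero => intro m hm; exact absurd hm (Nat.not_lt_zero m)
    | succ n ih =>
      intro m hm
      rcases Nat.lt_succ_iff_lt_or_eq.mp hm with h | h
      · rw [hFss n, hstep]
        simp only []
        rw [Function.update_of_ne (Nat.ne_of_lt h)]
        exact ih m h
      · subst h; rfl
  have himg : ∀ n, (Fs n) '' Set.Iio n = e '' Set.Iio n := by
    intro n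
    exact Set.image_congr (fun m hm => hcoh n m hm)
  have hspan : ∀ n, Submodule.span ℝ ((Fs n) '' Set.Iio n) = Submodule.span ℝ (e '' Set.Iio n) :=
    fun n => by rw [himg n]
  have hedef : ∀ n, e n = pick n (Submodule.span ℝ ((Fs n) '' Set.Iio n))
      (FiniteDimensional.span_of_finite ℝ ((Set.finite_Iio n).image (Fs n))) := by
    intro n
    show Fs (n+1) n = _
    rw [hFss n, hstep]
    simp only []
    rw [Function.update_self]
  have he1 : ∀ n, ‖e n‖ = 1 := by
    intro n; rw [hedef n]; exact hp2 n _ _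
  have he3 : ∀ n, ‖q (e n)‖ ≤ ((2:ℝ)⁻¹)^(n+5) / C₀ := by
    intro n; rw [hedef n]; exact le_of_lt (hp3 n _ _)
  have heA : ∀ n, Even n → e n ∈ Abar := by
    intro n hn
    have h := hp1 n (Submodule.span ℝ ((Fs n) '' Set.Iio n))
      (FiniteDimensional.span_of_finite ℝ ((Set.finite_Iio n).image (Fs n)))
    rw [if_pos hn] at h
    rw [hedef n]; exact h
  have heB : ∀ n, ¬ Even n → e n ∈ Bbar := by
    intro n hn
    have h := hp1 n (Submodule.span ℝ ((Fs n) '' Set.Iio n))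
      (FiniteDimensional.span_of_finite ℝ ((Set.finite_Iio n).image (Fs n)))
    rw [if_neg hn] at h
    rw [hedef n]; exact h
  have hmaz : ∀ n, ∀ f ∈ Submodule.span ℝ (e '' Set.Iio n), ∀ l : ℝ,
      ‖f‖ ≤ (1 + ((2:ℝ)⁻¹)^(n+2)) * ‖f + l • e n‖ := by
    intro n
    have h4 := hp4 n (Submodule.span ℝ ((Fs n) '' Set.Iio n))
      (FiniteDimensional.span_of_finite ℝ ((Set.finite_Iio n).image (Fs n)))
    rw [← hedef n] at h4
    rw [hspan n] at h4
    exact h4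
  -- lifting to the kernel
  have hui : ∀ n, ∃ uu : X, q uu = q (e n) ∧ ‖uu‖ ≤ C₀ * ‖q (e n)‖ := fun n => hlift (q (e n))
  choose u hu1 hu2 using hui
  have hu3 : ∀ n, ‖u n‖ ≤ ((2:ℝ)⁻¹)^(n+5) := by
    intro n
    calc ‖u n‖ ≤ C₀ * ‖q (e n)‖ := hu2 n
      _ ≤ C₀ * (((2:ℝ)⁻¹)^(n+5) / C₀) := mul_le_mul_of_nonneg_left (he3 n) (le_of_lt hC₀pos)
      _ = ((2:ℝ)⁻¹)^(n+5) := by field_simp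
  set g : ℕ → X := fun n => e n - u n with hgdef
  have hgK : ∀ n, g n ∈ LinearMap.ker (q : X →ₗ[ℝ] Z) := by
    intro n
    rw [LinearMap.mem_ker, hgdef]
    simp only [ContinuousLinearMap.coe_coe, map_sub, hu1 n, sub_self]
  -- partial sums
  set Sc : (ℕ → ℝ) → ℕ → X := fun c n => ∑ i ∈ Finset.range n, c i • e i with hScdef
  set Tc : (ℕ → ℝ) → ℕ → X := fun c n => ∑ i ∈ Finset.range n, c i • g i with hTcdef
  have hSsucc : ∀ c n, Sc c (n+1) = Sc c n + c n • e n := by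
    intro c n; rw [hScdef]; exact Finset.sum_range_succ _ n
  have hSmem : ∀ c n, Sc c n ∈ Submodule.span ℝ (e '' Set.Iio n) := by
    intro c n
    apply Submodule.sum_mem
    intro i hi
    apply Submodule.smul_mem
    exact Submodule.subset_span ⟨i, Finset.mem_range.mp hi, rfl⟩
  have hproj : ∀ (c : ℕ → ℝ) m n, m ≤ n →
      ‖Sc c m‖ ≤ (∏ k ∈ Finset.Ico m n, (1+((2:ℝ)⁻¹)^(k+2))) * ‖Sc c n‖ := by
    intro c m n hmn
    induction n, hmn using Nat.le_induction with
    | base => simp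
    | succ n hn ih =>
      have h1 : ‖Sc c n‖ ≤ (1 + ((2:ℝ)⁻¹)^(n+2)) * ‖Sc c (n+1)‖ := by
        have := hmaz n (Sc c n) (hSmem c n) (c n)
        rw [← hSsucc c n] at this
        exact this
      have hPnn : (0:ℝ) ≤ ∏ k ∈ Finset.Ico m n, (1+((2:ℝ)⁻¹)^(k+2)) :=
        Finset.prod_nonneg (fun k _ => by positivity)
      calc ‖Sc c m‖ ≤ (∏ k ∈ Finset.Ico m n, (1+((2:ℝ)⁻¹)^(k+2))) * ‖Sc c n‖ := ih
        _ ≤ (∏ k ∈ Finset.Ico m n, (1+((2:ℝ)⁻¹)^(k+2))) *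
            ((1 + ((2:ℝ)⁻¹)^(n+2)) * ‖Sc c (n+1)‖) := mul_le_mul_of_nonneg_left h1 hPnn
        _ = (∏ k ∈ Finset.Ico m (n+1), (1+((2:ℝ)⁻¹)^(k+2))) * ‖Sc c (n+1)‖ := by
            rw [Finset.prod_Ico_succ_top hn]; ring
  have hproj2 : ∀ (c : ℕ → ℝ) m n, m ≤ n → ‖Sc c m‖ ≤ 2 * ‖Sc c n‖ := by
    intro c m n hmn
    have hP : (∏ k ∈ Finset.Ico m n, (1+((2:ℝ)⁻¹)^(k+2))) ≤ 2 := by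
      calc (∏ k ∈ Finset.Ico m n, (1+((2:ℝ)⁻¹)^(k+2)))
          ≤ (∏ k ∈ Finset.Ico 0 m, (1+((2:ℝ)⁻¹)^(k+2))) *
              (∏ k ∈ Finset.Ico m n, (1+((2:ℝ)⁻¹)^(k+2))) := by
            apply le_mul_of_one_le_left
              (Finset.prod_nonneg (fun k _ => by positivity))
            exact one_le_prod_real _ _ (fun k _ => by
              have : (0:ℝ) < ((2:ℝ)⁻¹)^(k+2) := by positivity
              linarith)
        _ = (∏ k ∈ Finset.range n, (1+((2:ℝ)⁻¹)^(k+2))) := by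
            rw [Finset.range_eq_Ico]
            exact Finset.prod_Ico_consecutive _ (Nat.zero_le m) hmn
        _ ≤ 2 - ((2:ℝ)⁻¹)^n := prod_one_add_le n
        _ ≤ 2 := by
            have : (0:ℝ) < ((2:ℝ)⁻¹)^n := by positivity
            linarith
    calc ‖Sc c m‖ ≤ (∏ k ∈ Finset.Ico m n, (1+((2:ℝ)⁻¹)^(k+2))) * ‖Sc c n‖ := hproj c m n hmn
      _ ≤ 2 * ‖Sc c n‖ := mul_le_mul_of_nonneg_right hP (norm_nonneg _)
  have hcoef : ∀ (c : ℕ → ℝ) n i, i < n → |c i| ≤ 4 * ‖Sc c n‖ := by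
    intro c n i hin
    have h1 : c i • e i = Sc c (i+1) - Sc c i := by rw [hSsucc c i]; abel
    have h2 : |c i| = ‖c i • e i‖ := by
      rw [norm_smul, he1 i, Real.norm_eq_abs, mul_one]
    rw [h2, h1]
    calc ‖Sc c (i+1) - Sc c i‖ ≤ ‖Sc c (i+1)‖ + ‖Sc c i‖ := norm_sub_le _ _
      _ ≤ 2 * ‖Sc c n‖ + 2 * ‖Sc c n‖ :=
          add_le_add (hproj2 c (i+1) n hin) (hproj2 c i n (le_of_lt (Nat.lt_of_lt_of_le hin le_rfl)))
      _ = 4 * ‖Sc c n‖ := by ring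
  have hdiff : ∀ (c c' : ℕ → ℝ) n, (∀ i, |c' i| ≤ |c i|) →
      ‖Sc c' n - Tc c' n‖ ≤ (1/4) * ‖Sc c n‖ := by
    intro c c' n hcc
    have hST : Sc c' n - Tc c' n = ∑ i ∈ Finset.range n, c' i • u i := by
      rw [hScdef, hTcdef]
      rw [← Finset.sum_sub_distrib]
      apply Finset.sum_congr rfl
      intro i _
      rw [hgdef]
      simp only [smul_sub]
      abel
    rw [hST]
    calc ‖∑ i ∈ Finset.range n, c' i • u i‖ ≤ ∑ i ∈ Finset.range n, ‖c' i • u i‖ :=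
          norm_sum_le _ _
      _ ≤ ∑ i ∈ Finset.range n, (4 * ‖Sc c n‖) * ((2:ℝ)⁻¹)^(i+5) := by
          apply Finset.sum_le_sum
          intro i hi
          rw [norm_smul, Real.norm_eq_abs]
          apply mul_le_mul ((hcc i).trans (hcoef c n i (Finset.mem_range.mp hi))) (hu3 i)
            (norm_nonneg _)
          positivity
      _ = (4 * ‖Sc c n‖) * ∑ i ∈ Finset.range n, ((2:ℝ)⁻¹)^(i+5) := by
          rw [Finset.mul_sum]
      _ ≤ (4 * ‖Sc c n‖) * (1/16) := by
          apply mul_le_mul_of_nonneg_left (sum_pow_half_le n)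
          positivity
      _ = (1/4) * ‖Sc c n‖ := by ring
  have h43 : ∀ (c : ℕ → ℝ) n, ‖Sc c n‖ ≤ (4/3) * ‖Tc c n‖ := by
    intro c n
    have hd := hdiff c c n (fun i => le_rfl)
    have ht : ‖Sc c n‖ ≤ ‖Tc c n‖ + ‖Sc c n - Tc c n‖ := by
      have := norm_add_le (Tc c n) (Sc c n - Tc c n)
      simpa using this
    linarith
  -- even part estimate
  have hsplitc : ∀ (c : ℕ → ℝ) n,
      Sc (fun i => if Even i then c i else 0) n + Sc (fun i => if Even i then 0 else c i) n
        = Sc c n := by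
    intro c n
    rw [hScdef]
    simp only []
    rw [← Finset.sum_add_distrib]
    apply Finset.sum_congr rfl
    intro i _
    by_cases hi : Even i <;> simp [hi]
  have hsplitcT : ∀ (c : ℕ → ℝ) n,
      Tc (fun i => if Even i then c i else 0) n + Tc (fun i => if Even i then 0 else c i) n
        = Tc c n := by
    intro c n
    rw [hTcdef]
    simp only []
    rw [← Finset.sum_add_distrib]
    apply Finset.sum_congr rfl
    intro i _
    by_cases hi : Even i <;> simp [hi]
  have hTA : ∀ (c : ℕ → ℝ) n,
      ‖Tc (fun i => if Even i then c i else 0) n‖ ≤ (2*C+1) * ‖Tc c n‖ := by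
    intro c n
    set cE : ℕ → ℝ := fun i => if Even i then c i else 0 with hcE
    set cO : ℕ → ℝ := fun i => if Even i then 0 else c i with hcO
    have hmemA : Sc cE n ∈ Abar := by
      apply Submodule.sum_mem
      intro i _
      by_cases hi : Even i
      · simp only [hcE, if_pos hi]
        exact Submodule.smul_mem _ _ (heA i hi)
      · simp only [hcE, if_neg hi, zero_smul]
        exact Submodule.zero_mem _
    have hmemB : Sc cO n ∈ Bbar := by
      apply Submodule.sum_mem
      intro i _
      by_cases hi : Even i
      · simp only [hcO, if_pos hi, zero_smul]
        exact Submodule.zero_mem _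
      · simp only [hcO, if_neg hi]
        exact Submodule.smul_mem _ _ (heB i hi)
    have hb : ‖Sc cE n‖ ≤ C * ‖Sc c n‖ := by
      have := hbound _ hmemA _ hmemB
      rw [hsplitc c n] at this
      exact this
    have d2 : ‖Sc cE n - Tc cE n‖ ≤ (1/4) * ‖Sc c n‖ := by
      apply hdiff c cE n
      intro i
      by_cases hi : Even i <;> simp [hcE, hi, abs_nonneg]
    have h43' := h43 c n
    have htri : ‖Tc cE n‖ ≤ ‖Sc cE n‖ + ‖Sc cE n - Tc cE n‖ := by
      have := norm_sub_le (Sc cE n) (Sc cE n - Tc cE n)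
      simpa using this
    have hTnn : (0:ℝ) ≤ ‖Tc c n‖ := norm_nonneg _
    nlinarith [norm_nonneg (Sc c n)]
  -- move into the kernel
  have hKc : IsClosed ((LinearMap.ker (q : X →ₗ[ℝ] Z) : Submodule ℝ X) : Set X) := ContinuousLinearMap.isClosed_ker q
  haveI : CompleteSpace (LinearMap.ker (q : X →ₗ[ℝ] Z)) := hKc.completeSpace_coe
  set gK : ℕ → (LinearMap.ker (q : X →ₗ[ℝ] Z)) := fun n => ⟨g n, hgK n⟩ with hgKdef
  have hgKval : ∀ n, ((gK n : X)) = g n := fun n => rfl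
  set SA : Submodule ℝ (LinearMap.ker (q : X →ₗ[ℝ] Z)) :=
    Submodule.span ℝ (Set.range (fun i => gK (2*i))) with hSAdef
  set SB : Submodule ℝ (LinearMap.ker (q : X →ₗ[ℝ] Z)) :=
    Submodule.span ℝ (Set.range (fun i => gK (2*i+1))) with hSBdef
  have hvalsum : ∀ (s : Finset ℕ) (f : ℕ → (LinearMap.ker (q : X →ₗ[ℝ] Z))),
      ((∑ i ∈ s, f i : (LinearMap.ker (q : X →ₗ[ℝ] Z))) : X) = ∑ i ∈ s, (f i : X) := by
    intro s f
    exact map_sum (LinearMap.ker (q : X →ₗ[ℝ] Z)).subtype f s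
  -- representation of span elements
  have hrep : ∀ (k : ℕ → ℕ) (y : (LinearMap.ker (q : X →ₗ[ℝ] Z))),
      y ∈ Submodule.span ℝ (Set.range (fun i => gK (k i))) →
      ∃ (N₀ : ℕ) (cc : ℕ → ℝ), ∀ N, N₀ ≤ N →
        (y : X) = ∑ j ∈ Finset.range N, cc j • g (k j) := by
    intro k y hy
    rw [Finsupp.mem_span_range_iff_exists_finsupp] at hy
    obtain ⟨ca, hca⟩ := hy
    refine ⟨ca.support.sup id + 1, fun j => ca j, ?_⟩
    intro N hN
    have hsupp : ca.support ⊆ Finset.range N := by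
      intro j hj
      rw [Finset.mem_range]
      have : id j ≤ ca.support.sup id := Finset.le_sup hj
      simp only [id] at this
      omega
    have h1 : ca.sum (fun i a => a • gK (k i)) = ∑ j ∈ Finset.range N, ca j • gK (k j) :=
      Finsupp.sum_of_support_subset ca hsupp _ (fun i _ => by rw [zero_smul])
    rw [← hca, h1, hvalsum]
    apply Finset.sum_congr rfl
    intro j _
    rfl
  -- inequality on span elements
  have hspanIneq : ∀ yA ∈ SA, ∀ yB ∈ SB, ‖yA‖ ≤ (2*C+1) * ‖yA + yB‖ := by
    intro yA hyA yB hyB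
    obtain ⟨NA, ca, hcaeq⟩ := hrep (fun i => 2*i) yA hyA
    obtain ⟨NB, cb, hcbeq⟩ := hrep (fun i => 2*i+1) yB hyB
    set N : ℕ := max NA NB with hN
    have hyAeq := hcaeq N (le_max_left _ _)
    have hyBeq := hcbeq N (le_max_right _ _)
    set c : ℕ → ℝ := fun i => if Even i then ca (i/2) else cb (i/2) with hc
    have hE : Tc (fun i => if Even i then c i else 0) (2*N) = (yA : X) := by
      rw [hTcdef]
      simp only []
      have h1 : ∀ i, (if Even i then c i else 0) • g i = (if Even i then c i • g i else 0) := by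
        intro i; by_cases hi : Even i <;> simp [hi]
      rw [Finset.sum_congr rfl (fun i _ => h1 i), sum_even_split (fun i => c i • g i) N]
      rw [hyAeq]
      apply Finset.sum_congr rfl
      intro j _
      have hj2 : (2*j)/2 = j := by omega
      simp [hc, even_two_mul j, hj2]
    have hO : Tc (fun i => if Even i then 0 else c i) (2*N) = (yB : X) := by
      rw [hTcdef]
      simp only []
      have h1 : ∀ i, (if Even i then 0 else c i) • g i = (if Even i then 0 else c i • g i) := by
        intro i; by_cases hi : Even i <;> simp [hi]
      rw [Finset.sum_congr rfl (fun i _ => h1 i), sum_odd_split (fun i => c i • g i) N]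
      rw [hyBeq]
      apply Finset.sum_congr rfl
      intro j _
      have hj2 : (2*j+1)/2 = j := by omega
      have hodd : ¬ Even (2*j+1) := by simp [Nat.even_add_one, even_two_mul j]
      simp [hc, hodd, hj2]
    have hTot : Tc c (2*N) = (yA : X) + (yB : X) := by
      rw [← hsplitcT c (2*N), hE, hO]
    have := hTA c (2*N)
    rw [hE, hTot] at this
    have hnA : ‖yA‖ = ‖(yA : X)‖ := rfl
    have hnAB : ‖yA + yB‖ = ‖(yA : X) + (yB : X)‖ := rfl
    rw [hnA, hnAB]
    exact this
  -- linear independence at the X level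
  have hlinA : LinearIndependent ℝ (fun i : ℕ => g (2*i)) := by
    rw [linearIndependent_iff']
    intro s f hsum i his
    set N : ℕ := s.sup id + 1 with hNdef
    have hsub : s ⊆ Finset.range N := by
      intro j hj
      rw [Finset.mem_range]
      have : id j ≤ s.sup id := Finset.le_sup hj
      simp only [id] at this
      omega
    set c : ℕ → ℝ := fun i => if Even i ∧ i/2 ∈ s then f (i/2) else 0 with hc
    have hTc0 : Tc c (2*N) = 0 := by
      rw [hTcdef]
      simp only []
      have h1 : ∀ i, c i • g i = (if Even i then c i • g i else 0) := by
        intro i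
        by_cases hi : Even i
        · rw [if_pos hi]
        · rw [if_neg hi]
          have : c i = 0 := by simp [hc, hi]
          rw [this, zero_smul]
      rw [Finset.sum_congr rfl (fun i _ => h1 i), sum_even_split (fun i => c i • g i) N]
      have h2 : ∀ j, c (2*j) • g (2*j) = (if j ∈ s then f j • g (2*j) else 0) := by
        intro j
        have hj2 : (2*j)/2 = j := by omega
        by_cases hj : j ∈ s
        · simp [hc, even_two_mul j, hj2, hj]
        · simp [hc, even_two_mul j, hj2, hj]
      rw [Finset.sum_congr rfl (fun j _ => h2 j), Finset.sum_ite_mem,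
        Finset.inter_eq_right.mpr hsub, hsum]
    have hSc0 : Sc c (2*N) = 0 := by
      have := h43 c (2*N)
      rw [hTc0, norm_zero, mul_zero] at this
      exact norm_le_zero_iff.mp this
    have hci : |c (2*i)| ≤ 4 * ‖Sc c (2*N)‖ := by
      apply hcoef c (2*N) (2*i)
      have : i < N := Finset.mem_range.mp (hsub his)
      omega
    rw [hSc0, norm_zero, mul_zero] at hci
    have hc0 : c (2*i) = 0 := abs_eq_zero.mp (le_antisymm hci (abs_nonneg _))
    have hj2 : (2*i)/2 = i := by omega
    simpa [hc, even_two_mul i, hj2, his] using hc0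
  have hlinB : LinearIndependent ℝ (fun i : ℕ => g (2*i+1)) := by
    rw [linearIndependent_iff']
    intro s f hsum i his
    set N : ℕ := s.sup id + 1 with hNdef
    have hsub : s ⊆ Finset.range N := by
      intro j hj
      rw [Finset.mem_range]
      have : id j ≤ s.sup id := Finset.le_sup hj
      simp only [id] at this
      omega
    set c : ℕ → ℝ := fun i => if ¬ Even i ∧ i/2 ∈ s then f (i/2) else 0 with hc
    have hTc0 : Tc c (2*N) = 0 := by
      rw [hTcdef]
      simp only []
      have h1 : ∀ i, c i • g i = (if Even i then 0 else c i • g i) := by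
        intro i
        by_cases hi : Even i
        · rw [if_pos hi]
          have : c i = 0 := by simp [hc, hi]
          rw [this, zero_smul]
        · rw [if_neg hi]
      rw [Finset.sum_congr rfl (fun i _ => h1 i), sum_odd_split (fun i => c i • g i) N]
      have h2 : ∀ j, c (2*j+1) • g (2*j+1) = (if j ∈ s then f j • g (2*j+1) else 0) := by
        intro j
        have hj2 : (2*j+1)/2 = j := by omega
        have hodd : ¬ Even (2*j+1) := by simp [Nat.even_add_one, even_two_mul j]
        by_cases hj : j ∈ s
        · simp [hc, hodd, hj2, hj]
        · simp [hc, hodd, hj2, hj]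
      rw [Finset.sum_congr rfl (fun j _ => h2 j), Finset.sum_ite_mem,
        Finset.inter_eq_right.mpr hsub, hsum]
    have hSc0 : Sc c (2*N) = 0 := by
      have := h43 c (2*N)
      rw [hTc0, norm_zero, mul_zero] at this
      exact norm_le_zero_iff.mp this
    have hci : |c (2*i+1)| ≤ 4 * ‖Sc c (2*N)‖ := by
      apply hcoef c (2*N) (2*i+1)
      have : i < N := Finset.mem_range.mp (hsub his)
      omega
    rw [hSc0, norm_zero, mul_zero] at hci
    have hc0 : c (2*i+1) = 0 := abs_eq_zero.mp (le_antisymm hci (abs_nonneg _))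
    have hj2 : (2*i+1)/2 = i := by omega
    have hodd : ¬ Even (2*i+1) := by simp [Nat.even_add_one, even_two_mul i]
    simpa [hc, hodd, hj2, his] using hc0
  -- infinite dimensionality of the closures
  have hSAtf : ¬ FiniteDimensional ℝ SA.topologicalClosure := by
    intro hfin
    haveI := hfin
    haveI : FiniteDimensional ℝ SA :=
      Submodule.finiteDimensional_of_le SA.le_topologicalClosure
    have hv : LinearIndependent ℝ
        (fun i : ℕ => (⟨gK (2*i), Submodule.subset_span ⟨i, rfl⟩⟩ : SA)) := by
      apply LinearIndependent.of_comp ((LinearMap.ker (q : X →ₗ[ℝ] Z)).subtype.comp SA.subtype)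
      exact hlinA
    haveI : Finite ℕ := hv.finite
    exact not_finite ℕ
  have hSBtf : ¬ FiniteDimensional ℝ SB.topologicalClosure := by
    intro hfin
    haveI := hfin
    haveI : FiniteDimensional ℝ SB :=
      Submodule.finiteDimensional_of_le SB.le_topologicalClosure
    have hv : LinearIndependent ℝ
        (fun i : ℕ => (⟨gK (2*i+1), Submodule.subset_span ⟨i, rfl⟩⟩ : SB)) := by
      apply LinearIndependent.of_comp ((LinearMap.ker (q : X →ₗ[ℝ] Z)).subtype.comp SB.subtype)
      exact hlinB
    haveI : Finite ℕ := hv.finite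
    exact not_finite ℕ
  -- conclude
  exact not_HI_of_decomp SA.topologicalClosure SB.topologicalClosure
    (Submodule.isClosed_topologicalClosure _) (Submodule.isClosed_topologicalClosure _)
    hSAtf hSBtf (2*C+1) (bound_closure SA SB (2*C+1) hspanIneq)

end Core

/-- for an exact sequence 0 → Y → X → Z → 0 of Banach spaces with `Y`, `Z`
infinite-dimensional, the middle space `X` is hereditarily indecomposable iff `Y` is
hereditarily indecomposable and the quotient map `q` is strictly singular. -/
theorem stmt0 {Y X Z : Type*}
    [NormedAddCommGroup Y] [NormedSpace ℝ Y] [CompleteSpace Y]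
    [NormedAddCommGroup X] [NormedSpace ℝ X] [CompleteSpace X]
    [NormedAddCommGroup Z] [NormedSpace ℝ Z] [CompleteSpace Z]
    (hY : ¬ FiniteDimensional ℝ Y) (hZ : ¬ FiniteDimensional ℝ Z)
    (j : Y →L[ℝ] X) (q : X →L[ℝ] Z)
    (hj : Function.Injective j) (hq : Function.Surjective q)
    (hexact : LinearMap.range (j : Y →ₗ[ℝ] X) = LinearMap.ker (q : X →ₗ[ℝ] Z)) :
    HI X ↔ HI Y ∧ StrictlySingular q := by
  classical
  have hKc : IsClosed ((LinearMap.ker (q : X →ₗ[ℝ] Z) : Submodule ℝ X) : Set X) :=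
    ContinuousLinearMap.isClosed_ker q
  haveI : CompleteSpace (LinearMap.ker (q : X →ₗ[ℝ] Z)) := hKc.completeSpace_coe
  have hjmem : ∀ y, j y ∈ LinearMap.ker (q : X →ₗ[ℝ] Z) := by
    intro y
    rw [← hexact]
    exact LinearMap.mem_range_self (j : Y →ₗ[ℝ] X) y
  set jK : Y →L[ℝ] (LinearMap.ker (q : X →ₗ[ℝ] Z)) := j.codRestrict (LinearMap.ker (q : X →ₗ[ℝ] Z)) hjmem with hjK
  have hjKinj : Function.Injective jK := by
    intro a b hab
    apply hj
    exact congrArg Subtype.val hab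
  have hker : LinearMap.ker (jK : Y →ₗ[ℝ] (LinearMap.ker (q : X →ₗ[ℝ] Z))) = ⊥ := LinearMap.ker_eq_bot.mpr hjKinj
  have hrange : LinearMap.range (jK : Y →ₗ[ℝ] (LinearMap.ker (q : X →ₗ[ℝ] Z))) = ⊤ := by
    rw [LinearMap.range_eq_top]
    rintro ⟨x, hx⟩
    have hx' : x ∈ LinearMap.range (j : Y →ₗ[ℝ] X) := by rw [hexact]; exact hx
    obtain ⟨y, hy⟩ := hx'
    exact ⟨y, Subtype.ext hy⟩
  set eYK : Y ≃L[ℝ] (LinearMap.ker (q : X →ₗ[ℝ] Z)) := ContinuousLinearEquiv.ofBijective jK hker hrange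
    with heYK
  have hKf : ¬ FiniteDimensional ℝ (LinearMap.ker (q : X →ₗ[ℝ] Z)) := by
    intro hf
    haveI := hf
    exact hY eYK.symm.toLinearEquiv.finiteDimensional
  constructor
  · -- forward direction
    intro hHIX
    constructor
    · -- HI Y
      have hKHI : HI (LinearMap.ker (q : X →ₗ[ℝ] Z)) := HI_subspace hHIX (LinearMap.ker (q : X →ₗ[ℝ] Z)) hKc hKf
      exact HI_congr eYK.symm hKHI
    · -- strictly singular
      intro M hMc hMf hex
      obtain ⟨c, hc, hb⟩ := hex
      refine not_HI_of_decomp M (LinearMap.ker (q : X →ₗ[ℝ] Z)) hMc hKc hMf hKf (c⁻¹ * ‖q‖) ?_ hHIX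
      intro a ha b hb'
      have hqb : q b = 0 := hb'
      have h1 : c * ‖a‖ ≤ ‖q a‖ := hb a ha
      have h2 : q (a + b) = q a := by rw [map_add, hqb, add_zero]
      have h3 : ‖q a‖ ≤ ‖q‖ * ‖a + b‖ := by rw [← h2]; exact q.le_opNorm _
      have h4 : c * ‖a‖ ≤ ‖q‖ * ‖a + b‖ := h1.trans h3
      rw [mul_assoc]
      rw [← le_div_iff₀' hc] at h4
      rw [div_eq_inv_mul] at h4
      exact h4
  · -- backward direction
    rintro ⟨hHIY, hSS⟩
    constructor
    · -- X is infinite-dimensional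
      intro hf
      haveI := hf
      haveI : FiniteDimensional ℝ (LinearMap.ker (q : X →ₗ[ℝ] Z)) :=
        FiniteDimensional.finiteDimensional_submodule _
      exact hKf inferInstance
    · -- every closed infinite-dimensional subspace is indecomposable
      intro M hMc hMf
      rintro ⟨A, B, hAc, hBc, hAf, hBf, hco⟩
      haveI : CompleteSpace M := hMc.completeSpace_coe
      -- continuous projection onto A along B
      set projL : M →L[ℝ] A := A.linearProjOfClosedCompl B hco hAc hBc with hprojL
      have hproj_left : ∀ a : A, projL (a : M) = a := by
        intro a
        have : (projL : M →ₗ[ℝ] A) = A.linearProjOfIsCompl B hco :=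
          Submodule.coe_continuous_linearProjOfClosedCompl hco hAc hBc
        have h2 : projL (a : M) = A.linearProjOfIsCompl B hco (a : M) := by
          rw [← this]; rfl
        rw [h2]
        exact Submodule.linearProjOfIsCompl_apply_left hco a
      have hproj_right : ∀ b : B, projL (b : M) = 0 := by
        intro b
        have : (projL : M →ₗ[ℝ] A) = A.linearProjOfIsCompl B hco :=
          Submodule.coe_continuous_linearProjOfClosedCompl hco hAc hBc
        have h2 : projL (b : M) = A.linearProjOfIsCompl B hco (b : M) := by
          rw [← this]; rfl
        rw [h2]
        exact Submodule.linearProjOfIsCompl_apply_right hco b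
      have hbnd : ∀ a ∈ A, ∀ b ∈ B, ‖a‖ ≤ (‖projL‖ + 1) * ‖a + b‖ := by
        intro a ha b hb
        have h1 : projL (a + b) = ⟨a, ha⟩ := by
          rw [map_add]
          rw [hproj_left ⟨a, ha⟩, hproj_right ⟨b, hb⟩, add_zero]
        have h2 : ‖a‖ = ‖projL (a + b)‖ := by rw [h1]; rfl
        rw [h2]
        calc ‖projL (a + b)‖ ≤ ‖projL‖ * ‖a + b‖ := projL.le_opNorm _
          _ ≤ (‖projL‖ + 1) * ‖a + b‖ := by
              apply mul_le_mul_of_nonneg_right _ (norm_nonneg _)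
              linarith
      -- transfer to submodules of X
      set Abar : Submodule ℝ X := A.map M.subtype with hAbar
      set Bbar : Submodule ℝ X := B.map M.subtype with hBbar
      have hsubval : ⇑M.subtype = (Subtype.val : M → X) := rfl
      have hAbarc : IsClosed (Abar : Set X) := by
        rw [hAbar, Submodule.map_coe, hsubval]
        exact (hMc.isClosedEmbedding_subtypeVal.isClosedMap) _ hAc
      have hBbarc : IsClosed (Bbar : Set X) := by
        rw [hBbar, Submodule.map_coe, hsubval]
        exact (hMc.isClosedEmbedding_subtypeVal.isClosedMap) _ hBc
      have hAbarf : ¬ FiniteDimensional ℝ Abar := by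
        intro hfin
        haveI := hfin
        exact hAf (subMapEquiv M A).symm.toLinearEquiv.finiteDimensional
      have hBbarf : ¬ FiniteDimensional ℝ Bbar := by
        intro hfin
        haveI := hfin
        exact hBf (subMapEquiv M B).symm.toLinearEquiv.finiteDimensional
      have hbnd' : ∀ a ∈ Abar, ∀ b ∈ Bbar, ‖a‖ ≤ (‖projL‖ + 1) * ‖a + b‖ := by
        intro a' ha' b' hb'
        rw [hAbar, Submodule.mem_map] at ha'
        rw [hBbar, Submodule.mem_map] at hb'
        obtain ⟨a, ha, rfl⟩ := ha'
        obtain ⟨b, hb, rfl⟩ := hb'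
        have := hbnd a ha b hb
        have hnc : ‖(a : M)‖ = ‖M.subtype a‖ := rfl
        have hsum : M.subtype a + M.subtype b = M.subtype (a + b) := (map_add _ _ _).symm
        rw [hsum]
        have hnc2 : ‖M.subtype (a+b)‖ = ‖(a + b : M)‖ := rfl
        rw [← hnc, hnc2]
        exact this
      have hnot := not_HI_ker q hq hSS Abar Bbar hAbarc hBbarc hAbarf hBbarf
        (‖projL‖ + 1) (by positivity) hbnd'
      exact hnot (HI_congr eYK hHIY)
end

section
/- For 1 < p < ∞, the Kalton–Peck map 𝒦 on real L_p(0,1), defined by 𝒦(f) = f · log(|f|/‖f‖_p) pointwise for f ≠ 0 (with value 0 at points where f vanishes, and 𝒦(0) = 0), is disjointly singular: for every sequence (f_n) of nonzero, pairwise disjointly supported functions in L_p(0,1), 𝒦 is not trivial on the closed linear span of (f_n). -/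
open MeasureTheory
open scoped ENNReal

/-- Lebesgue measure on `(0,1)`. -/
noncomputable def μ01 : Measure ℝ := volume.restrict (Set.Ioo 0 1)

/-- The Kalton–Peck map on `L_p(0,1)`: `𝒦(f) = f · log(|f|/‖f‖)` pointwise (the value is
`0` at points where `f` vanishes, and `𝒦(0) = 0`, automatically since `Real.log 0 = 0`),
as an element of `L⁰(0,1)` (a.e.-equivalence classes of measurable functions). -/
noncomputable def KPLp (p : ℝ≥0∞) [Fact (1 ≤ p)] (f : Lp ℝ p μ01) : ℝ →ₘ[μ01] ℝ :=
  AEEqFun.mk (fun t => f t * Real.log (|f t| / ‖f‖))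
    (by
      have hf : AEMeasurable (⇑f) μ01 := (Lp.aestronglyMeasurable f).aemeasurable
      have habs : AEMeasurable (fun t => |f t|) μ01 :=
        continuous_abs.measurable.comp_aemeasurable hf
      exact (hf.mul (Real.measurable_log.comp_aemeasurable
        (habs.div_const ‖f‖))).aestronglyMeasurable)

section Aux

open Finset

/-- coe of an Lp finset sum, pointwise a.e. -/
lemma coeFn_finset_sum' {α E : Type*} [MeasurableSpace α] {μ : MeasureTheory.Measure α}
    [NormedAddCommGroup E] {p : ℝ≥0∞} {ι : Type*} (s : Finset ι) (h : ι → Lp E p μ) :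
    ⇑(∑ i ∈ s, h i) =ᵐ[μ] fun t => ∑ i ∈ s, h i t := by
  classical
  induction s using Finset.induction with
  | empty => simp only [Finset.sum_empty]; exact Lp.coeFn_zero E p μ
  | insert a s' hx ih =>
      rw [Finset.sum_insert hx]
      filter_upwards [Lp.coeFn_add (h a) (∑ i ∈ s', h i), ih] with t h1 h2
      simp only [Pi.add_apply] at h1
      rw [h1, h2, Finset.sum_insert hx]

/-- coe of an AEEqFun finset sum, pointwise a.e. -/
lemma coeFn_finset_sum_ae {α E : Type*} [MeasurableSpace α] {μ : MeasureTheory.Measure α}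
    [TopologicalSpace E] [AddCommGroup E] [IsTopologicalAddGroup E] {ι : Type*}
    (s : Finset ι) (h : ι → (α →ₘ[μ] E)) :
    ⇑(∑ i ∈ s, h i) =ᵐ[μ] fun t => ∑ i ∈ s, (h i) t := by
  classical
  induction s using Finset.induction with
  | empty => simp only [Finset.sum_empty]; exact AEEqFun.coeFn_zero (α := α) (β := E) (μ := μ)
  | insert a s' hx ih =>
      rw [Finset.sum_insert hx]
      filter_upwards [AEEqFun.coeFn_add (h a) (∑ i ∈ s', h i), ih] with t h1 h2
      simp only [Pi.add_apply] at h1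
      rw [h1, h2, Finset.sum_insert hx]

/-- a sign pattern indexed by a finite set -/
noncomputable def chi' (s : Finset ℕ) (k : ℕ) : ℝ := if k ∈ s then 1 else -1

lemma chi_sq (s : Finset ℕ) (k : ℕ) : chi' s k * chi' s k = 1 := by
  unfold chi'; split <;> norm_num

lemma chi_abs (s : Finset ℕ) (k : ℕ) : |chi' s k| = 1 := by
  unfold chi'; split <;> norm_num

lemma sum_chi_mul_chi_off (N m n : ℕ) (hn : n < N) (hmn : m ≠ n) :
    ∑ s ∈ (range N).powerset, chi' s m * chi' s n = 0 := by
  classical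
  refine Finset.sum_involution (fun s _ => symmDiff s {n}) ?_ ?_ ?_ ?_
  · intro s hs
    have hm : chi' (symmDiff s {n}) m = chi' s m := by
      unfold chi'
      have : m ∈ symmDiff s {n} ↔ m ∈ s := by
        simp [Finset.mem_symmDiff, hmn]
      simp only [this]
    have hn' : chi' (symmDiff s {n}) n = -chi' s n := by
      unfold chi'
      have : n ∈ symmDiff s {n} ↔ n ∉ s := by
        simp [Finset.mem_symmDiff]
      by_cases h : n ∈ s <;> simp [this, h]
    rw [hm, hn']; ring
  · intro s hs hne
    intro h
    have h' : symmDiff s {n} = s := h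
    have : n ∈ symmDiff s {n} ↔ n ∉ s := by simp [Finset.mem_symmDiff]
    rw [h'] at this
    tauto
  · intro s hs
    rw [Finset.mem_powerset] at hs ⊢
    intro x hx
    rw [Finset.mem_symmDiff] at hx
    rcases hx with ⟨h1, _⟩ | ⟨h1, _⟩
    · exact hs h1
    · simp at h1; subst h1; exact Finset.mem_range.mpr hn
  · intro s hs
    exact symmDiff_symmDiff_cancel_right {n} s

lemma sum_chi_mul_chi_diag (N m : ℕ) :
    ∑ s ∈ (range N).powerset, chi' s m * chi' s m = 2 ^ N := by
  classical
  have : ∀ s ∈ (range N).powerset, chi' s m * chi' s m = 1 := fun s _ => chi_sq s m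
  rw [Finset.sum_congr rfl this, Finset.sum_const, Finset.card_powerset, Finset.card_range]
  simp

end Aux

/-- for `1 < p < ∞` the Kalton–Peck map on `L_p(0,1)` is disjointly
singular: for every sequence `(f_n)` of nonzero pairwise disjointly supported functions,
`𝒦` is not trivial on the closed linear span of `(f_n)`. -/
theorem stmt5 (p : ℝ≥0∞) [Fact (1 ≤ p)] (hp1 : 1 < p) (hptop : p ≠ ⊤)
    (f : ℕ → Lp ℝ p μ01) (hne : ∀ n, f n ≠ 0)
    (hdisj : ∀ m n, m ≠ n → ∀ᵐ t ∂μ01, (f m : ℝ → ℝ) t = 0 ∨ (f n : ℝ → ℝ) t = 0) :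
    ¬ ∃ (L : ((Submodule.span ℝ (Set.range f)).topologicalClosure) →ₗ[ℝ] (ℝ →ₘ[μ01] ℝ))
        (C : ℝ),
        ∀ x : ((Submodule.span ℝ (Set.range f)).topologicalClosure),
          ∃ h : KPLp p ↑x - L x ∈ Lp ℝ p μ01,
            ‖(⟨KPLp p ↑x - L x, h⟩ : Lp ℝ p μ01)‖ ≤ C * ‖(x : Lp ℝ p μ01)‖ := by
  classical
  set M := (Submodule.span ℝ (Set.range f)).topologicalClosure with hMdef
  rintro ⟨L, C, hL⟩
  have hfact : (1:ℝ≥0∞) ≤ p := Fact.out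
  have hp0 : p ≠ 0 := fun h => by simp [h] at hfact
  have hpr0 : 0 < p.toReal := ENNReal.toReal_pos hp0 hptop
  set pr := p.toReal with hprdef
  -- normalized sequence
  have hfn : ∀ n, ‖f n‖ ≠ 0 := fun n => norm_ne_zero_iff.mpr (hne n)
  set g : ℕ → Lp ℝ p μ01 := fun n => ‖f n‖⁻¹ • f n with hgdef
  have hgnorm : ∀ n, ‖g n‖ = 1 := by
    intro n
    show ‖‖f n‖⁻¹ • f n‖ = 1
    rw [norm_smul, norm_inv, norm_norm]
    exact inv_mul_cancel₀ (hfn n)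
  have hgmem : ∀ n, g n ∈ M :=
    fun n => Submodule.le_topologicalClosure _
      (Submodule.smul_mem _ _ (Submodule.subset_span ⟨n, rfl⟩))
  set ghat : ℕ → M := fun n => ⟨g n, hgmem n⟩ with hghatdef
  -- measurable representatives
  obtain ⟨G, hGsm, hGae⟩ :
      ∃ G : ℕ → ℝ → ℝ, (∀ n, StronglyMeasurable (G n)) ∧ ∀ n, ⇑(g n) =ᵐ[μ01] G n :=
    ⟨fun n => (Lp.aestronglyMeasurable (g n)).mk _,
      fun n => (Lp.aestronglyMeasurable (g n)).stronglyMeasurable_mk,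
      fun n => (Lp.aestronglyMeasurable (g n)).ae_eq_mk⟩
  have hGm : ∀ n, Measurable (G n) := fun n => (hGsm n).measurable
  -- coe of KPLp
  have hKPcoe : ∀ v : Lp ℝ p μ01,
      ⇑(KPLp p v) =ᵐ[μ01] fun t => v t * Real.log (|v t| / ‖v‖) :=
    fun v => AEEqFun.coeFn_mk _ _
  -- basic consequences of the triviality assumption
  have hu0 : ∀ x : M, eLpNorm (⇑(KPLp p ↑x - L x)) p μ01 ≠ ⊤ ∧
      (eLpNorm (⇑(KPLp p ↑x - L x)) p μ01).toReal ≤ C * ‖(x : Lp ℝ p μ01)‖ := by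
    intro x
    obtain ⟨hmem, hb⟩ := hL x
    refine ⟨(Lp.mem_Lp_iff_eLpNorm_lt_top.mp hmem).ne, ?_⟩
    rw [Lp.norm_def] at hb
    exact hb
  have hC0 : 0 ≤ C := by
    have h := (hu0 (ghat 0)).2
    have h1 : ‖((ghat 0 : M) : Lp ℝ p μ01)‖ = 1 := hgnorm 0
    rw [h1, mul_one] at h
    exact le_trans ENNReal.toReal_nonneg h
  have hubd : ∀ x : M, eLpNorm (⇑(KPLp p ↑x - L x)) p μ01
      ≤ ENNReal.ofReal (C * ‖(x : Lp ℝ p μ01)‖) := fun x =>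
    (ENNReal.le_ofReal_iff_toReal_le (hu0 x).1 (mul_nonneg hC0 (norm_nonneg _))).mpr (hu0 x).2
  -- strongly measurable representatives of the defect on the basis vectors
  obtain ⟨U, hUsm, hUae⟩ :
      ∃ U : ℕ → ℝ → ℝ, (∀ n, StronglyMeasurable (U n)) ∧
        ∀ n, ⇑(KPLp p ↑(ghat n) - L (ghat n)) =ᵐ[μ01] U n :=
    ⟨fun n => ((KPLp p ↑(ghat n) - L (ghat n)).aestronglyMeasurable).mk _,
      fun n => ((KPLp p ↑(ghat n) - L (ghat n)).aestronglyMeasurable).stronglyMeasurable_mk,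
      fun n => ((KPLp p ↑(ghat n) - L (ghat n)).aestronglyMeasurable).ae_eq_mk⟩
  have hUm : ∀ n, Measurable (U n) := fun n => (hUsm n).measurable
  have hUb : ∀ n, eLpNorm (U n) p μ01 ≤ ENNReal.ofReal C := by
    intro n
    rw [← eLpNorm_congr_ae (hUae n)]
    have h := hubd (ghat n)
    rwa [show ‖((ghat n : M) : Lp ℝ p μ01)‖ = 1 from hgnorm n, mul_one] at h
  -- smul coe of g
  have hgae2 : ∀ n, ⇑(g n) =ᵐ[μ01] fun t => ‖f n‖⁻¹ * f n t := by
    intro n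
    filter_upwards [Lp.coeFn_smul (‖f n‖⁻¹) (f n)] with t h
    exact h
  -- a.e. disjointness of the representatives
  have hdisjG : ∀ᵐ t ∂μ01, ∀ m n, m ≠ n → G m t = 0 ∨ G n t = 0 := by
    rw [ae_all_iff]
    intro m
    rw [ae_all_iff]
    intro n
    by_cases hmn : m = n
    · exact Filter.Eventually.of_forall fun t h => absurd hmn h
    · filter_upwards [hdisj m n hmn, hGae m, hGae n, hgae2 m, hgae2 n] with t h0 h1 h2 h3 h4 _
      rcases h0 with h | h
      · left; rw [← h1, h3, h, mul_zero]
      · right; rw [← h2, h4, h, mul_zero]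
  -- choose N large
  set N : ℕ := ⌈Real.exp ((2*C+1)*pr)⌉₊ with hNdef
  have hN1 : 1 ≤ N := Nat.one_le_ceil_iff.mpr (Real.exp_pos _)
  have hNpos : (0:ℝ) < (N:ℝ) := by
    have : 0 < N := hN1
    exact_mod_cast this
  have hlogN : (2*C+1)*pr ≤ Real.log N := by
    calc (2*C+1)*pr = Real.log (Real.exp ((2*C+1)*pr)) := (Real.log_exp _).symm
      _ ≤ Real.log N := Real.log_le_log (Real.exp_pos _) (Nat.le_ceil _)
  set c : ℝ := Real.log N / pr with hcdef
  have hc1 : 2*C + 1 ≤ c := by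
    rw [hcdef, le_div_iff₀ hpr0]
    exact hlogN
  have hc0 : 0 ≤ c := by nlinarith
  -- eLpNorm via lintegral
  have hJ : ∀ h : ℝ → ℝ, eLpNorm h p μ01
      = (∫⁻ t, (‖h t‖₊ : ℝ≥0∞) ^ pr ∂μ01) ^ (1/pr) :=
    fun h => eLpNorm_eq_lintegral_rpow_enorm_toReal hp0 hptop
  have hJinv : ∀ h : ℝ → ℝ, (∫⁻ t, (‖h t‖₊ : ℝ≥0∞) ^ pr ∂μ01)
      = (eLpNorm h p μ01) ^ pr := by
    intro h
    rw [hJ h, ← ENNReal.rpow_mul, one_div, inv_mul_cancel₀ hpr0.ne', ENNReal.rpow_one]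
  have hgeLp : ∀ n, eLpNorm (G n) p μ01 = 1 := by
    intro n
    rw [← eLpNorm_congr_ae (hGae n)]
    have h1 := Lp.norm_def (g n)
    rw [hgnorm n] at h1
    have h2 := Lp.eLpNorm_ne_top (g n)
    rw [← ENNReal.ofReal_toReal h2, ← h1]
    simp
  have hIG : ∀ n, (∫⁻ t, (‖G n t‖₊ : ℝ≥0∞) ^ pr ∂μ01) = 1 := by
    intro n
    rw [hJinv, hgeLp n, ENNReal.one_rpow]
  -- helper: at a good point, at most one coordinate is nonzero
  have key : ∀ t, (∀ m n, m ≠ n → G m t = 0 ∨ G n t = 0) →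
      (∀ n ∈ Finset.range N, G n t = 0) ∨
      ∃ m ∈ Finset.range N, G m t ≠ 0 ∧ ∀ n ∈ Finset.range N, n ≠ m → G n t = 0 := by
    intro t ht
    by_cases h : ∃ m ∈ Finset.range N, G m t ≠ 0
    · obtain ⟨m, hm, hm0⟩ := h
      exact Or.inr ⟨m, hm, hm0, fun n _ hnm => (ht n m hnm).resolve_right hm0⟩
    · push_neg at h
      exact Or.inl h
  have hchinn : ∀ s k, (‖chi' s k‖₊ : ℝ≥0∞) = 1 := by
    intro s k
    have h2 : ‖chi' s k‖₊ = 1 :=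
      NNReal.coe_injective (by rw [coe_nnnorm, Real.norm_eq_abs, chi_abs, NNReal.coe_one])
    rw [h2, ENNReal.coe_one]
  -- the lintegral of a signed disjoint sum
  have hIX : ∀ s : Finset ℕ,
      (∫⁻ t, (‖∑ n ∈ Finset.range N, chi' s n * G n t‖₊ : ℝ≥0∞) ^ pr ∂μ01) = N := by
    intro s
    have hpt : ∀ᵐ t ∂μ01, (‖∑ n ∈ Finset.range N, chi' s n * G n t‖₊ : ℝ≥0∞) ^ pr
        = ∑ n ∈ Finset.range N, (‖G n t‖₊ : ℝ≥0∞) ^ pr := by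
      filter_upwards [hdisjG] with t ht
      rcases key t ht with hall | ⟨m, hm, hm0, hrest⟩
      · rw [Finset.sum_eq_zero fun n hn => by rw [hall n hn, mul_zero]]
        rw [Finset.sum_eq_zero fun n hn => by
          rw [hall n hn]; simp [ENNReal.zero_rpow_of_pos hpr0]]
        simp [ENNReal.zero_rpow_of_pos hpr0]
      · rw [Finset.sum_eq_single_of_mem m hm fun n hn hnm => by rw [hrest n hn hnm, mul_zero]]
        rw [Finset.sum_eq_single_of_mem m hm fun n hn hnm => by
          rw [hrest n hn hnm]; simp [ENNReal.zero_rpow_of_pos hpr0]]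
        rw [nnnorm_mul, ENNReal.coe_mul, hchinn, one_mul]
    rw [lintegral_congr_ae hpt,
      lintegral_finset_sum _ fun n _ => ((hGm n).nnnorm.coe_nnreal_ennreal).pow_const pr]
    rw [Finset.sum_congr rfl fun n _ => hIG n]
    simp
  -- the element of the span
  set xhat : Finset ℕ → M := fun s => ∑ n ∈ Finset.range N, chi' s n • ghat n with hxhatdef
  have hxcoe : ∀ s, ((xhat s : M) : Lp ℝ p μ01) = ∑ n ∈ Finset.range N, chi' s n • g n := by
    intro s
    show ((∑ n ∈ Finset.range N, chi' s n • ghat n : M) : Lp ℝ p μ01) = _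
    rw [AddSubmonoidClass.coe_finset_sum]
    exact Finset.sum_congr rfl fun n _ => rfl
  have hXae : ∀ s, ⇑(∑ n ∈ Finset.range N, chi' s n • g n)
      =ᵐ[μ01] fun t => ∑ n ∈ Finset.range N, chi' s n * G n t := by
    intro s
    have h2 : ∀ᵐ t ∂μ01, ∀ n, ⇑(chi' s n • g n) t = chi' s n * G n t := by
      rw [ae_all_iff]
      intro n
      filter_upwards [Lp.coeFn_smul (chi' s n) (g n), hGae n] with t ha hb
      rw [ha]
      show chi' s n * (g n) t = chi' s n * G n t
      rw [hb]
    filter_upwards [coeFn_finset_sum' (Finset.range N) fun n => chi' s n • g n, h2] with t ha hb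
    rw [ha]
    exact Finset.sum_congr rfl fun n _ => hb n
  have hxnorm0 : ∀ s, ‖(∑ n ∈ Finset.range N, chi' s n • g n : Lp ℝ p μ01)‖
      = (N:ℝ) ^ (1/pr) := by
    intro s
    rw [Lp.norm_def, eLpNorm_congr_ae (hXae s), hJ, hIX, ← ENNReal.toReal_rpow,
      ENNReal.toReal_natCast]
  have hxc : ∀ s, ⇑((xhat s : M) : Lp ℝ p μ01)
      =ᵐ[μ01] fun t => ∑ n ∈ Finset.range N, chi' s n * G n t := by
    intro s
    rw [hxcoe s]
    exact hXae s
  have hxn : ∀ s, ‖((xhat s : M) : Lp ℝ p μ01)‖ = (N:ℝ) ^ (1/pr) := by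
    intro s
    rw [hxcoe s]
    exact hxnorm0 s
  -- coe of L at the basis vectors
  have hLg : ∀ n, ⇑(L (ghat n)) =ᵐ[μ01] fun t => G n t * Real.log |G n t| - U n t := by
    intro n
    have he : L (ghat n) = KPLp p ↑(ghat n) - (KPLp p ↑(ghat n) - L (ghat n)) :=
      (sub_sub_cancel _ _).symm
    rw [he]
    filter_upwards [AEEqFun.coeFn_sub (KPLp p ↑(ghat n)) (KPLp p ↑(ghat n) - L (ghat n)),
      hKPcoe (↑(ghat n)), hUae n, hGae n] with t h1 h2 h3 h4
    rw [h1]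
    simp only [Pi.sub_apply]
    rw [h2, h3]
    have h5 : (↑(ghat n) : Lp ℝ p μ01) t = G n t := h4
    rw [h5, show ‖(↑(ghat n) : Lp ℝ p μ01)‖ = 1 from hgnorm n, div_one]
  -- the key a.e. identity
  have hKPae : ∀ s : Finset ℕ,
      ⇑(KPLp p ↑(xhat s) - L (xhat s)) =ᵐ[μ01]
        fun t => ∑ n ∈ Finset.range N, chi' s n * (U n t - c * G n t) := by
    intro s
    have hLx : L (xhat s) = ∑ n ∈ Finset.range N, chi' s n • L (ghat n) := by
      show L (∑ n ∈ Finset.range N, chi' s n • ghat n) = _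
      rw [map_sum]
      exact Finset.sum_congr rfl fun n _ => L.map_smul _ _
    have hLcoe : ⇑(L (xhat s)) =ᵐ[μ01]
        fun t => ∑ n ∈ Finset.range N, chi' s n * (G n t * Real.log |G n t| - U n t) := by
      rw [hLx]
      have h2 : ∀ᵐ t ∂μ01, ∀ n, ⇑(chi' s n • L (ghat n)) t = chi' s n * (L (ghat n)) t := by
        rw [ae_all_iff]
        intro n
        filter_upwards [AEEqFun.coeFn_smul (chi' s n) (L (ghat n))] with t h
        rw [h]
        rfl
      have h3 : ∀ᵐ t ∂μ01, ∀ n, ⇑(L (ghat n)) t = G n t * Real.log |G n t| - U n t := by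
        rw [ae_all_iff]; exact hLg
      filter_upwards [coeFn_finset_sum_ae (Finset.range N) fun n => chi' s n • L (ghat n),
        h2, h3] with t ha hb hc
      rw [ha]
      exact Finset.sum_congr rfl fun n _ => by rw [hb n, hc n]
    have hKx : ⇑(KPLp p ↑(xhat s)) =ᵐ[μ01]
        fun t => (∑ n ∈ Finset.range N, chi' s n * G n t) *
          Real.log (|∑ n ∈ Finset.range N, chi' s n * G n t| / (N:ℝ) ^ (1/pr)) := by
      filter_upwards [hKPcoe (↑(xhat s)), hxc s] with t h1 h2
      rw [h1, h2, hxn s]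
    filter_upwards [AEEqFun.coeFn_sub (KPLp p ↑(xhat s)) (L (xhat s)), hKx, hLcoe, hdisjG]
      with t h1 h2 h3 ht
    rw [h1]
    simp only [Pi.sub_apply]
    rw [h2, h3]
    rcases key t ht with hall | ⟨m, hm, hm0, hrest⟩
    · have hX0 : (∑ n ∈ Finset.range N, chi' s n * G n t) = 0 :=
        Finset.sum_eq_zero fun n hn => by rw [hall n hn, mul_zero]
      rw [hX0, zero_mul, zero_sub]
      have e1 : ∀ n ∈ Finset.range N,
          chi' s n * (G n t * Real.log |G n t| - U n t)
            = -(chi' s n * (U n t - c * G n t)) := by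
        intro n hn; rw [hall n hn]; ring
      rw [Finset.sum_congr rfl e1, Finset.sum_neg_distrib, neg_neg]
    · have hXm : (∑ n ∈ Finset.range N, chi' s n * G n t) = chi' s m * G m t :=
        Finset.sum_eq_single_of_mem m hm fun n hn hnm => by rw [hrest n hn hnm, mul_zero]
      have hK0 : (0:ℝ) < (N:ℝ) ^ (1/pr) := Real.rpow_pos_of_pos hNpos _
      have habs : |∑ n ∈ Finset.range N, chi' s n * G n t| = |G m t| := by
        rw [hXm, abs_mul, chi_abs, one_mul]
      have hlog : Real.log (|∑ n ∈ Finset.range N, chi' s n * G n t| / (N:ℝ) ^ (1/pr))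
          = Real.log |G m t| - c := by
        rw [habs, Real.log_div (abs_ne_zero.mpr hm0) hK0.ne', Real.log_rpow hNpos, hcdef]
        ring
      have e2 : (∑ n ∈ Finset.range N, chi' s n * (G n t * Real.log |G n t| - U n t))
          = chi' s m * (G m t * Real.log |G m t|)
            - ∑ n ∈ Finset.range N, chi' s n * U n t := by
        have e : ∀ n ∈ Finset.range N, chi' s n * (G n t * Real.log |G n t| - U n t)
            = chi' s n * (G n t * Real.log |G n t|) - chi' s n * U n t := fun n _ => by ring
        rw [Finset.sum_congr rfl e, Finset.sum_sub_distrib]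
        congr 1
        exact Finset.sum_eq_single_of_mem m hm fun n hn hnm => by
          rw [hrest n hn hnm]; ring
      have e3 : (∑ n ∈ Finset.range N, chi' s n * (U n t - c * G n t))
          = (∑ n ∈ Finset.range N, chi' s n * U n t) - c * (chi' s m * G m t) := by
        have e : ∀ n ∈ Finset.range N, chi' s n * (U n t - c * G n t)
            = chi' s n * U n t - c * (chi' s n * G n t) := fun n _ => by ring
        rw [Finset.sum_congr rfl e, Finset.sum_sub_distrib]
        congr 1
        rw [← Finset.mul_sum, hXm]
      rw [hlog, e2, e3, hXm]
      ring
  -- norm bound on the defect of xhat s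
  have hDs : ∀ s : Finset ℕ,
      eLpNorm (fun t => ∑ n ∈ Finset.range N, chi' s n * (U n t - c * G n t)) p μ01
        ≤ ENNReal.ofReal C * (N:ℝ≥0∞) ^ (1/pr) := by
    intro s
    rw [← eLpNorm_congr_ae (hKPae s)]
    refine le_trans (hubd (xhat s)) ?_
    rw [hxn s, ENNReal.ofReal_mul hC0, ← ENNReal.ofReal_rpow_of_pos hNpos,
      ENNReal.ofReal_natCast]
  have hIU : ∀ n, (∫⁻ t, (‖U n t‖₊ : ℝ≥0∞) ^ pr ∂μ01) ≤ ENNReal.ofReal C ^ pr := by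
    intro n
    rw [hJinv]
    exact ENNReal.rpow_le_rpow (hUb n) hpr0.le
  -- indicators of supports
  set ind : ℕ → ℝ → ℝ := fun m => Set.indicator {t | G m t ≠ 0} fun _ => (1:ℝ) with hinddef
  have hindm : ∀ m, Measurable (ind m) := by
    intro m
    exact measurable_const.indicator ((hGm m) (measurableSet_singleton 0).compl)
  have hind1 : ∀ m t, G m t ≠ 0 → ind m t = 1 := fun m t h =>
    Set.indicator_of_mem (show t ∈ {t | G m t ≠ 0} from h) fun _ => (1:ℝ)
  have hind0 : ∀ m t, G m t = 0 → ind m t = 0 := fun m t h =>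
    Set.indicator_of_notMem (by simp [h]) _
  set A : ℝ → ℝ := fun t => ∑ m ∈ Finset.range N, ind m t * U m t with hAdef
  set Bf : ℝ → ℝ := fun t => ∑ m ∈ Finset.range N, G m t with hBdef
  set Wf : ℝ → ℝ := fun t => ∑ m ∈ Finset.range N, ind m t * (U m t - c * G m t) with hWdef
  set Y : Finset ℕ → ℝ → ℝ := fun s t => ∑ m ∈ Finset.range N,
      ind m t * (chi' s m * ∑ n ∈ Finset.range N, chi' s n * (U n t - c * G n t)) with hYdef
  have hAm : Measurable A := Finset.measurable_sum _ fun m _ => (hindm m).mul (hUm m)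
  have hBm : Measurable Bf := Finset.measurable_sum _ fun m _ => hGm m
  have hWm : Measurable Wf := Finset.measurable_sum _ fun m _ =>
    (hindm m).mul ((hUm m).sub (measurable_const.mul (hGm m)))
  have hDm : ∀ s, Measurable (fun t => ∑ n ∈ Finset.range N, chi' s n * (U n t - c * G n t)) :=
    fun s => Finset.measurable_sum _ fun n _ =>
      measurable_const.mul ((hUm n).sub (measurable_const.mul (hGm n)))
  have hYm : ∀ s, Measurable (Y s) := fun s => Finset.measurable_sum _ fun m _ =>
    (hindm m).mul (measurable_const.mul (hDm s))
  -- the averaging identity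
  have hsum_chi : ∀ m ∈ Finset.range N, ∀ n ∈ Finset.range N,
      (∑ s ∈ (Finset.range N).powerset, chi' s m * chi' s n)
        = if n = m then (2:ℝ)^N else 0 := by
    intro m hm n hn
    by_cases h : n = m
    · subst h; rw [if_pos rfl]; exact_mod_cast sum_chi_mul_chi_diag N n
    · rw [if_neg h]
      exact sum_chi_mul_chi_off N m n (Finset.mem_range.mp hn) (Ne.symm h)
  have hE1 : ∀ t, (∑ s ∈ (Finset.range N).powerset, Y s t) = (2:ℝ)^N * Wf t := by
    intro t
    show (∑ s ∈ (Finset.range N).powerset, ∑ m ∈ Finset.range N,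
        ind m t * (chi' s m * ∑ n ∈ Finset.range N, chi' s n * (U n t - c * G n t)))
      = (2:ℝ)^N * ∑ m ∈ Finset.range N, ind m t * (U m t - c * G m t)
    rw [Finset.sum_comm, Finset.mul_sum]
    refine Finset.sum_congr rfl fun m hm => ?_
    have inner : (∑ s ∈ (Finset.range N).powerset, chi' s m *
        ∑ n ∈ Finset.range N, chi' s n * (U n t - c * G n t))
        = (2:ℝ)^N * (U m t - c * G m t) := by
      have h1 : ∀ s : Finset ℕ, chi' s m * (∑ n ∈ Finset.range N, chi' s n * (U n t - c * G n t))
          = ∑ n ∈ Finset.range N, (chi' s m * chi' s n) * (U n t - c * G n t) := by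
        intro s
        rw [Finset.mul_sum]
        exact Finset.sum_congr rfl fun n _ => by ring
      rw [Finset.sum_congr rfl fun s _ => h1 s, Finset.sum_comm]
      have h2 : ∀ n ∈ Finset.range N,
          (∑ s ∈ (Finset.range N).powerset, (chi' s m * chi' s n) * (U n t - c * G n t))
          = (if n = m then (2:ℝ)^N else 0) * (U n t - c * G n t) := by
        intro n hn
        rw [← Finset.sum_mul, hsum_chi m hm n hn]
      rw [Finset.sum_congr rfl h2,
        Finset.sum_eq_single_of_mem m hm fun n hn hnm => by rw [if_neg hnm, zero_mul],
        if_pos rfl]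
    rw [← Finset.mul_sum, inner]
    ring
  -- bound on Y s
  have hYb : ∀ s, eLpNorm (Y s) p μ01
      ≤ eLpNorm (fun t => ∑ n ∈ Finset.range N, chi' s n * (U n t - c * G n t)) p μ01 := by
    intro s
    refine eLpNorm_mono_ae ?_
    filter_upwards [hdisjG] with t ht
    rcases key t ht with hall | ⟨m, hm, hm0, hrest⟩
    · have hY0 : Y s t = 0 := Finset.sum_eq_zero fun m hmm' => by
        rw [hind0 m t (hall m hmm'), zero_mul]
      rw [hY0]
      simp [norm_nonneg]
    · have hY1 : Y s t = chi' s m * ∑ n ∈ Finset.range N, chi' s n * (U n t - c * G n t) := by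
        show (∑ m' ∈ Finset.range N,
            ind m' t * (chi' s m' * ∑ n ∈ Finset.range N, chi' s n * (U n t - c * G n t))) = _
        rw [Finset.sum_eq_single_of_mem m hm fun n hn hnm => by
          rw [hind0 n t (hrest n hn hnm), zero_mul], hind1 m t hm0, one_mul]
      rw [hY1, Real.norm_eq_abs, Real.norm_eq_abs, abs_mul, chi_abs, one_mul]
  -- bound on A
  have hAb : eLpNorm A p μ01 ≤ ENNReal.ofReal C * (N:ℝ≥0∞) ^ (1/pr) := by
    have hIA : (∫⁻ t, (‖A t‖₊ : ℝ≥0∞) ^ pr ∂μ01) ≤ (N:ℝ≥0∞) * ENNReal.ofReal C ^ pr := by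
      have hpt : ∀ᵐ t ∂μ01, (‖A t‖₊ : ℝ≥0∞) ^ pr
          ≤ ∑ n ∈ Finset.range N, (‖U n t‖₊ : ℝ≥0∞) ^ pr := by
        filter_upwards [hdisjG] with t ht
        rcases key t ht with hall | ⟨m, hm, hm0, hrest⟩
        · have hA0 : A t = 0 := Finset.sum_eq_zero fun m hmm' => by
            rw [hind0 _ _ (hall m hmm'), zero_mul]
          rw [hA0]
          simp [ENNReal.zero_rpow_of_pos hpr0]
        · have hA1 : A t = U m t := by
            show (∑ m' ∈ Finset.range N, ind m' t * U m' t) = _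
            rw [Finset.sum_eq_single_of_mem m hm fun n hn hnm => by
              rw [hind0 _ _ (hrest n hn hnm), zero_mul], hind1 m t hm0, one_mul]
          rw [hA1]
          exact Finset.single_le_sum (f := fun n => (‖U n t‖₊ : ℝ≥0∞) ^ pr)
            (fun n _ => zero_le) hm
      calc (∫⁻ t, (‖A t‖₊ : ℝ≥0∞) ^ pr ∂μ01)
          ≤ ∫⁻ t, ∑ n ∈ Finset.range N, (‖U n t‖₊ : ℝ≥0∞) ^ pr ∂μ01 := lintegral_mono_ae hpt
        _ = ∑ n ∈ Finset.range N, ∫⁻ t, (‖U n t‖₊ : ℝ≥0∞) ^ pr ∂μ01 :=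
            lintegral_finset_sum _ fun n _ => ((hUm n).nnnorm.coe_nnreal_ennreal).pow_const pr
        _ ≤ ∑ n ∈ Finset.range N, ENNReal.ofReal C ^ pr := Finset.sum_le_sum fun n _ => hIU n
        _ = (N:ℝ≥0∞) * ENNReal.ofReal C ^ pr := by
            rw [Finset.sum_const, Finset.card_range, nsmul_eq_mul]
    rw [hJ]
    calc (∫⁻ t, (‖A t‖₊ : ℝ≥0∞) ^ pr ∂μ01) ^ (1/pr)
        ≤ ((N:ℝ≥0∞) * ENNReal.ofReal C ^ pr) ^ (1/pr) :=
          ENNReal.rpow_le_rpow hIA (one_div_nonneg.mpr hpr0.le)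
      _ = (N:ℝ≥0∞) ^ (1/pr) * (ENNReal.ofReal C ^ pr) ^ (1/pr) :=
          ENNReal.mul_rpow_of_nonneg _ _ (one_div_nonneg.mpr hpr0.le)
      _ = (N:ℝ≥0∞) ^ (1/pr) * ENNReal.ofReal C := by
          rw [← ENNReal.rpow_mul, mul_one_div, div_self hpr0.ne', ENNReal.rpow_one]
      _ = ENNReal.ofReal C * (N:ℝ≥0∞) ^ (1/pr) := mul_comm _ _
  -- norm of Bf
  have hBeq : eLpNorm Bf p μ01 = (N:ℝ≥0∞) ^ (1/pr) := by
    rw [hJ]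
    have hfx : ∀ t, Bf t = ∑ n ∈ Finset.range N, chi' (Finset.range N) n * G n t := by
      intro t
      exact Finset.sum_congr rfl fun n hn => by
        rw [show chi' (Finset.range N) n = 1 from if_pos hn, one_mul]
    have : (∫⁻ t, (‖Bf t‖₊ : ℝ≥0∞) ^ pr ∂μ01)
        = ∫⁻ t, (‖∑ n ∈ Finset.range N, chi' (Finset.range N) n * G n t‖₊ : ℝ≥0∞) ^ pr ∂μ01 :=
      lintegral_congr fun t => by rw [hfx t]
    rw [this, hIX]
  -- bound on Wf via averaging
  have hWb : eLpNorm Wf p μ01 ≤ ENNReal.ofReal C * (N:ℝ≥0∞) ^ (1/pr) := by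
    have h2N : ((2:ℝ)^N) ≠ 0 := by positivity
    have hfun : Wf = ((2:ℝ)^N)⁻¹ • fun t => ∑ s ∈ (Finset.range N).powerset, Y s t := by
      funext t
      show Wf t = ((2:ℝ)^N)⁻¹ * ∑ s ∈ (Finset.range N).powerset, Y s t
      rw [hE1 t]
      field_simp
    have h4 : (fun t => ∑ s ∈ (Finset.range N).powerset, Y s t)
        = ∑ s ∈ (Finset.range N).powerset, Y s := by
      funext t
      simp [Finset.sum_apply]
    have h3 : eLpNorm (fun t => ∑ s ∈ (Finset.range N).powerset, Y s t) p μ01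
        ≤ (2:ℝ≥0∞)^N * (ENNReal.ofReal C * (N:ℝ≥0∞) ^ (1/pr)) := by
      rw [h4]
      refine le_trans (eLpNorm_sum_le (fun s _ => (hYm s).aestronglyMeasurable) hfact) ?_
      refine le_trans (Finset.sum_le_sum fun s _ => le_trans (hYb s) (hDs s)) ?_
      rw [Finset.sum_const, Finset.card_powerset, Finset.card_range, nsmul_eq_mul]
      push_cast
      rfl
    rw [hfun, eLpNorm_const_smul]
    have h5 : (‖((2:ℝ)^N)⁻¹‖₊ : ℝ≥0∞) = ((2:ℝ≥0∞)^N)⁻¹ := by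
      rw [nnnorm_inv, nnnorm_pow]
      push_cast
      norm_num
    rw [show ‖((2:ℝ)^N)⁻¹‖ₑ = ((2:ℝ≥0∞)^N)⁻¹ from h5]
    refine le_trans (mul_le_mul_right h3 _) ?_
    rw [← mul_assoc, ENNReal.inv_mul_cancel (by positivity) (by
      exact ENNReal.pow_ne_top (by norm_num)), one_mul]
  -- combine
  have hindG : ∀ m t, ind m t * G m t = G m t := by
    intro m t
    by_cases h : G m t = 0
    · rw [h, mul_zero]
    · rw [hind1 m t h, one_mul]
  have hfinal : (fun t => c * Bf t) = A - Wf := by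
    funext t
    show c * Bf t = A t - Wf t
    have h1 : Wf t = A t - c * Bf t := by
      show (∑ m ∈ Finset.range N, ind m t * (U m t - c * G m t)) = _
      rw [show A t = ∑ m ∈ Finset.range N, ind m t * U m t from rfl,
        show Bf t = ∑ m ∈ Finset.range N, G m t from rfl, Finset.mul_sum,
        ← Finset.sum_sub_distrib]
      refine Finset.sum_congr rfl fun m hm => ?_
      calc ind m t * (U m t - c * G m t)
          = ind m t * U m t - c * (ind m t * G m t) := by ring
        _ = ind m t * U m t - c * G m t := by rw [hindG m t]
    linarith
  have hcB : eLpNorm (fun t => c * Bf t) p μ01 ≤ eLpNorm A p μ01 + eLpNorm Wf p μ01 := by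
    rw [hfinal]
    exact eLpNorm_sub_le hAm.aestronglyMeasurable hWm.aestronglyMeasurable hfact
  have hcBeq : eLpNorm (fun t => c * Bf t) p μ01 = ENNReal.ofReal c * (N:ℝ≥0∞) ^ (1/pr) := by
    have he : (fun t => c * Bf t) = c • Bf := rfl
    rw [he, eLpNorm_const_smul, hBeq, Real.enorm_eq_ofReal hc0]
  have hfin2 : ENNReal.ofReal c * (N:ℝ≥0∞) ^ (1/pr)
      ≤ ENNReal.ofReal (2*C) * (N:ℝ≥0∞) ^ (1/pr) := by
    rw [← hcBeq]
    refine le_trans hcB (le_trans (add_le_add hAb hWb) ?_)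
    rw [ENNReal.ofReal_mul (by norm_num : (0:ℝ) ≤ 2)]
    have : ENNReal.ofReal 2 = 2 := by
      rw [ENNReal.ofReal_ofNat]
    rw [this, two_mul, add_mul]
  have hKne0 : ((N:ℝ≥0∞) ^ (1/pr)) ≠ 0 := by
    have hN0 : ((N:ℝ≥0∞)) ≠ 0 := Nat.cast_ne_zero.mpr (by omega)
    exact (ENNReal.rpow_pos (pos_iff_ne_zero.mpr hN0) (ENNReal.natCast_ne_top N)).ne'
  have hKnetop : ((N:ℝ≥0∞) ^ (1/pr)) ≠ ⊤ :=
    ENNReal.rpow_ne_top_of_nonneg (one_div_nonneg.mpr hpr0.le) (ENNReal.natCast_ne_top N)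
  have hle := (ENNReal.mul_le_mul_iff_left hKne0 hKnetop).mp hfin2
  have hc2 : c ≤ 2*C := (ENNReal.ofReal_le_ofReal_iff (by linarith)).mp hle
  linarith
end

section
/- Fix α ∈ ℝ and define φ_α : [0,∞) → ℂ by φ_α(0) = 0 and φ_α(t) = t^{1+iα} = t·e^{iα·log t} for t > 0. Then |φ_α(s) − φ_α(t)| ≥ |s − t| for all s, t ≥ 0. Consequently, φ_α is an expansive Lipschitz function with φ_α(0) = 0. -/
/-- The function `φ_α(t) = t^{1+iα} = t·e^{iα·log t}` for `t > 0`, with `φ_α(0) = 0`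
(we only use its values on `[0,∞)`). -/
noncomputable def phiAlpha (α : ℝ) (t : ℝ) : ℂ :=
  if t = 0 then 0 else (t : ℂ) * Complex.exp (Complex.I * (α : ℂ) * (Real.log t : ℂ))

lemma norm_unitExp (x : ℝ) : ‖Complex.exp (Complex.I * (x : ℂ))‖ = 1 := by
  rw [Complex.norm_exp]
  simp

lemma norm_phiAlpha (α t : ℝ) (ht : 0 ≤ t) : ‖phiAlpha α t‖ = t := by
  unfold phiAlpha
  split_ifs with h
  · simp [h]
  · rw [norm_mul]
    have : Complex.I * (α : ℂ) * (Real.log t : ℂ) = Complex.I * ((α * Real.log t : ℝ) : ℂ) := by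
      push_cast; ring
    rw [this, norm_unitExp]
    simp [abs_of_nonneg ht]

lemma lip_unitExp : LipschitzWith 1 (fun x : ℝ => Complex.exp (Complex.I * (x : ℂ))) := by
  apply lipschitzWith_of_nnnorm_deriv_le (fun x => ?_) (fun x => ?_)
  · have h : HasDerivAt (fun x : ℝ => Complex.exp (Complex.I * (x : ℂ)))
        (Complex.exp (Complex.I * (x : ℂ)) * Complex.I) x := by
      have h1 : HasDerivAt (fun z : ℂ => Complex.exp (Complex.I * z))
          (Complex.exp (Complex.I * (x : ℂ)) * Complex.I) (x : ℂ) := by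
        simpa [Function.comp_def] using (Complex.hasDerivAt_exp (Complex.I * (x : ℂ))).comp
          (x : ℂ) ((hasDerivAt_id (x : ℂ)).const_mul Complex.I)
      exact h1.comp_ofReal
    exact h.differentiableAt
  · have h : HasDerivAt (fun x : ℝ => Complex.exp (Complex.I * (x : ℂ)))
        (Complex.exp (Complex.I * (x : ℂ)) * Complex.I) x := by
      have h1 : HasDerivAt (fun z : ℂ => Complex.exp (Complex.I * z))
          (Complex.exp (Complex.I * (x : ℂ)) * Complex.I) (x : ℂ) := by
        simpa [Function.comp_def] using (Complex.hasDerivAt_exp (Complex.I * (x : ℂ))).comp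
          (x : ℂ) ((hasDerivAt_id (x : ℂ)).const_mul Complex.I)
      exact h1.comp_ofReal
    rw [h.deriv]
    have : ‖Complex.exp (Complex.I * (x : ℂ)) * Complex.I‖ = 1 := by
      rw [norm_mul, norm_unitExp]; simp
    simp [← NNReal.coe_le_coe, ← norm_toNNReal, this]

lemma unitExp_sub (a b : ℝ) :
    ‖Complex.exp (Complex.I * (a : ℂ)) - Complex.exp (Complex.I * (b : ℂ))‖ ≤ |a - b| := by
  have := lip_unitExp.dist_le_mul a b
  simpa [dist_eq_norm, Real.dist_eq] using this

/-- `|φ_α(s) − φ_α(t)| ≥ |s − t|` for all `s, t ≥ 0`; consequently `φ_α` is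
an expansive Lipschitz function on `[0,∞)` with `φ_α(0) = 0`. -/
theorem stmt7 (α : ℝ) :
    (∀ s t : ℝ, 0 ≤ s → 0 ≤ t → |s - t| ≤ ‖phiAlpha α s - phiAlpha α t‖) ∧
    (∃ K : NNReal, LipschitzOnWith K (phiAlpha α) (Set.Ici 0)) ∧
    (∀ M : ℝ, 0 < M → ∃ N : ℝ, 0 < N ∧
      ∀ s t : ℝ, 0 ≤ s → 0 ≤ t → N ≤ |s - t| → M ≤ ‖phiAlpha α s - phiAlpha α t‖) ∧
    phiAlpha α 0 = 0 := by
  have lower : ∀ s t : ℝ, 0 ≤ s → 0 ≤ t → |s - t| ≤ ‖phiAlpha α s - phiAlpha α t‖ := by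
    intro s t hs ht
    calc |s - t| = |‖phiAlpha α s‖ - ‖phiAlpha α t‖| := by
          rw [norm_phiAlpha α s hs, norm_phiAlpha α t ht]
      _ ≤ ‖phiAlpha α s - phiAlpha α t‖ := abs_norm_sub_norm_le _ _
  refine ⟨lower, ?_, ?_, by simp [phiAlpha]⟩
  · -- Lipschitz
    refine ⟨(⟨1 + |α|, by positivity⟩ : NNReal), ?_⟩
    apply LipschitzOnWith.of_dist_le_mul
    have key : ∀ s t : ℝ, 0 ≤ t → t ≤ s →
        dist (phiAlpha α s) (phiAlpha α t) ≤ (1 + |α|) * dist s t := by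
      intro s t ht hts
      have hs : 0 ≤ s := le_trans ht hts
      rcases eq_or_lt_of_le ht with h0 | h0
      · -- t = 0
        subst h0
        rw [dist_eq_norm, (by simp [phiAlpha] : phiAlpha α 0 = 0), sub_zero,
          norm_phiAlpha α s hs, Real.dist_eq, sub_zero, abs_of_nonneg hs]
        nlinarith [abs_nonneg α]
      · -- 0 < t ≤ s
        have hspos : 0 < s := lt_of_lt_of_le h0 hts
        rw [dist_eq_norm, dist_eq_norm]
        have hφs : phiAlpha α s = (s : ℂ) * Complex.exp (Complex.I * ((α * Real.log s : ℝ) : ℂ)) := by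
          simp only [phiAlpha, if_neg hspos.ne']
          push_cast; ring_nf
        have hφt : phiAlpha α t = (t : ℂ) * Complex.exp (Complex.I * ((α * Real.log t : ℝ) : ℂ)) := by
          simp only [phiAlpha, if_neg h0.ne']
          push_cast; ring_nf
        set es := Complex.exp (Complex.I * ((α * Real.log s : ℝ) : ℂ))
        set et := Complex.exp (Complex.I * ((α * Real.log t : ℝ) : ℂ))
        have decomp : phiAlpha α s - phiAlpha α t = ((s : ℂ) - t) * es + (t : ℂ) * (es - et) := by
          rw [hφs, hφt]; ring
        have hlog : Real.log s - Real.log t ≤ (s - t) / t := by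
          have h := Real.log_le_sub_one_of_pos (show 0 < s / t by positivity)
          rw [Real.log_div hspos.ne' h0.ne'] at h
          have heq : s / t - 1 = (s - t) / t := by
            rw [sub_div, div_self h0.ne']
          linarith
        have h2 : ‖(t : ℂ) * (es - et)‖ ≤ |α| * (s - t) := by
          rw [norm_mul, Complex.norm_real, Real.norm_eq_abs, abs_of_pos h0]
          have hle : ‖es - et‖ ≤ |α * Real.log s - α * Real.log t| :=
            unitExp_sub _ _
          have hlogle : 0 ≤ Real.log s - Real.log t :=
            sub_nonneg.2 (Real.log_le_log h0 hts)
          have : |α * Real.log s - α * Real.log t| = |α| * (Real.log s - Real.log t) := by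
            rw [← mul_sub, abs_mul, abs_of_nonneg hlogle]
          rw [this] at hle
          calc t * ‖es - et‖ ≤ t * (|α| * (Real.log s - Real.log t)) := by
                exact mul_le_mul_of_nonneg_left hle h0.le
            _ ≤ t * (|α| * ((s - t) / t)) := by
                apply mul_le_mul_of_nonneg_left _ h0.le
                exact mul_le_mul_of_nonneg_left hlog (abs_nonneg α)
            _ = |α| * (s - t) := by field_simp
        have h1 : ‖((s : ℂ) - t) * es‖ = s - t := by
          rw [norm_mul]
          have : ((s : ℂ) - t) = ((s - t : ℝ) : ℂ) := by push_cast; ring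
          rw [this, Complex.norm_real, norm_unitExp, mul_one, Real.norm_eq_abs]
          exact abs_of_nonneg (by linarith)
        calc ‖phiAlpha α s - phiAlpha α t‖
            ≤ ‖((s : ℂ) - t) * es‖ + ‖(t : ℂ) * (es - et)‖ := by
              rw [decomp]; exact norm_add_le _ _
          _ ≤ (s - t) + |α| * (s - t) := by rw [h1]; linarith
          _ = (1 + |α|) * (s - t) := by ring
          _ = (1 + |α|) * dist s t := by
              have : dist s t = s - t := by
                rw [Real.dist_eq, abs_of_nonneg (sub_nonneg.2 hts)]
              rw [this]
    intro s hs t ht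
    simp only [Set.mem_Ici] at hs ht
    rcases le_total t s with h | h
    · exact key s t ht h
    · rw [dist_comm (phiAlpha α s), dist_comm s]
      exact key t s hs h
  · -- expansive
    intro M hM
    exact ⟨M, hM, fun s t hs ht hN => le_trans hN (lower s t hs ht)⟩
end

section
/- Let 1 < p < ∞ and let Ω be an exact centralizer on real ℓ_p with Ω(e_n) = 0 for every n, where (e_n) is the unit vector basis. If Ω is trivial on all of ℓ_p (there exist a linear map ℓ : ℓ_p → ℝ^ℕ and a constant K with Ω(x) − ℓ(x) ∈ ℓ_p and ‖Ω(x) − ℓ(x)‖_p ≤ K‖x‖_p for all x), then Ω is bounded: there is a constant C such that Ω(x) ∈ ℓ_p and ‖Ω(x)‖_p ≤ C‖x‖_p for all x ∈ ℓ_p. -/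
open scoped ENNReal

/-- for `1 < p < ∞`, an exact centralizer `Ω` on real `ℓ_p` vanishing on
the unit vector basis which is trivial on all of `ℓ_p` must be bounded. -/
theorem stmt11 (p : ℝ≥0∞) [Fact (1 ≤ p)] (hp1 : 1 < p) (hptop : p ≠ ⊤)
    (Ω : lp (fun _ : ℕ => ℝ) p → (ℕ → ℝ))
    -- `Ω` is homogeneous
    (hhom : ∀ (c : ℝ) (x : lp (fun _ : ℕ => ℝ) p), Ω (c • x) = c • Ω x)
    -- `Ω` is a centralizer: `‖Ω(a·x) − a·Ω(x)‖_p ≤ C‖a‖_∞‖x‖_p` for `a ∈ ℓ_∞`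
    (hcent : ∃ C : ℝ, ∀ (a : lp (fun _ : ℕ => ℝ) ⊤) (x y : lp (fun _ : ℕ => ℝ) p),
      (∀ n, y n = a n * x n) →
      ∃ h : Memℓp (fun n => Ω y n - a n * Ω x n) p,
        ‖(⟨fun n => Ω y n - a n * Ω x n, h⟩ : lp (fun _ : ℕ => ℝ) p)‖ ≤ C * ‖a‖ * ‖x‖)
    -- `Ω` is exact: `Ω(u·x) = u·Ω(x)` for every unit `u`
    (hexact : ∀ u : ℕ → ℝ, (∀ n, u n = 1 ∨ u n = -1) →
      ∀ x y : lp (fun _ : ℕ => ℝ) p, (∀ n, y n = u n * x n) →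
        ∀ n, Ω y n = u n * Ω x n)
    -- `Ω` vanishes on the unit vector basis
    (hbasis : ∀ n : ℕ, Ω (lp.single p n 1) = 0)
    -- `Ω` is trivial on all of `ℓ_p`
    (htriv : ∃ (ℓ : lp (fun _ : ℕ => ℝ) p →ₗ[ℝ] (ℕ → ℝ)) (K : ℝ),
      ∀ x : lp (fun _ : ℕ => ℝ) p, ∃ h : Memℓp (Ω x - ℓ x) p,
        ‖(⟨Ω x - ℓ x, h⟩ : lp (fun _ : ℕ => ℝ) p)‖ ≤ K * ‖x‖) :
    -- conclusion: `Ω` is bounded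
    ∃ C : ℝ, ∀ x : lp (fun _ : ℕ => ℝ) p, ∃ h : Memℓp (Ω x) p,
      ‖(⟨Ω x, h⟩ : lp (fun _ : ℕ => ℝ) p)‖ ≤ C * ‖x‖ := by
  classical
  obtain ⟨ℓ, K, hℓ⟩ := htriv
  set q := p.toReal with hqdef
  have hp0 : p ≠ 0 := by
    intro h; rw [h] at hp1; exact (not_lt.2 zero_le) hp1
  have hq1 : 1 < q := by
    rw [hqdef, ← ENNReal.toReal_one]
    exact (ENNReal.toReal_lt_toReal (by simp) hptop).mpr hp1
  have hq0 : 0 < q := lt_trans one_pos hq1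
  -- norm of basis vectors
  have hnorm_single : ∀ n : ℕ, ‖(lp.single p n (1:ℝ) : lp (fun _ : ℕ => ℝ) p)‖ = 1 := by
    intro n
    simpa using lp.norm_single (E := fun _ : ℕ => ℝ) (lt_trans zero_lt_one hp1) n (1:ℝ)
  have hK0 : 0 ≤ K := by
    obtain ⟨h, hb⟩ := hℓ (lp.single p 0 1)
    have h0 : (0:ℝ) ≤ ‖(⟨Ω (lp.single p 0 1) - ℓ (lp.single p 0 1), h⟩ : lp (fun _ : ℕ => ℝ) p)‖ := norm_nonneg _
    have := le_trans h0 hb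
    rwa [hnorm_single 0, mul_one] at this
  set lam : ℕ → ℝ := fun n => ℓ (lp.single p n 1) n with hlamdef
  have hlam : ∀ n, |lam n| ≤ K := by
    intro n
    obtain ⟨h, hb⟩ := hℓ (lp.single p n 1)
    have h1 : ‖(Ω (lp.single p n 1) - ℓ (lp.single p n 1)) n‖
        ≤ ‖(⟨Ω (lp.single p n 1) - ℓ (lp.single p n 1), h⟩ : lp (fun _ : ℕ => ℝ) p)‖ :=
      lp.norm_apply_le_norm hp0
        (⟨Ω (lp.single p n 1) - ℓ (lp.single p n 1), h⟩ : lp (fun _ : ℕ => ℝ) p) n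
    rw [hnorm_single n, mul_one] at hb
    have h2 : ‖(Ω (lp.single p n 1) - ℓ (lp.single p n 1)) n‖ = |lam n| := by
      rw [hbasis n]; simp [hlamdef, Real.norm_eq_abs]
    rw [h2] at h1
    exact le_trans h1 hb
  -- the sign vectors and flipped elements
  set u : Finset ℕ → ℕ → ℝ := fun S m => if m ∈ S then (-1:ℝ) else 1 with hudef
  set y : lp (fun _ : ℕ => ℝ) p → Finset ℕ → lp (fun _ : ℕ => ℝ) p :=
    fun x S => x - ∑ i ∈ S, (2 * x i) • lp.single p i (1:ℝ) with hydef
  have hco : ∀ (f g : lp (fun _ : ℕ => ℝ) p) (m : ℕ), (f - g) m = f m - g m := by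
    intro f g m; rw [lp.coeFn_sub]; rfl
  have hyc : ∀ (x : lp (fun _ : ℕ => ℝ) p) (S : Finset ℕ) (m : ℕ), y x S m = u S m * x m := by
    intro x S m
    rw [hydef]
    simp only
    rw [hco, lp.coeFn_sum]
    simp only [Finset.sum_apply, lp.coeFn_smul, Pi.smul_apply, smul_eq_mul]
    have hsingle : ∀ i : ℕ, (2 * x i) * ((lp.single p i (1:ℝ) : lp (fun _ : ℕ => ℝ) p) m : ℝ)
        = if i = m then 2 * x m else 0 := by
      intro i
      rcases eq_or_ne m i with h | h
      · subst h; rw [lp.single_apply_self]; simp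
      · rw [lp.single_apply_ne p i _ h]; simp [Ne.symm h]
    rw [Finset.sum_congr rfl (fun i _ => hsingle i), Finset.sum_ite_eq' S m (fun _ => 2 * x m)]
    rw [hudef]; simp only
    split <;> ring
  have huval : ∀ S : Finset ℕ, ∀ m, u S m = 1 ∨ u S m = -1 := by
    intro S m; rw [hudef]; simp only; split
    · right; rfl
    · left; rfl
  have husq : ∀ (S : Finset ℕ) (m : ℕ), u S m * u S m = 1 := by
    intro S m; rcases huval S m with h | h <;> rw [h] <;> norm_num
  have hynorm : ∀ (x : lp (fun _ : ℕ => ℝ) p) (S : Finset ℕ), ‖y x S‖ = ‖x‖ := by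
    intro x S
    rw [lp.norm_eq_tsum_rpow hq0, lp.norm_eq_tsum_rpow hq0]
    congr 1
    apply tsum_congr
    intro m
    congr 1
    rw [hyc x S m]
    rcases huval S m with h | h <;> rw [h] <;> simp
  have hΩy : ∀ (x : lp (fun _ : ℕ => ℝ) p) (S : Finset ℕ) (n : ℕ), Ω (y x S) n = u S n * Ω x n := by
    intro x S n
    exact hexact (u S) (huval S) x (y x S) (fun m => hyc x S m) n
  -- linearity computation
  have hyins : ∀ (x : lp (fun _ : ℕ => ℝ) p) (S : Finset ℕ) (n : ℕ), n ∉ S →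
      ℓ (y x (insert n S)) n = ℓ (y x S) n - 2 * x n * lam n := by
    intro x S n hnS
    have hyy : y x (insert n S) = y x S - (2 * x n) • lp.single p n (1:ℝ) := by
      rw [hydef]; simp only
      rw [Finset.sum_insert hnS]
      abel
    have hl : ℓ (y x (insert n S)) = ℓ (y x S) - (2 * x n) • ℓ (lp.single p n (1:ℝ)) := by
      rw [hyy, map_sub, map_smul]
    rw [hl]
    simp [hlamdef, mul_assoc]
  -- key estimate
  have key : ∀ (x : lp (fun _ : ℕ => ℝ) p) (F : Finset ℕ),
      ∑ n ∈ F, ‖Ω x n - lam n * x n‖ ^ q ≤ (K * ‖x‖) ^ q := by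
    intro x F
    set N : ℝ := ((2:ℝ) ^ F.card) with hNdef
    have hN0 : (0:ℝ) < N := by positivity
    have hcardpow : ((F.powerset.card : ℝ)) = N := by
      rw [Finset.card_powerset, hNdef]; push_cast; ring
    -- identity: for n ∈ F
    have hiden : ∀ n ∈ F, Ω x n - lam n * x n
        = N⁻¹ * ∑ S ∈ F.powerset, u S n * (Ω (y x S) n - ℓ (y x S) n) := by
      intro n hnF
      have hsum1 : ∑ S ∈ F.powerset, u S n * Ω (y x S) n = N * Ω x n := by
        have : ∀ S ∈ F.powerset, u S n * Ω (y x S) n = Ω x n := by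
          intro S _
          rw [hΩy x S n, ← mul_assoc, husq S n, one_mul]
        rw [Finset.sum_congr rfl this, Finset.sum_const, nsmul_eq_mul, Finset.card_powerset]
        rw [hNdef]; push_cast; ring
      have hsum2 : ∑ S ∈ F.powerset, u S n * ℓ (y x S) n = N * (lam n * x n) := by
        have hF : F = insert n (F.erase n) := (Finset.insert_erase hnF).symm
        have hne : n ∉ F.erase n := Finset.notMem_erase n F
        rw [hF, Finset.sum_powerset_insert hne]
        have hpair : ∀ S ∈ (F.erase n).powerset,
            u S n * ℓ (y x S) n + u (insert n S) n * ℓ (y x (insert n S)) n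
              = 2 * x n * lam n := by
          intro S hS
          have hnS : n ∉ S := fun hn =>
            hne (Finset.mem_powerset.mp hS hn)
          have hu1 : u S n = 1 := by rw [hudef]; simp [hnS]
          have hu2 : u (insert n S) n = -1 := by
            rw [hudef]; simp
          rw [hu1, hu2, hyins x S n hnS]
          ring
        rw [← Finset.sum_add_distrib, Finset.sum_congr rfl hpair, Finset.sum_const,
          nsmul_eq_mul, Finset.card_powerset]
        have hcard : F.card = (F.erase n).card + 1 :=
          (Finset.card_erase_add_one hnF).symm
        rw [hNdef, hcard]
        push_cast
        ring
      have : ∑ S ∈ F.powerset, u S n * (Ω (y x S) n - ℓ (y x S) n)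
          = N * (Ω x n - lam n * x n) := by
        have hdist : ∀ S ∈ F.powerset, u S n * (Ω (y x S) n - ℓ (y x S) n)
            = u S n * Ω (y x S) n - u S n * ℓ (y x S) n := fun S _ => by ring
        rw [Finset.sum_congr rfl hdist, Finset.sum_sub_distrib, hsum1, hsum2]
        ring
      rw [this, ← mul_assoc, inv_mul_cancel₀ hN0.ne', one_mul]
    -- Jensen step per coordinate
    have hjensen : ∀ n ∈ F, ‖Ω x n - lam n * x n‖ ^ q
        ≤ N⁻¹ * ∑ S ∈ F.powerset, ‖Ω (y x S) n - ℓ (y x S) n‖ ^ q := by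
      intro n hnF
      have h1 : ‖Ω x n - lam n * x n‖
          ≤ ∑ S ∈ F.powerset, N⁻¹ * ‖Ω (y x S) n - ℓ (y x S) n‖ := by
        rw [hiden n hnF]
        calc ‖N⁻¹ * ∑ S ∈ F.powerset, u S n * (Ω (y x S) n - ℓ (y x S) n)‖
            = N⁻¹ * ‖∑ S ∈ F.powerset, u S n * (Ω (y x S) n - ℓ (y x S) n)‖ := by
              rw [norm_mul, Real.norm_eq_abs N⁻¹, abs_of_pos (by positivity)]
          _ ≤ N⁻¹ * ∑ S ∈ F.powerset, ‖u S n * (Ω (y x S) n - ℓ (y x S) n)‖ := by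
              apply mul_le_mul_of_nonneg_left (norm_sum_le _ _) (by positivity)
          _ = ∑ S ∈ F.powerset, N⁻¹ * ‖Ω (y x S) n - ℓ (y x S) n‖ := by
              rw [Finset.mul_sum]
              apply Finset.sum_congr rfl
              intro S _
              congr 1
              rw [norm_mul]
              rcases huval S n with h | h <;> rw [h] <;> simp
      have h2 : (∑ S ∈ F.powerset, N⁻¹ * ‖Ω (y x S) n - ℓ (y x S) n‖) ^ q
          ≤ ∑ S ∈ F.powerset, N⁻¹ * ‖Ω (y x S) n - ℓ (y x S) n‖ ^ q := by
        apply Real.rpow_arith_mean_le_arith_mean_rpow F.powerset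
          (fun _ => N⁻¹) (fun S => ‖Ω (y x S) n - ℓ (y x S) n‖)
          (fun _ _ => by positivity)
          (by rw [Finset.sum_const, nsmul_eq_mul, hcardpow, mul_inv_cancel₀ hN0.ne'])
          (fun _ _ => norm_nonneg _) hq1.le
      calc ‖Ω x n - lam n * x n‖ ^ q
          ≤ (∑ S ∈ F.powerset, N⁻¹ * ‖Ω (y x S) n - ℓ (y x S) n‖) ^ q := by
            apply Real.rpow_le_rpow (norm_nonneg _) h1 hq0.le
        _ ≤ ∑ S ∈ F.powerset, N⁻¹ * ‖Ω (y x S) n - ℓ (y x S) n‖ ^ q := h2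
        _ = N⁻¹ * ∑ S ∈ F.powerset, ‖Ω (y x S) n - ℓ (y x S) n‖ ^ q := by
            rw [Finset.mul_sum]
    -- sum over n ∈ F
    calc ∑ n ∈ F, ‖Ω x n - lam n * x n‖ ^ q
        ≤ ∑ n ∈ F, N⁻¹ * ∑ S ∈ F.powerset, ‖Ω (y x S) n - ℓ (y x S) n‖ ^ q :=
          Finset.sum_le_sum hjensen
      _ = N⁻¹ * ∑ S ∈ F.powerset, ∑ n ∈ F, ‖Ω (y x S) n - ℓ (y x S) n‖ ^ q := by
          rw [← Finset.mul_sum, Finset.sum_comm]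
      _ ≤ N⁻¹ * ∑ S ∈ F.powerset, (K * ‖x‖) ^ q := by
          apply mul_le_mul_of_nonneg_left _ (by positivity)
          apply Finset.sum_le_sum
          intro S _
          obtain ⟨hS, hbS⟩ := hℓ (y x S)
          have hsum : ∑ n ∈ F, ‖(Ω (y x S) - ℓ (y x S)) n‖ ^ q
              ≤ ‖(⟨Ω (y x S) - ℓ (y x S), hS⟩ : lp (fun _ : ℕ => ℝ) p)‖ ^ q :=
            lp.sum_rpow_le_norm_rpow hq0
              (⟨Ω (y x S) - ℓ (y x S), hS⟩ : lp (fun _ : ℕ => ℝ) p) F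
          have hb' : ‖(⟨Ω (y x S) - ℓ (y x S), hS⟩ : lp (fun _ : ℕ => ℝ) p)‖ ≤ K * ‖x‖ := by
            rw [← hynorm x S]; exact hbS
          calc ∑ n ∈ F, ‖Ω (y x S) n - ℓ (y x S) n‖ ^ q
              = ∑ n ∈ F, ‖(Ω (y x S) - ℓ (y x S)) n‖ ^ q := by
                apply Finset.sum_congr rfl; intro n _; rfl
            _ ≤ ‖(⟨Ω (y x S) - ℓ (y x S), hS⟩ : lp (fun _ : ℕ => ℝ) p)‖ ^ q := hsum
            _ ≤ (K * ‖x‖) ^ q :=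
                Real.rpow_le_rpow (norm_nonneg _) hb' hq0.le
      _ = (K * ‖x‖) ^ q := by
          rw [Finset.sum_const, nsmul_eq_mul, hcardpow, ← mul_assoc,
            inv_mul_cancel₀ hN0.ne', one_mul]
  -- conclude
  refine ⟨K + K, fun x => ?_⟩
  have hKx : (0:ℝ) ≤ K * ‖x‖ := mul_nonneg hK0 (norm_nonneg x)
  -- the two pieces
  have memg : Memℓp (fun n => Ω x n - lam n * x n) p :=
    memℓp_gen' (C := (K * ‖x‖) ^ q) (fun F => key x F)
  have hgnorm : ‖(⟨fun n => Ω x n - lam n * x n, memg⟩ : lp (fun _ : ℕ => ℝ) p)‖ ≤ K * ‖x‖ :=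
    lp.norm_le_of_forall_sum_le hq0 hKx (fun F => key x F)
  have keyh : ∀ F : Finset ℕ, ∑ n ∈ F, ‖lam n * x n‖ ^ q ≤ (K * ‖x‖) ^ q := by
    intro F
    have h1 : ∀ n ∈ F, ‖lam n * x n‖ ^ q ≤ K ^ q * ‖x n‖ ^ q := by
      intro n _
      rw [← Real.mul_rpow hK0 (norm_nonneg _)]
      apply Real.rpow_le_rpow (norm_nonneg _) _ hq0.le
      rw [norm_mul]
      exact mul_le_mul_of_nonneg_right (hlam n) (norm_nonneg _)
    calc ∑ n ∈ F, ‖lam n * x n‖ ^ q ≤ ∑ n ∈ F, K ^ q * ‖x n‖ ^ q :=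
          Finset.sum_le_sum h1
      _ = K ^ q * ∑ n ∈ F, ‖x n‖ ^ q := by rw [Finset.mul_sum]
      _ ≤ K ^ q * ‖x‖ ^ q := by
          apply mul_le_mul_of_nonneg_left (lp.sum_rpow_le_norm_rpow hq0 x F)
          positivity
      _ = (K * ‖x‖) ^ q := (Real.mul_rpow hK0 (norm_nonneg _)).symm
  have memh : Memℓp (fun n => lam n * x n) p :=
    memℓp_gen' (C := (K * ‖x‖) ^ q) keyh
  have hhnorm : ‖(⟨fun n => lam n * x n, memh⟩ : lp (fun _ : ℕ => ℝ) p)‖ ≤ K * ‖x‖ :=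
    lp.norm_le_of_forall_sum_le hq0 hKx keyh
  have memΩ : Memℓp (Ω x) p := by
    have := memg.add memh
    have heq : ((fun n => Ω x n - lam n * x n) + fun n => lam n * x n) = Ω x := by
      funext n; simp
    rwa [heq] at this
  refine ⟨memΩ, ?_⟩
  have hsplit : (⟨Ω x, memΩ⟩ : lp (fun _ : ℕ => ℝ) p)
      = (⟨fun n => Ω x n - lam n * x n, memg⟩ : lp (fun _ : ℕ => ℝ) p) + ⟨fun n => lam n * x n, memh⟩ := by
    apply Subtype.ext
    rw [lp.coeFn_add]
    funext n
    simp
  calc ‖(⟨Ω x, memΩ⟩ : lp (fun _ : ℕ => ℝ) p)‖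
      ≤ ‖(⟨fun n => Ω x n - lam n * x n, memg⟩ : lp (fun _ : ℕ => ℝ) p)‖ + ‖(⟨fun n => lam n * x n, memh⟩ : lp (fun _ : ℕ => ℝ) p)‖ := by
        rw [hsplit]; exact norm_add_le _ _
    _ ≤ K * ‖x‖ + K * ‖x‖ := add_le_add hgnorm hhnorm
    _ = (K + K) * ‖x‖ := by ring
end

section
/- Let 1 < p < ∞ and let Ω and Ψ be exact centralizers on real ℓ_p with Ω(e_n) = Ψ(e_n) = 0 for all n, where (e_n) is the unit vector basis. If Ω and Ψ are equivalent, i.e., there exist a linear map L : ℓ_p → ℝ^ℕ and a homogeneous map B : ℓ_p → ℝ^ℕ with B(x) ∈ ℓ_p and ‖B(x)‖_p ≤ K‖x‖_p for all x, such that Ω − Ψ = B + L, then Ω and Ψ are boundedly equivalent: there is a constant C such that Ω(x) − Ψ(x) ∈ ℓ_p and ‖Ω(x) − Ψ(x)‖_p ≤ C‖x‖_p for all x ∈ ℓ_p. -/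
open scoped ENNReal


private def sgn (T : Finset ℕ) (n : ℕ) : ℝ := if n ∈ T then -1 else 1

private lemma sgn_sq (T : Finset ℕ) (n : ℕ) : sgn T n * sgn T n = 1 := by
  unfold sgn; by_cases h : n ∈ T <;> simp [h]

private lemma sgn_abs (T : Finset ℕ) (n : ℕ) : |sgn T n| ≤ 1 := by
  unfold sgn; by_cases h : n ∈ T <;> simp [h]

private lemma sgn_pm (T : Finset ℕ) (n : ℕ) : sgn T n = 1 ∨ sgn T n = -1 := by
  unfold sgn; by_cases h : n ∈ T <;> simp [h]

private lemma comb1 (S : Finset ℕ) (m : ℕ) :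
    ∑ T ∈ S.powerset, sgn T m * sgn T m = (2:ℝ) ^ S.card := by
  rw [Finset.sum_congr rfl fun T _ => sgn_sq T m, Finset.sum_const, Finset.card_powerset]
  simp

private lemma comb2 {S : Finset ℕ} {n m : ℕ} (hn : n ∈ S) (hnm : n ≠ m) :
    ∑ T ∈ S.powerset, sgn T m * sgn T n = 0 := by
  have hS : S = insert n (S.erase n) := (Finset.insert_erase hn).symm
  rw [hS, Finset.sum_powerset_insert (Finset.notMem_erase n S), ← Finset.sum_add_distrib]
  apply Finset.sum_eq_zero
  intro T hT
  have hnT : n ∉ T := fun h => Finset.notMem_erase n S (Finset.mem_powerset.mp hT h)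
  have h1 : sgn T n = 1 := if_neg hnT
  have h2 : sgn (insert n T) n = -1 := if_pos (Finset.mem_insert_self n T)
  have h3 : sgn (insert n T) m = sgn T m := by
    have : (m ∈ insert n T) = (m ∈ T) := by
      have hmn : m ≠ n := fun h => hnm h.symm
      simp [Finset.mem_insert, hmn]
    simp only [sgn, this]
  rw [h1, h2, h3]; ring

open scoped ENNReal

private lemma aux_compare {p : ℝ≥0∞} [Fact (1 ≤ p)] (hpr : 0 < p.toReal)
    (f : ℕ → ℝ) (g : lp (fun _ : ℕ => ℝ) p) (hfg : ∀ n, ‖f n‖ ≤ ‖g n‖) :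
    ∃ h : Memℓp f p, ‖(⟨f, h⟩ : lp (fun _ : ℕ => ℝ) p)‖ ≤ ‖g‖ := by
  have hsum : ∀ s : Finset ℕ, ∑ i ∈ s, ‖f i‖ ^ p.toReal ≤ ‖g‖ ^ p.toReal := by
    intro s
    refine le_trans (Finset.sum_le_sum fun i _ =>
      Real.rpow_le_rpow (norm_nonneg _) (hfg i) hpr.le) ?_
    exact lp.sum_rpow_le_norm_rpow hpr g s
  have hmem : Memℓp f p := memℓp_gen' hsum
  exact ⟨hmem, lp.norm_le_of_forall_sum_le hpr (lp.norm_nonneg' g) hsum⟩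

private lemma aux_mul {p : ℝ≥0∞} [Fact (1 ≤ p)] (hpr : 0 < p.toReal)
    (a : ℕ → ℝ) (ha : ∀ n, |a n| ≤ 1) (x : lp (fun _ : ℕ => ℝ) p) :
    ∃ h : Memℓp (fun n => a n * x n) p,
      ‖(⟨fun n => a n * x n, h⟩ : lp (fun _ : ℕ => ℝ) p)‖ ≤ ‖x‖ := by
  refine aux_compare hpr _ x fun n => ?_
  have h1 := ha n
  have h2 : (0:ℝ) ≤ |x n| := abs_nonneg _
  simp only [Real.norm_eq_abs, abs_mul]
  nlinarith [abs_nonneg (a n)]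

set_option maxHeartbeats 2000000 in
private lemma aux_key {p : ℝ≥0∞} [Fact (1 ≤ p)] (hp0 : p ≠ 0) (hpr : 0 < p.toReal)
    (Ω Ψ : lp (fun _ : ℕ => ℝ) p → (ℕ → ℝ))
    (hexactΩ : ∀ u : ℕ → ℝ, (∀ n, u n = 1 ∨ u n = -1) →
      ∀ x y : lp (fun _ : ℕ => ℝ) p, (∀ n, y n = u n * x n) →
        ∀ n, Ω y n = u n * Ω x n)
    (hexactΨ : ∀ u : ℕ → ℝ, (∀ n, u n = 1 ∨ u n = -1) →
      ∀ x y : lp (fun _ : ℕ => ℝ) p, (∀ n, y n = u n * x n) →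
        ∀ n, Ψ y n = u n * Ψ x n)
    (hbasisΩ : ∀ n : ℕ, Ω (lp.single p n 1) = 0)
    (hbasisΨ : ∀ n : ℕ, Ψ (lp.single p n 1) = 0)
    (L : lp (fun _ : ℕ => ℝ) p →ₗ[ℝ] (ℕ → ℝ))
    (B : lp (fun _ : ℕ => ℝ) p → (ℕ → ℝ)) (K : ℝ)
    (hBbd : ∀ x : lp (fun _ : ℕ => ℝ) p, ∃ h : Memℓp (B x) p,
      ‖(⟨B x, h⟩ : lp (fun _ : ℕ => ℝ) p)‖ ≤ K * ‖x‖)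
    (hDBL : ∀ x : lp (fun _ : ℕ => ℝ) p, Ω x - Ψ x = B x + L x)
    (S : Finset ℕ) (x : lp (fun _ : ℕ => ℝ) p) (hx : ∀ n, n ∉ S → x n = 0) :
    ∃ h : Memℓp (Ω x - Ψ x) p,
      ‖(⟨Ω x - Ψ x, h⟩ : lp (fun _ : ℕ => ℝ) p)‖ ≤ 2 * |K| * ‖x‖ := by
  classical
  choose hBmem hBnorm using hBbd
  choose hmulmem hmulnorm using fun (a : ℕ → ℝ) (ha : ∀ n, |a n| ≤ 1)
    (y : lp (fun _ : ℕ => ℝ) p) => aux_mul hpr a ha y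
  -- the sign-flipped copies of x
  let xT : Finset ℕ → lp (fun _ : ℕ => ℝ) p := fun T =>
    ⟨fun n => sgn T n * x n, hmulmem (sgn T) (sgn_abs T) x⟩
  have hxTnorm : ∀ T, ‖xT T‖ ≤ ‖x‖ := fun T => hmulnorm (sgn T) (sgn_abs T) x
  have hxTapp : ∀ T n, xT T n = sgn T n * x n := fun T n => rfl
  -- B applied to them, as elements of lp
  let BxT : Finset ℕ → lp (fun _ : ℕ => ℝ) p := fun T => ⟨B (xT T), hBmem (xT T)⟩
  have hBxTnorm : ∀ T, ‖BxT T‖ ≤ K * ‖xT T‖ := fun T => hBnorm (xT T)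
  -- the sign-multiplied versions
  let bT : Finset ℕ → lp (fun _ : ℕ => ℝ) p := fun T =>
    ⟨fun n => sgn T n * B (xT T) n, hmulmem (sgn T) (sgn_abs T) (BxT T)⟩
  have hbTnorm0 : ∀ T, ‖bT T‖ ≤ ‖BxT T‖ :=
    fun T => hmulnorm (sgn T) (sgn_abs T) (BxT T)
  have hbTx : ∀ T, ‖bT T‖ ≤ |K| * ‖x‖ := by
    intro T
    have h1 := hbTnorm0 T
    have h2 := hBxTnorm T
    have h3 := hxTnorm T
    nlinarith [le_abs_self K, abs_nonneg K, lp.norm_nonneg' (xT T), lp.norm_nonneg' x]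
  -- the diagonal coefficients
  have hLe : ∀ n : ℕ, (L (lp.single p n 1) : ℕ → ℝ) = -(B (lp.single p n 1)) := by
    intro n
    have h := hDBL (lp.single p n 1)
    rw [hbasisΩ n, hbasisΨ n] at h
    have h0 : B (lp.single p n 1) + L (lp.single p n 1) = 0 := by rw [← h]; simp
    exact eq_neg_of_add_eq_zero_right h0
  have hd : ∀ m : ℕ, |L (lp.single p m 1) m| ≤ |K| := by
    intro m
    have h1 := hBnorm (lp.single p m 1)
    have h2 : ‖lp.single (E := fun _ : ℕ => ℝ) p m (1:ℝ)‖ = 1 := by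
      have := lp.norm_single (E := fun _ : ℕ => ℝ) (pos_iff_ne_zero.mpr hp0) m (1:ℝ)
      simpa using this
    have h3 := lp.norm_apply_le_norm hp0
      (⟨B (lp.single p m 1), hBmem (lp.single p m 1)⟩ : lp (fun _ : ℕ => ℝ) p) m
    have h3' : |B (lp.single p m 1) m| ≤ ‖(⟨B (lp.single p m 1),
        hBmem (lp.single p m 1)⟩ : lp (fun _ : ℕ => ℝ) p)‖ := by simpa using h3
    have h4 : L (lp.single p m 1) m = -(B (lp.single p m 1) m) := by
      rw [hLe m]; rfl
    rw [h4, abs_neg]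
    rw [show (lp.single p m 1 : lp (fun _ : ℕ => ℝ) p) = lp.single (E := fun _ : ℕ => ℝ) p m (1:ℝ) from rfl, h2] at h1
    nlinarith [le_abs_self K]
  -- x as a signed combination of basis vectors
  have hxTsum : ∀ T : Finset ℕ,
      xT T = ∑ n ∈ S, (sgn T n * x n) • lp.single (E := fun _ : ℕ => ℝ) p n (1:ℝ) := by
    intro T
    apply lp.ext
    funext m
    have hR : (↑(∑ n ∈ S, (sgn T n * x n) • lp.single (E := fun _ : ℕ => ℝ) p n (1:ℝ)) : ℕ → ℝ) m
        = ∑ n ∈ S, (sgn T n * x n) * (lp.single (E := fun _ : ℕ => ℝ) p n (1:ℝ) m) := by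
      rw [lp.coeFn_sum, Finset.sum_apply]
      exact Finset.sum_congr rfl fun n _ => by
        rw [lp.coeFn_smul, Pi.smul_apply, smul_eq_mul]
    show sgn T m * x m = _
    rw [hR]
    have hterm : ∀ n ∈ S, (sgn T n * x n) * (lp.single (E := fun _ : ℕ => ℝ) p n (1:ℝ) m)
        = if m = n then sgn T n * x n else 0 := by
      intro n _
      by_cases h : m = n
      · subst h; rw [lp.single_apply_self, if_pos rfl, mul_one]
      · rw [lp.single_apply_ne p n _ h, if_neg h, mul_zero]
    rw [Finset.sum_congr rfl hterm, Finset.sum_ite_eq S m]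
    by_cases hm : m ∈ S
    · rw [if_pos hm]
    · rw [if_neg hm, hx m hm, mul_zero]
  have hLxT : ∀ T, L (xT T) = ∑ n ∈ S, (sgn T n * x n) • L (lp.single p n 1) := by
    intro T
    rw [hxTsum T, map_sum]
    exact Finset.sum_congr rfl fun n _ => by rw [map_smul]
  -- the main pointwise identity
  have hID : ∀ (T : Finset ℕ) (m : ℕ), Ω x m - Ψ x m =
      sgn T m * B (xT T) m
        + ∑ n ∈ S, (sgn T m * sgn T n) * (x n * L (lp.single p n 1) m) := by
    intro T m
    have hexact : Ω (xT T) m - Ψ (xT T) m = sgn T m * (Ω x m - Ψ x m) := by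
      rw [hexactΩ (sgn T) (sgn_pm T) x (xT T) (hxTapp T) m,
          hexactΨ (sgn T) (sgn_pm T) x (xT T) (hxTapp T) m]
      ring
    have h2 : Ω (xT T) m - Ψ (xT T) m = B (xT T) m + L (xT T) m := by
      have := congrFun (hDBL (xT T)) m
      simpa using this
    have h3 : L (xT T) m = ∑ n ∈ S, (sgn T n * x n) * L (lp.single p n 1) m := by
      rw [hLxT T]
      rw [Finset.sum_apply]
      exact Finset.sum_congr rfl fun n _ => by rw [Pi.smul_apply, smul_eq_mul]
    have h5 : sgn T m * (Ω x m - Ψ x m)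
        = B (xT T) m + ∑ n ∈ S, (sgn T n * x n) * L (lp.single p n 1) m := by
      rw [← hexact, h2, h3]
    calc Ω x m - Ψ x m = sgn T m * (sgn T m * (Ω x m - Ψ x m)) := by
          rw [← mul_assoc, sgn_sq, one_mul]
      _ = _ := by
          rw [h5, mul_add, Finset.mul_sum]
          congr 1
          exact Finset.sum_congr rfl fun n _ => by ring
  -- summing over all sign patterns
  have hIDsum : ∀ m : ℕ, (2:ℝ) ^ S.card * (Ω x m - Ψ x m)
      = (∑ T ∈ S.powerset, sgn T m * B (xT T) m)
        + (2:ℝ) ^ S.card * (x m * L (lp.single p m 1) m) := by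
    intro m
    have hstep1 : (2:ℝ) ^ S.card * (Ω x m - Ψ x m)
        = ∑ _T ∈ S.powerset, (Ω x m - Ψ x m) := by
      rw [Finset.sum_const, Finset.card_powerset, nsmul_eq_mul]
      push_cast
      ring
    rw [hstep1, Finset.sum_congr rfl fun T _ => hID T m, Finset.sum_add_distrib]
    congr 1
    rw [Finset.sum_comm]
    have hswap : ∀ n ∈ S,
        (∑ T ∈ S.powerset, (sgn T m * sgn T n) * (x n * L (lp.single p n 1) m))
          = (∑ T ∈ S.powerset, sgn T m * sgn T n) * (x n * L (lp.single p n 1) m) :=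
      fun n _ => (Finset.sum_mul _ _ _).symm
    rw [Finset.sum_congr rfl hswap]
    have hterm : ∀ n ∈ S,
        (∑ T ∈ S.powerset, sgn T m * sgn T n) * (x n * L (lp.single p n 1) m)
          = if n = m then (2:ℝ) ^ S.card * (x m * L (lp.single p m 1) m) else 0 := by
      intro n hn
      by_cases hnm : n = m
      · subst hnm
        rw [if_pos rfl, comb1]
      · rw [if_neg hnm, comb2 hn hnm, zero_mul]
    rw [Finset.sum_congr rfl hterm, Finset.sum_ite_eq' S m]
    by_cases hm : m ∈ S
    · rw [if_pos hm]
    · rw [if_neg hm, hx m hm]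
      ring
  -- the diagonal part as an lp element
  have hdxex := aux_compare hpr (fun m => x m * L (lp.single p m 1) m) ((|K| : ℝ) • x) (by
    intro n
    have h1 := hd n
    have h2 : ‖((|K| : ℝ) • x) n‖ = |K| * ‖x n‖ := by
      rw [lp.coeFn_smul, Pi.smul_apply, smul_eq_mul, Real.norm_eq_abs, Real.norm_eq_abs,
        abs_mul, abs_abs]
    rw [h2]
    simp only [Real.norm_eq_abs, abs_mul]
    nlinarith [abs_nonneg (x n)])
  obtain ⟨hdxm, hdxn⟩ := hdxex
  have h2cpos : (0:ℝ) < 2 ^ S.card := by positivity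
  -- the total element
  set F : lp (fun _ : ℕ => ℝ) p :=
    ((2:ℝ) ^ S.card)⁻¹ • (∑ T ∈ S.powerset, bT T)
      + ⟨fun m => x m * L (lp.single p m 1) m, hdxm⟩ with hFdef
  have hFapp : ∀ m, (F : ℕ → ℝ) m = Ω x m - Ψ x m := by
    intro m
    have h2c : ((2:ℝ) ^ S.card) ≠ 0 := ne_of_gt h2cpos
    have hBsum : (↑(∑ T ∈ S.powerset, bT T) : ℕ → ℝ) m
        = ∑ T ∈ S.powerset, sgn T m * B (xT T) m := by
      rw [lp.coeFn_sum, Finset.sum_apply]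
    have hcoord : (F : ℕ → ℝ) m
        = ((2:ℝ) ^ S.card)⁻¹ * (∑ T ∈ S.powerset, sgn T m * B (xT T) m)
          + x m * L (lp.single p m 1) m := by
      rw [hFdef]
      simp only [lp.coeFn_add, Pi.add_apply, lp.coeFn_smul, Pi.smul_apply, smul_eq_mul]
      rw [hBsum]
    rw [hcoord]
    have hiD := hIDsum m
    field_simp
    linarith
  have hFnorm : ‖F‖ ≤ 2 * |K| * ‖x‖ := by
    rw [hFdef]
    refine le_trans (norm_add_le _ _) ?_
    have h1 : ‖((2:ℝ) ^ S.card)⁻¹ • (∑ T ∈ S.powerset, bT T)‖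
        ≤ ((2:ℝ) ^ S.card)⁻¹ * ((2:ℝ) ^ S.card * (|K| * ‖x‖)) := by
      rw [norm_smul]
      have hn : ‖((2:ℝ) ^ S.card)⁻¹‖ = ((2:ℝ) ^ S.card)⁻¹ := by
        rw [Real.norm_eq_abs, abs_of_pos (by positivity)]
      rw [hn]
      refine mul_le_mul_of_nonneg_left ?_ (by positivity)
      refine le_trans (norm_sum_le _ _) ?_
      refine le_trans (Finset.sum_le_sum fun T _ => hbTx T) ?_
      rw [Finset.sum_const, Finset.card_powerset, nsmul_eq_mul]
      push_cast
      exact le_refl _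
    have h2 : ‖(⟨fun m => x m * L (lp.single p m 1) m, hdxm⟩ :
        lp (fun _ : ℕ => ℝ) p)‖ ≤ |K| * ‖x‖ := by
      refine le_trans hdxn ?_
      rw [norm_smul, Real.norm_eq_abs, abs_abs]
    have h2c : ((2:ℝ) ^ S.card) ≠ 0 := ne_of_gt h2cpos
    have heq : ((2:ℝ) ^ S.card)⁻¹ * ((2:ℝ) ^ S.card * (|K| * ‖x‖)) = |K| * ‖x‖ := by
      field_simp
    linarith
  have hfun : (Ω x - Ψ x) = (F : ℕ → ℝ) := funext fun m => (hFapp m).symm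
  have hmem : Memℓp (Ω x - Ψ x) p := by rw [hfun]; exact lp.memℓp F
  refine ⟨hmem, ?_⟩
  have hEq : (⟨Ω x - Ψ x, hmem⟩ : lp (fun _ : ℕ => ℝ) p) = F := lp.ext hfun
  rw [hEq]
  exact hFnorm


/-- for `1 < p < ∞`, if two exact centralizers `Ω`, `Ψ` on real `ℓ_p`
vanishing on the unit vector basis are equivalent (`Ω − Ψ = B + L` with `B` homogeneous
bounded and `L` linear), then they are boundedly equivalent. -/
theorem stmt12 (p : ℝ≥0∞) [Fact (1 ≤ p)] (hp1 : 1 < p) (hptop : p ≠ ⊤)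
    (Ω Ψ : lp (fun _ : ℕ => ℝ) p → (ℕ → ℝ))
    -- `Ω` and `Ψ` are homogeneous
    (hhomΩ : ∀ (c : ℝ) (x : lp (fun _ : ℕ => ℝ) p), Ω (c • x) = c • Ω x)
    (hhomΨ : ∀ (c : ℝ) (x : lp (fun _ : ℕ => ℝ) p), Ψ (c • x) = c • Ψ x)
    -- `Ω` and `Ψ` are centralizers
    (hcentΩ : ∃ C : ℝ, ∀ (a : lp (fun _ : ℕ => ℝ) ⊤) (x y : lp (fun _ : ℕ => ℝ) p),
      (∀ n, y n = a n * x n) →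
      ∃ h : Memℓp (fun n => Ω y n - a n * Ω x n) p,
        ‖(⟨fun n => Ω y n - a n * Ω x n, h⟩ : lp (fun _ : ℕ => ℝ) p)‖ ≤ C * ‖a‖ * ‖x‖)
    (hcentΨ : ∃ C : ℝ, ∀ (a : lp (fun _ : ℕ => ℝ) ⊤) (x y : lp (fun _ : ℕ => ℝ) p),
      (∀ n, y n = a n * x n) →
      ∃ h : Memℓp (fun n => Ψ y n - a n * Ψ x n) p,
        ‖(⟨fun n => Ψ y n - a n * Ψ x n, h⟩ : lp (fun _ : ℕ => ℝ) p)‖ ≤ C * ‖a‖ * ‖x‖)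
    -- `Ω` and `Ψ` are exact
    (hexactΩ : ∀ u : ℕ → ℝ, (∀ n, u n = 1 ∨ u n = -1) →
      ∀ x y : lp (fun _ : ℕ => ℝ) p, (∀ n, y n = u n * x n) →
        ∀ n, Ω y n = u n * Ω x n)
    (hexactΨ : ∀ u : ℕ → ℝ, (∀ n, u n = 1 ∨ u n = -1) →
      ∀ x y : lp (fun _ : ℕ => ℝ) p, (∀ n, y n = u n * x n) →
        ∀ n, Ψ y n = u n * Ψ x n)
    -- both vanish on the unit vector basis
    (hbasisΩ : ∀ n : ℕ, Ω (lp.single p n 1) = 0)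
    (hbasisΨ : ∀ n : ℕ, Ψ (lp.single p n 1) = 0)
    -- `Ω` and `Ψ` are equivalent: `Ω − Ψ = B + L`, `B` homogeneous bounded, `L` linear
    (hequiv : ∃ (L : lp (fun _ : ℕ => ℝ) p →ₗ[ℝ] (ℕ → ℝ))
        (B : lp (fun _ : ℕ => ℝ) p → (ℕ → ℝ)) (K : ℝ),
      (∀ (c : ℝ) (x : lp (fun _ : ℕ => ℝ) p), B (c • x) = c • B x) ∧
      (∀ x : lp (fun _ : ℕ => ℝ) p, ∃ h : Memℓp (B x) p,
        ‖(⟨B x, h⟩ : lp (fun _ : ℕ => ℝ) p)‖ ≤ K * ‖x‖) ∧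
      (∀ x : lp (fun _ : ℕ => ℝ) p, Ω x - Ψ x = B x + L x)) :
    -- conclusion: `Ω` and `Ψ` are boundedly equivalent
    ∃ C : ℝ, ∀ x : lp (fun _ : ℕ => ℝ) p, ∃ h : Memℓp (Ω x - Ψ x) p,
      ‖(⟨Ω x - Ψ x, h⟩ : lp (fun _ : ℕ => ℝ) p)‖ ≤ C * ‖x‖ := by
  classical
  obtain ⟨CΩ, hΩ⟩ := hcentΩ
  obtain ⟨CΨ, hΨ⟩ := hcentΨ
  obtain ⟨L, B, K, hBhom, hBbd, hDBL⟩ := hequiv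
  have hp0 : p ≠ 0 := (zero_lt_one.trans hp1).ne'
  have hpr : 0 < p.toReal := ENNReal.toReal_pos hp0 hptop
  refine ⟨2 * |K| + |CΩ| + |CΨ|, fun x => ?_⟩
  have hkey : ∀ s : Finset ℕ,
      ∑ n ∈ s, ‖(Ω x - Ψ x) n‖ ^ p.toReal
        ≤ ((2 * |K| + |CΩ| + |CΨ|) * ‖x‖) ^ p.toReal := by
    intro s
    -- the indicator of `s` as an element of `ℓ∞`
    have haSmem : Memℓp (fun n => if n ∈ s then (1:ℝ) else 0) ∞ := by
      apply memℓp_infty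
      refine ⟨1, ?_⟩
      rintro r ⟨n, rfl⟩
      by_cases h : n ∈ s <;> simp [h]
    set aS : lp (fun _ : ℕ => ℝ) ⊤ := ⟨fun n => if n ∈ s then (1:ℝ) else 0, haSmem⟩
      with haSdef
    have haSapp : ∀ n, aS n = if n ∈ s then (1:ℝ) else 0 := fun n => rfl
    have haSnorm : ‖aS‖ ≤ 1 := by
      apply lp.norm_le_of_forall_le zero_le_one
      intro n
      show ‖if n ∈ s then (1:ℝ) else 0‖ ≤ 1
      by_cases h : n ∈ s <;> simp [h]
    -- the truncation of `x` to `s`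
    obtain ⟨hxSmem, hxSnorm⟩ := aux_mul hpr (fun n => if n ∈ s then (1:ℝ) else 0)
      (by intro n; by_cases h : n ∈ s <;> simp [h]) x
    set xS : lp (fun _ : ℕ => ℝ) p :=
      ⟨fun n => (if n ∈ s then (1:ℝ) else 0) * x n, hxSmem⟩ with hxSdef
    have hxSsupp : ∀ n, n ∉ s → xS n = 0 := by
      intro n hn
      show (if n ∈ s then (1:ℝ) else 0) * x n = 0
      rw [if_neg hn, zero_mul]
    have hxScoord : ∀ n, xS n = aS n * x n := fun n => rfl
    obtain ⟨hF1mem, hF1norm⟩ := aux_key hp0 hpr Ω Ψ hexactΩ hexactΨ hbasisΩ hbasisΨ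
      L B K hBbd hDBL s xS hxSsupp
    obtain ⟨hF2mem, hF2norm⟩ := hΩ aS x xS hxScoord
    obtain ⟨hF3mem, hF3norm⟩ := hΨ aS x xS hxScoord
    set F1 : lp (fun _ : ℕ => ℝ) p := ⟨Ω xS - Ψ xS, hF1mem⟩ with hF1def
    set F2 : lp (fun _ : ℕ => ℝ) p := ⟨fun n => Ω xS n - aS n * Ω x n, hF2mem⟩ with hF2def
    set F3 : lp (fun _ : ℕ => ℝ) p := ⟨fun n => Ψ xS n - aS n * Ψ x n, hF3mem⟩ with hF3def
    set G : lp (fun _ : ℕ => ℝ) p := F1 - F2 + F3 with hGdef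
    have hGapp : ∀ n, (G : ℕ → ℝ) n = aS n * (Ω x n - Ψ x n) := by
      intro n
      show (Ω xS n - Ψ xS n) - (Ω xS n - aS n * Ω x n) + (Ψ xS n - aS n * Ψ x n)
        = aS n * (Ω x n - Ψ x n)
      ring
    clear_value aS xS
    have hGnorm : ‖G‖ ≤ (2 * |K| + |CΩ| + |CΨ|) * ‖x‖ := by
      have hx0 : (0:ℝ) ≤ ‖x‖ := lp.norm_nonneg' x
      have ha0 : (0:ℝ) ≤ ‖aS‖ := lp.norm_nonneg' aS
      have h1 : ‖F1‖ ≤ 2 * |K| * ‖x‖ := by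
        refine le_trans hF1norm ?_
        nlinarith [abs_nonneg K, lp.norm_nonneg' xS, hxSnorm]
      have h2 : ‖F2‖ ≤ |CΩ| * ‖x‖ := by
        refine le_trans hF2norm ?_
        have h2' : CΩ * ‖aS‖ ≤ |CΩ| :=
          le_trans (mul_le_mul_of_nonneg_right (le_abs_self CΩ) ha0)
            (mul_le_of_le_one_right (abs_nonneg CΩ) haSnorm)
        exact mul_le_mul_of_nonneg_right h2' hx0
      have h3 : ‖F3‖ ≤ |CΨ| * ‖x‖ := by
        refine le_trans hF3norm ?_
        have h3' : CΨ * ‖aS‖ ≤ |CΨ| :=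
          le_trans (mul_le_mul_of_nonneg_right (le_abs_self CΨ) ha0)
            (mul_le_of_le_one_right (abs_nonneg CΨ) haSnorm)
        exact mul_le_mul_of_nonneg_right h3' hx0
      have h4 : ‖G‖ ≤ ‖F1 - F2‖ + ‖F3‖ := hGdef ▸ norm_add_le (F1 - F2) F3
      have h5 : ‖F1 - F2‖ ≤ ‖F1‖ + ‖F2‖ := norm_sub_le _ _
      linarith
    have hsum1 : ∑ n ∈ s, ‖(Ω x - Ψ x) n‖ ^ p.toReal
        = ∑ n ∈ s, ‖(G : ℕ → ℝ) n‖ ^ p.toReal := by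
      refine Finset.sum_congr rfl fun n hn => ?_
      rw [hGapp n, haSapp n, if_pos hn, one_mul]
      rfl
    calc ∑ n ∈ s, ‖(Ω x - Ψ x) n‖ ^ p.toReal
        = ∑ n ∈ s, ‖(G : ℕ → ℝ) n‖ ^ p.toReal := hsum1
      _ ≤ ‖G‖ ^ p.toReal := lp.sum_rpow_le_norm_rpow hpr G s
      _ ≤ ((2 * |K| + |CΩ| + |CΨ|) * ‖x‖) ^ p.toReal :=
          Real.rpow_le_rpow (lp.norm_nonneg' G) hGnorm hpr.le
  have hmem : Memℓp (Ω x - Ψ x) p := memℓp_gen' hkey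
  refine ⟨hmem, ?_⟩
  exact lp.norm_le_of_forall_sum_le hpr (by positivity) hkey
end

section
/- Let 1 ≤ p < ∞, let Y be a Banach space, and let F : ℓ_p → Y be a quasi-linear map. Then F is singular if and only if F is disjointly singular; that is, F is trivial on no infinite-dimensional closed subspace of ℓ_p if and only if F is trivial on no closed linear span of a sequence of nonzero pairwise disjointly supported vectors of ℓ_p. -/
open scoped ENNReal
open Filter
open scoped Topology

section Aux

/-- Coordinate evaluation as a linear functional on `ℓ_p`. -/
noncomputable def coordL (p : ℝ≥0∞) [Fact (1 ≤ p)] (k : ℕ) :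
    lp (fun _ : ℕ => ℝ) p →ₗ[ℝ] ℝ where
  toFun f := f k
  map_add' _ _ := rfl
  map_smul' _ _ := rfl

lemma aux_mono (p : ℝ≥0∞) [Fact (1 ≤ p)] (hp : 0 < p.toReal)
    (f g : lp (fun _ : ℕ => ℝ) p) (h : ∀ k, ‖f k‖ ≤ ‖g k‖) : ‖f‖ ≤ ‖g‖ := by
  refine lp.norm_le_of_tsum_le hp (norm_nonneg _) ?_
  calc ∑' i, ‖f i‖ ^ p.toReal ≤ ∑' i, ‖g i‖ ^ p.toReal := by
        refine Summable.tsum_le_tsum (fun i => ?_) ((lp.memℓp f).summable hp) ((lp.memℓp g).summable hp)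
        exact Real.rpow_le_rpow (norm_nonneg _) (h i) hp.le
    _ = ‖g‖ ^ p.toReal := (lp.norm_rpow_eq_tsum hp g).symm

lemma aux_coeff (p : ℝ≥0∞) [Fact (1 ≤ p)] (hp : 0 < p.toReal)
    (y : ℕ → lp (fun _ : ℕ => ℝ) p)
    (hdisj : ∀ m n, m ≠ n → ∀ k, y m k = 0 ∨ y n k = 0)
    (s : Finset ℕ) (a : ℕ → ℝ) (n : ℕ) (hn : n ∈ s) :
    ‖a n • y n‖ ≤ ‖∑ m ∈ s, a m • y m‖ := by
  refine aux_mono p hp _ _ (fun k => ?_)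
  have hsumk : (↑(∑ m ∈ s, a m • y m) : ∀ _ : ℕ, ℝ) k = ∑ m ∈ s, a m * y m k := by
    have := map_sum (coordL p k) (fun m => a m • y m) s
    exact this
  have hnk : (↑(a n • y n) : ∀ _ : ℕ, ℝ) k = a n * y n k := rfl
  rw [hnk, hsumk]
  by_cases hk : y n k = 0
  · rw [hk, mul_zero]
    simp [norm_nonneg]
  · have hothers : ∀ m ∈ s, m ≠ n → a m * y m k = 0 := by
      intro m hm hmn
      rcases hdisj m n hmn k with h | h
      · rw [h, mul_zero]
      · exact absurd h hk
    rw [Finset.sum_eq_single_of_mem n hn hothers]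

lemma aux_indep (p : ℝ≥0∞) [Fact (1 ≤ p)] (u : ℕ → lp (fun _ : ℕ => ℝ) p)
    (hne : ∀ n, u n ≠ 0) (hdisj : ∀ m n, m ≠ n → ∀ k, u m k = 0 ∨ u n k = 0) :
    LinearIndependent ℝ u := by
  rw [linearIndependent_iff']
  intro s g hsum i hi
  have hex : ∃ k, u i k ≠ 0 := by
    by_contra h
    push_neg at h
    exact hne i (lp.ext (funext fun k => h k))
  obtain ⟨k, hk⟩ := hex
  have h0 := congrArg (coordL p k) hsum
  rw [map_sum, map_zero] at h0
  have h1 : ∀ m ∈ s, m ≠ i → coordL p k (g m • u m) = 0 := by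
    intro m hm hmi
    rcases hdisj m i hmi k with h | h
    · show g m • (u m) k = 0
      rw [h, smul_zero]
    · exact absurd h hk
  rw [Finset.sum_eq_single_of_mem i hi h1] at h0
  have : g i • (u i) k = 0 := h0
  rcases mul_eq_zero.mp this with h | h
  · exact h
  · exact absurd h hk

lemma aux_trunc_apply (p : ℝ≥0∞) [Fact (1 ≤ p)] (f : lp (fun _ : ℕ => ℝ) p) (N k : ℕ) :
    (↑(∑ i ∈ Finset.range N, lp.single p i (f i)) : ∀ _ : ℕ, ℝ) k
      = if k < N then f k else 0 := by
  simp only [lp.coeFn_sum, Finset.sum_apply, lp.single_apply, Finset.sum_dite_eq,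
    Finset.mem_range, Pi.single_apply, Finset.sum_ite_eq]

lemma aux_tail (p : ℝ≥0∞) [Fact (1 ≤ p)] (hptop : p ≠ ⊤) (f : lp (fun _ : ℕ => ℝ) p)
    (m : ℕ) (ε : ℝ) (hε : 0 < ε) :
    ∃ N, m ≤ N ∧ ‖f - ∑ i ∈ Finset.range N, lp.single p i (f i)‖ ≤ ε := by
  have h := (lp.hasSum_single hptop f).tendsto_sum_nat
  rw [Metric.tendsto_atTop] at h
  obtain ⟨N₀, hN₀⟩ := h ε hε
  refine ⟨max m N₀, le_max_left _ _, ?_⟩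
  have := hN₀ (max m N₀) (le_max_right _ _)
  rw [dist_eq_norm] at this
  rw [← norm_neg]
  simpa [neg_sub] using this.le

lemma aux_ker (p : ℝ≥0∞) [Fact (1 ≤ p)] (M : Submodule ℝ (lp (fun _ : ℕ => ℝ) p))
    (hMinf : ¬ FiniteDimensional ℝ M) (N : ℕ) :
    ∃ x : lp (fun _ : ℕ => ℝ) p, x ∈ M ∧ ‖x‖ = 1 ∧ ∀ k < N, x k = 0 := by
  set φ : M →ₗ[ℝ] (Fin N → ℝ) :=
    LinearMap.pi (fun i : Fin N => (coordL p i).comp M.subtype) with hφ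
  have hker : LinearMap.ker φ ≠ ⊥ := by
    intro h
    exact hMinf (FiniteDimensional.of_injective φ (LinearMap.ker_eq_bot.mp h))
  obtain ⟨z, hzker, hz0⟩ := Submodule.ne_bot_iff _ |>.mp hker
  have hz0' : (z : lp (fun _ : ℕ => ℝ) p) ≠ 0 := by
    simpa [Submodule.coe_eq_zero] using hz0
  refine ⟨‖(z : lp (fun _ : ℕ => ℝ) p)‖⁻¹ • (z : lp (fun _ : ℕ => ℝ) p),
    M.smul_mem _ z.2, norm_smul_inv_norm hz0', fun k hk => ?_⟩
  have hzk : (z : lp (fun _ : ℕ => ℝ) p) k = 0 := by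
    have := congrFun (LinearMap.mem_ker.mp hzker) ⟨k, hk⟩
    exact this
  show ‖(z : lp (fun _ : ℕ => ℝ) p)‖⁻¹ • (z : lp (fun _ : ℕ => ℝ) p) k = 0
  rw [hzk, smul_zero]

lemma aux_infdim (p : ℝ≥0∞) [Fact (1 ≤ p)] (u : ℕ → lp (fun _ : ℕ => ℝ) p)
    (hli : LinearIndependent ℝ u) :
    ¬ FiniteDimensional ℝ ((Submodule.span ℝ (Set.range u)).topologicalClosure) := by
  intro hfd
  set W := (Submodule.span ℝ (Set.range u)).topologicalClosure
  have hmem : ∀ n, u n ∈ W :=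
    fun n => Submodule.le_topologicalClosure _ (Submodule.subset_span (Set.mem_range_self n))
  have hg : LinearIndependent ℝ (fun n => (⟨u n, hmem n⟩ : W)) :=
    LinearIndependent.of_comp W.subtype hli
  have : Finite ℕ := hg.finite
  exact not_finite ℕ

lemma aux_geom : ∀ (n a : ℕ), (∑ k ∈ Finset.Ico a (a + n), ((4:ℝ)⁻¹)^k) ≤ (4/3) * ((4:ℝ)⁻¹)^a := by
  intro n
  induction n with
  | zero =>
    intro a
    simp only [Nat.add_zero, Finset.Ico_self, Finset.sum_empty]
    positivity
  | succ n ih =>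
    intro a
    have h : a < a + (n + 1) := by omega
    rw [Finset.sum_eq_sum_Ico_succ_bot h]
    have h2 : a + (n + 1) = (a + 1) + n := by omega
    rw [h2]
    have h3 := ih (a + 1)
    have h4 : ((4:ℝ)⁻¹)^(a+1) = ((4:ℝ)⁻¹)^a * 4⁻¹ := pow_succ _ _
    rw [h4] at h3
    nlinarith [pow_nonneg (by norm_num : (0:ℝ) ≤ 4⁻¹) a]

lemma aux_tele {Z Y : Type*} [NormedAddCommGroup Z] [NormedSpace ℝ Z]
    [NormedAddCommGroup Y] [NormedSpace ℝ Y]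
    (F : Z → Y) (hF0 : F 0 = 0) (K : ℝ) (hK0 : 0 ≤ K)
    (hK : ∀ u v, ‖F (u + v) - F u - F v‖ ≤ K * (‖u‖ + ‖v‖))
    (c : ℝ) (hc : 0 ≤ c) (z : ℕ → Z) (hz : ∀ n, ‖z n‖ ≤ c * ((4:ℝ)⁻¹)^n) :
    ∀ (n a : ℕ), ‖F (∑ k ∈ Finset.Ico a (a + n), z k)
        - ∑ k ∈ Finset.Ico a (a + n), F (z k)‖ ≤ 2 * K * c * ((4:ℝ)⁻¹)^a := by
  have hsum : ∀ (n a : ℕ), ‖∑ k ∈ Finset.Ico a (a + n), z k‖ ≤ c * (4/3) * ((4:ℝ)⁻¹)^a := by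
    intro n a
    calc ‖∑ k ∈ Finset.Ico a (a + n), z k‖ ≤ ∑ k ∈ Finset.Ico a (a + n), ‖z k‖ :=
          norm_sum_le _ _
      _ ≤ ∑ k ∈ Finset.Ico a (a + n), c * ((4:ℝ)⁻¹)^k :=
          Finset.sum_le_sum (fun k _ => hz k)
      _ = c * ∑ k ∈ Finset.Ico a (a + n), ((4:ℝ)⁻¹)^k := by rw [Finset.mul_sum]
      _ ≤ c * ((4/3) * ((4:ℝ)⁻¹)^a) := mul_le_mul_of_nonneg_left (aux_geom n a) hc
      _ = c * (4/3) * ((4:ℝ)⁻¹)^a := by ring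
  intro n
  induction n with
  | zero =>
    intro a
    simp only [Nat.add_zero, Finset.Ico_self, Finset.sum_empty, hF0, sub_zero, norm_zero]
    positivity
  | succ n ih =>
    intro a
    have h : a < a + (n + 1) := by omega
    rw [Finset.sum_eq_sum_Ico_succ_bot h (f := z),
      Finset.sum_eq_sum_Ico_succ_bot h (f := fun k => F (z k))]
    have h2 : a + (n + 1) = (a + 1) + n := by omega
    rw [h2]
    set R := ∑ k ∈ Finset.Ico (a + 1) ((a + 1) + n), z k with hR
    have e1 : F (z a + R) - (F (z a) + ∑ k ∈ Finset.Ico (a+1) ((a+1)+n), F (z k))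
        = (F (z a + R) - F (z a) - F R)
          + (F R - ∑ k ∈ Finset.Ico (a+1) ((a+1)+n), F (z k)) := by abel
    rw [e1]
    have hb1 : ‖F (z a + R) - F (z a) - F R‖ ≤ K * (‖z a‖ + ‖R‖) := hK _ _
    have hb2 := ih (a + 1)
    have hpow : ((4:ℝ)⁻¹)^(a+1) = ((4:ℝ)⁻¹)^a * 4⁻¹ := pow_succ _ _
    have hRle : ‖R‖ ≤ c * (4/3) * ((4:ℝ)⁻¹)^(a+1) := hsum n (a+1)
    have hza := hz a
    have hp0 : (0:ℝ) ≤ ((4:ℝ)⁻¹)^a := by positivity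
    calc ‖_ + _‖ ≤ ‖F (z a + R) - F (z a) - F R‖
          + ‖F R - ∑ k ∈ Finset.Ico (a+1) ((a+1)+n), F (z k)‖ := norm_add_le _ _
      _ ≤ K * (‖z a‖ + ‖R‖) + 2 * K * c * ((4:ℝ)⁻¹)^(a+1) := add_le_add hb1 hb2
      _ ≤ 2 * K * c * ((4:ℝ)⁻¹)^a := by
          rw [hpow] at hRle ⊢
          nlinarith [mul_nonneg hK0 hp0, norm_nonneg R, norm_nonneg (z a),
            mul_nonneg (mul_nonneg hK0 hc) hp0]

lemma aux_dense {Z Y : Type*} [NormedAddCommGroup Z] [NormedSpace ℝ Z]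
    [NormedAddCommGroup Y] [NormedSpace ℝ Y] [CompleteSpace Y]
    (F : Z → Y) (hhom : ∀ (c : ℝ) (x : Z), F (c • x) = c • F x)
    (K : ℝ) (hK0 : 0 ≤ K) (hK : ∀ u v, ‖F (u + v) - F u - F v‖ ≤ K * (‖u‖ + ‖v‖))
    (W₀ : Submodule ℝ Z) (L₀ : W₀ →ₗ[ℝ] Y) (C : ℝ) (hC0 : 0 ≤ C)
    (hC : ∀ w : W₀, ‖F ↑w - L₀ w‖ ≤ C * ‖(w : Z)‖) :
    ∃ (L : W₀.topologicalClosure →ₗ[ℝ] Y) (C₁ : ℝ),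
      ∀ x : W₀.topologicalClosure, ‖F ↑x - L x‖ ≤ C₁ * ‖(x : Z)‖ := by
  have hFneg : ∀ z : Z, F (-z) = - F z := fun z => by
    simpa [neg_one_smul] using hhom (-1) z
  have h2pow : Tendsto (fun k : ℕ => ((2:ℝ)⁻¹)^k) atTop (𝓝 0) :=
    tendsto_pow_atTop_nhds_zero_of_lt_one (by norm_num) (by norm_num)
  set W := W₀.topologicalClosure with hW
  have happrox : ∀ (x : W) (k : ℕ), ∃ w : W₀, ‖(w : Z) - ↑x‖ < ((2:ℝ)⁻¹)^k := by
    intro x k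
    have hx : (x : Z) ∈ closure (W₀ : Set Z) := by
      rw [← Submodule.topologicalClosure_coe]; exact x.2
    rcases Metric.mem_closure_iff.mp hx (((2:ℝ)⁻¹)^k) (by positivity) with ⟨w, hwW, hw⟩
    refine ⟨⟨w, hwW⟩, ?_⟩
    rw [← dist_eq_norm, dist_comm]
    exact hw
  choose sfin hs using happrox
  set v : W → ℕ → Y := fun x k => L₀ (sfin x k) - F (↑(sfin x k) - ↑x) with hv
  have hkey : ∀ (x : Z) (w w' : W₀),
      ‖(L₀ w - F (↑w - x)) - (L₀ w' - F (↑w' - x))‖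
        ≤ (C + K) * (‖(w : Z) - x‖ + ‖(w' : Z) - x‖) := by
    intro x w w'
    have h1 := hK ((w : Z) - x) (x - (w' : Z))
    have e1 : ((w : Z) - x) + (x - (w' : Z)) = (w : Z) - (w' : Z) := by abel
    rw [e1] at h1
    have h2 := hC (w - w')
    have e2 : ((w - w' : W₀) : Z) = (w : Z) - (w' : Z) := rfl
    have e3 : F (x - (w' : Z)) = - F ((w' : Z) - x) := by
      rw [← neg_sub]; exact hFneg _
    have e4 : (L₀ w - F (↑w - x)) - (L₀ w' - F (↑w' - x))
        = (L₀ (w - w') - F ((w : Z) - (w' : Z)))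
          + (F ((w : Z) - (w' : Z)) - F ((w : Z) - x) - F (x - (w' : Z)))
          + (F (x - (w' : Z)) + F ((w' : Z) - x)) := by
      rw [map_sub]; abel
    have e5 : ‖F (x - (w' : Z)) + F ((w' : Z) - x)‖ = 0 := by
      rw [e3]; simp
    have hn : ‖(L₀ w - F (↑w - x)) - (L₀ w' - F (↑w' - x))‖
        ≤ ‖L₀ (w - w') - F ((w : Z) - (w' : Z))‖
          + ‖F ((w : Z) - (w' : Z)) - F ((w : Z) - x) - F (x - (w' : Z))‖
          + ‖F (x - (w' : Z)) + F ((w' : Z) - x)‖ := by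
      rw [e4]
      exact (norm_add_le _ _).trans (add_le_add_left (norm_add_le _ _) _)
    rw [e5, add_zero] at hn
    have h2' : ‖L₀ (w - w') - F ((w : Z) - (w' : Z))‖ ≤ C * ‖(w : Z) - (w' : Z)‖ := by
      rw [norm_sub_rev]; rw [e2] at h2; exact h2
    have htri : ‖(w : Z) - (w' : Z)‖ ≤ ‖(w : Z) - x‖ + ‖(w' : Z) - x‖ := by
      have : (w : Z) - (w' : Z) = ((w : Z) - x) - ((w' : Z) - x) := by abel
      rw [this]; exact norm_sub_le _ _
    have hxw' : ‖x - (w' : Z)‖ = ‖(w' : Z) - x‖ := norm_sub_rev _ _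
    rw [hxw'] at h1
    nlinarith [norm_nonneg ((w : Z) - x), norm_nonneg ((w' : Z) - x), hn, h1, h2',
      mul_le_mul_of_nonneg_left htri hC0]
  have hCK0 : (0:ℝ) ≤ C + K := by linarith
  have hcauchy : ∀ x : W, CauchySeq (v x) := by
    intro x
    refine cauchySeq_of_le_tendsto_0 (fun N => (C + K) * (((2:ℝ)⁻¹)^N + ((2:ℝ)⁻¹)^N)) ?_ ?_
    · intro n m N hn hm
      rw [dist_eq_norm]
      refine (hkey ↑x (sfin x n) (sfin x m)).trans ?_
      have p1 : ‖(↑(sfin x n) : Z) - ↑x‖ ≤ ((2:ℝ)⁻¹)^N :=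
        (hs x n).le.trans (pow_le_pow_of_le_one (by norm_num) (by norm_num) hn)
      have p2 : ‖(↑(sfin x m) : Z) - ↑x‖ ≤ ((2:ℝ)⁻¹)^N :=
        (hs x m).le.trans (pow_le_pow_of_le_one (by norm_num) (by norm_num) hm)
      exact mul_le_mul_of_nonneg_left (add_le_add p1 p2) hCK0
    · have := ((h2pow.add h2pow).const_mul (C + K))
      simpa using this
  have hlim0 := fun x => cauchySeq_tendsto_of_complete (hcauchy x)
  choose Lf hLf using hlim0
  have hconv : ∀ (x : W) (w : ℕ → W₀) (δ : ℕ → ℝ),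
      (∀ k, ‖(↑(w k) : Z) - ↑x‖ ≤ δ k) → Tendsto δ atTop (𝓝 0) →
      Tendsto (fun k => L₀ (w k) - F (↑(w k) - ↑x)) atTop (𝓝 (Lf x)) := by
    intro x w δ hδ hδ0
    have hdiff : ∀ k, ‖(L₀ (w k) - F (↑(w k) - ↑x)) - v x k‖
        ≤ (C + K) * (δ k + ((2:ℝ)⁻¹)^k) := by
      intro k
      refine (hkey ↑x (w k) (sfin x k)).trans ?_
      exact mul_le_mul_of_nonneg_left (add_le_add (hδ k) (hs x k).le) hCK0
    have h0 : Tendsto (fun k => (L₀ (w k) - F (↑(w k) - ↑x)) - v x k) atTop (𝓝 0) := by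
      refine squeeze_zero_norm hdiff ?_
      have := (hδ0.add h2pow).const_mul (C + K)
      simpa using this
    have := h0.add (hLf x)
    simpa using this
  have hadd : ∀ x x' : W, Lf (x + x') = Lf x + Lf x' := by
    intro x x'
    have h1 : Tendsto (fun k => L₀ (sfin x k + sfin x' k)
        - F (↑(sfin x k + sfin x' k) - ↑(x + x'))) atTop (𝓝 (Lf (x + x'))) := by
      refine hconv (x + x') _ (fun k => ((2:ℝ)⁻¹)^k + ((2:ℝ)⁻¹)^k) (fun k => ?_)
        (by simpa using h2pow.add h2pow)
      have e : (↑(sfin x k + sfin x' k) : Z) - ↑(x + x')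
          = ((↑(sfin x k) : Z) - ↑x) + ((↑(sfin x' k) : Z) - ↑x') := by
        push_cast
        abel
      rw [e]
      exact (norm_add_le _ _).trans (add_le_add (hs x k).le (hs x' k).le)
    have hd2 : ∀ k, ‖(L₀ (sfin x k + sfin x' k) - F (↑(sfin x k + sfin x' k) - ↑(x + x')))
        - (v x k + v x' k)‖ ≤ K * (((2:ℝ)⁻¹)^k + ((2:ℝ)⁻¹)^k) := by
      intro k
      have e : (↑(sfin x k + sfin x' k) : Z) - ↑(x + x')
          = ((↑(sfin x k) : Z) - ↑x) + ((↑(sfin x' k) : Z) - ↑x') := by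
        push_cast; abel
      set u1 := (↑(sfin x k) : Z) - ↑x
      set u2 := (↑(sfin x' k) : Z) - ↑x'
      have e2 : (L₀ (sfin x k + sfin x' k) - F (↑(sfin x k + sfin x' k) - ↑(x + x')))
          - (v x k + v x' k) = -(F (u1 + u2) - F u1 - F u2) := by
        rw [e, map_add]
        simp only [v]
        abel
      rw [e2, norm_neg]
      refine (hK u1 u2).trans ?_
      have b1 : ‖u1‖ ≤ ((2:ℝ)⁻¹)^k := (hs x k).le
      have b2 : ‖u2‖ ≤ ((2:ℝ)⁻¹)^k := (hs x' k).le
      exact mul_le_mul_of_nonneg_left (add_le_add b1 b2) hK0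
    have h0 : Tendsto (fun k => (L₀ (sfin x k + sfin x' k)
        - F (↑(sfin x k + sfin x' k) - ↑(x + x'))) - (v x k + v x' k)) atTop (𝓝 0) := by
      refine squeeze_zero_norm hd2 ?_
      have := (h2pow.add h2pow).const_mul K
      simpa using this
    have h2 : Tendsto (fun k => L₀ (sfin x k + sfin x' k)
        - F (↑(sfin x k + sfin x' k) - ↑(x + x'))) atTop (𝓝 (Lf x + Lf x')) := by
      have := h0.add ((hLf x).add (hLf x'))
      simpa using this
    exact tendsto_nhds_unique h1 h2
  have hsmul : ∀ (c : ℝ) (x : W), Lf (c • x) = c • Lf x := by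
    intro c x
    have h1 : Tendsto (fun k => L₀ (c • sfin x k) - F (↑(c • sfin x k) - ↑(c • x)))
        atTop (𝓝 (Lf (c • x))) := by
      refine hconv (c • x) _ (fun k => |c| * ((2:ℝ)⁻¹)^k) (fun k => ?_)
        (by simpa using h2pow.const_mul |c|)
      have e : (↑(c • sfin x k) : Z) - ↑(c • x) = c • ((↑(sfin x k) : Z) - ↑x) := by
        push_cast; rw [smul_sub]
      rw [e, norm_smul, Real.norm_eq_abs]
      exact mul_le_mul_of_nonneg_left (hs x k).le (abs_nonneg c)
    have h2 : (fun k => L₀ (c • sfin x k) - F (↑(c • sfin x k) - ↑(c • x)))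
        = fun k => c • v x k := by
      funext k
      have e : (↑(c • sfin x k) : Z) - ↑(c • x) = c • ((↑(sfin x k) : Z) - ↑x) := by
        push_cast; rw [smul_sub]
      rw [e, map_smul, hhom]
      simp only [v, smul_sub]
    rw [h2] at h1
    exact tendsto_nhds_unique h1 ((hLf x).const_smul c)
  refine ⟨{ toFun := Lf, map_add' := hadd, map_smul' := hsmul }, K + C, fun x => ?_⟩
  have h3 : Tendsto (fun k => ‖F ↑x - v x k‖) atTop (𝓝 ‖F ↑x - Lf x‖) :=
    (tendsto_const_nhds.sub (hLf x)).norm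
  have h4 : Tendsto (fun k => K * (‖(x : Z)‖ + ((2:ℝ)⁻¹)^k) + C * (‖(x : Z)‖ + ((2:ℝ)⁻¹)^k))
      atTop (𝓝 (K * (‖(x : Z)‖ + 0) + C * (‖(x : Z)‖ + 0))) :=
    ((tendsto_const_nhds.add h2pow).const_mul K).add
      ((tendsto_const_nhds.add h2pow).const_mul C)
  have h5 : ∀ k, ‖F ↑x - v x k‖
      ≤ K * (‖(x : Z)‖ + ((2:ℝ)⁻¹)^k) + C * (‖(x : Z)‖ + ((2:ℝ)⁻¹)^k) := by
    intro k
    set u := (↑(sfin x k) : Z) - ↑x with hu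
    have e : F ↑x - v x k = (F ↑x + F u - F (↑x + u)) + (F ↑(sfin x k) - L₀ (sfin x k)) := by
      have e2 : (↑x : Z) + u = ↑(sfin x k) := by rw [hu]; abel
      rw [e2]
      simp only [v]
      abel
    have hb1 : ‖F ↑x + F u - F (↑x + u)‖ ≤ K * (‖(x : Z)‖ + ‖u‖) := by
      rw [← norm_neg]
      have e3 : -(F ↑x + F u - F (↑x + u)) = F (↑x + u) - F ↑x - F u := by abel
      rw [e3]
      exact hK _ _
    have hb2 : ‖F ↑(sfin x k) - L₀ (sfin x k)‖ ≤ C * ‖(↑(sfin x k) : Z)‖ := hC _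
    have hb3 : ‖(↑(sfin x k) : Z)‖ ≤ ‖(x : Z)‖ + ‖u‖ := by
      have e4 : (↑(sfin x k) : Z) = ↑x + u := by rw [hu]; abel
      rw [e4]
      exact norm_add_le _ _
    have hu' : ‖u‖ ≤ ((2:ℝ)⁻¹)^k := (hs x k).le
    rw [e]
    refine (norm_add_le _ _).trans ?_
    nlinarith [norm_nonneg u, norm_nonneg (x : Z)]
  have hfin := le_of_tendsto_of_tendsto' h3 h4 h5
  calc ‖F ↑x - Lf x‖ ≤ K * (‖(x : Z)‖ + 0) + C * (‖(x : Z)‖ + 0) := hfin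
    _ = (K + C) * ‖(x : Z)‖ := by ring

end Aux

set_option maxHeartbeats 1600000 in
set_option maxRecDepth 4000 in
/-- for `1 ≤ p < ∞` and a quasi-linear map `F : ℓ_p → Y` into a Banach
space `Y`, `F` is singular (trivial on no infinite-dimensional closed subspace of `ℓ_p`)
iff `F` is disjointly singular (trivial on no closed linear span of a sequence of nonzero
pairwise disjointly supported vectors). -/
theorem stmt15 (p : ℝ≥0∞) [Fact (1 ≤ p)] (hptop : p ≠ ⊤)
    {Y : Type*} [NormedAddCommGroup Y] [NormedSpace ℝ Y] [CompleteSpace Y]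
    (F : lp (fun _ : ℕ => ℝ) p → Y)
    -- `F` is homogeneous
    (hhom : ∀ (c : ℝ) (x : lp (fun _ : ℕ => ℝ) p), F (c • x) = c • F x)
    -- `F` is quasi-linear
    (hql : ∃ M : ℝ, ∀ u v : lp (fun _ : ℕ => ℝ) p,
      ‖F (u + v) - F u - F v‖ ≤ M * (‖u‖ + ‖v‖)) :
    -- `F` singular ↔ `F` disjointly singular
    (¬ ∃ M : Submodule ℝ (lp (fun _ : ℕ => ℝ) p),
        IsClosed (M : Set (lp (fun _ : ℕ => ℝ) p)) ∧ ¬ FiniteDimensional ℝ M ∧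
        ∃ (L : M →ₗ[ℝ] Y) (C : ℝ),
          ∀ x : M, ‖F ↑x - L x‖ ≤ C * ‖(x : lp (fun _ : ℕ => ℝ) p)‖)
    ↔
    (¬ ∃ u : ℕ → lp (fun _ : ℕ => ℝ) p, (∀ n, u n ≠ 0) ∧
        (∀ m n, m ≠ n → ∀ k, u m k = 0 ∨ u n k = 0) ∧
        ∃ (L : ((Submodule.span ℝ (Set.range u)).topologicalClosure) →ₗ[ℝ] Y) (C : ℝ),
          ∀ x : ((Submodule.span ℝ (Set.range u)).topologicalClosure),
            ‖F ↑x - L x‖ ≤ C * ‖(x : lp (fun _ : ℕ => ℝ) p)‖) := by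
  obtain ⟨M₀, hM₀⟩ := hql
  have hK0 : (0:ℝ) ≤ |M₀| := abs_nonneg _
  have hK : ∀ u v : lp (fun _ : ℕ => ℝ) p,
      ‖F (u + v) - F u - F v‖ ≤ |M₀| * (‖u‖ + ‖v‖) := fun u v =>
    (hM₀ u v).trans (mul_le_mul_of_nonneg_right (le_abs_self _)
      (by positivity))
  have hF0 : F 0 = 0 := by simpa using hhom 0 0
  have hp0 : 0 < p.toReal :=
    ENNReal.toReal_pos (zero_lt_one.trans_le (Fact.out : 1 ≤ p)).ne' hptop
  constructor
  · -- singular → disjointly singular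
    intro hsing
    rintro ⟨u, hne, hdisj, L, C, hC⟩
    exact hsing ⟨(Submodule.span ℝ (Set.range u)).topologicalClosure,
      Submodule.isClosed_topologicalClosure _,
      aux_infdim p u (aux_indep p u hne hdisj), L, C, hC⟩
  · -- disjointly singular → singular
    intro hdis
    rintro ⟨M, hMcl, hMinf, L, C, hC⟩
    apply hdis
    set K := |M₀| with hKdef
    set Cabs := |C| with hCabsdef
    have hCabs0 : (0:ℝ) ≤ Cabs := abs_nonneg _
    have hC' : ∀ x : M, ‖F ↑x - L x‖ ≤ Cabs * ‖(x : lp (fun _ : ℕ => ℝ) p)‖ := fun x =>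
      (hC x).trans (mul_le_mul_of_nonneg_right (le_abs_self _) (norm_nonneg _))
    -- choose unit vectors supported beyond any given coordinate
    choose xp hxpM hxpnorm hxpzero using aux_ker p M hMinf
    -- choose truncation points
    have htail : ∀ (m n : ℕ), ∃ N, m + 1 ≤ N ∧
        ‖xp m - ∑ i ∈ Finset.range N, lp.single p i (xp m i)‖ ≤ ((4:ℝ)⁻¹)^(n+2) := by
      intro m n
      obtain ⟨N, hN1, hN2⟩ := aux_tail p hptop (xp m) (m + 1) (((4:ℝ)⁻¹)^(n+2)) (by positivity)
      exact ⟨N, hN1, hN2⟩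
    choose cut hcut1 hcut2 using htail
    -- the sequence of cut points
    set Nn : ℕ → ℕ := fun n => Nat.rec 0 (fun k acc => cut acc k) n with hNndef
    have hNnsucc : ∀ n, Nn (n + 1) = cut (Nn n) n := fun n => rfl
    have hNnlt : ∀ n, Nn n < Nn (n + 1) := by
      intro n
      have := hcut1 (Nn n) n
      rw [hNnsucc]
      omega
    have hNmono : StrictMono Nn := strictMono_nat_of_lt_succ hNnlt
    set x : ℕ → lp (fun _ : ℕ => ℝ) p := fun n => xp (Nn n) with hxdef
    set y : ℕ → lp (fun _ : ℕ => ℝ) p :=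
      fun n => ∑ i ∈ Finset.range (Nn (n + 1)), lp.single p i (x n i) with hydef
    set d : ℕ → lp (fun _ : ℕ => ℝ) p := fun n => x n - y n with hddef
    have hxM : ∀ n, x n ∈ M := fun n => hxpM (Nn n)
    have hxnorm : ∀ n, ‖x n‖ = 1 := fun n => hxpnorm (Nn n)
    have hd : ∀ n, ‖d n‖ ≤ ((4:ℝ)⁻¹)^(n+2) := fun n => hcut2 (Nn n) n
    have hxy : ∀ n, x n = y n + d n := fun n => by simp [hddef]
    -- coordinates of y
    have hyk : ∀ n k, (y n) k = if k < Nn (n + 1) then (x n) k else 0 := by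
      intro n k
      rw [hydef]
      exact aux_trunc_apply p (x n) (Nn (n+1)) k
    have hyklow : ∀ n k, k < Nn n → (y n) k = 0 := by
      intro n k hk
      rw [hyk]
      split
      · exact hxpzero (Nn n) k hk
      · rfl
    have hykhigh : ∀ n k, Nn (n + 1) ≤ k → (y n) k = 0 := by
      intro n k hk
      rw [hyk]
      split
      · omega
      · rfl
    have hydisj : ∀ m n, m ≠ n → ∀ k, (y m) k = 0 ∨ (y n) k = 0 := by
      have hcase : ∀ m n, m < n → ∀ k, (y m) k = 0 ∨ (y n) k = 0 := by
        intro m n hmn k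
        by_cases hk : k < Nn n
        · exact Or.inr (hyklow n k hk)
        · left
          apply hykhigh m k
          have : Nn (m + 1) ≤ Nn n := hNmono.monotone (by omega : m + 1 ≤ n)
          omega
      intro m n hmn k
      rcases lt_or_gt_of_ne hmn with h | h
      · exact hcase m n h k
      · exact (hcase n m h k).symm
    have hynorm : ∀ n, (1:ℝ)/2 ≤ ‖y n‖ := by
      intro n
      have h1 : ‖x n‖ - ‖y n‖ ≤ ‖x n - y n‖ := norm_sub_norm_le _ _
      have h2 : ‖x n - y n‖ ≤ ((4:ℝ)⁻¹)^(n+2) := hd n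
      have h3 : ((4:ℝ)⁻¹)^(n+2) ≤ ((4:ℝ)⁻¹)^2 :=
        pow_le_pow_of_le_one (by norm_num) (by norm_num) (by omega)
      have := hxnorm n
      norm_num at h3 ⊢
      linarith
    have hyne : ∀ n, y n ≠ 0 := by
      intro n h
      have := hynorm n
      rw [h, norm_zero] at this
      linarith
    have hli : LinearIndependent ℝ y := aux_indep p y hyne hydisj
    -- the linear map on the span
    set b := Module.Basis.span hli with hbdef
    set val : ℕ → Y := fun n => L ⟨x n, hxM n⟩ - F (d n) with hvaldef
    set L₀ : (Submodule.span ℝ (Set.range y)) →ₗ[ℝ] Y := b.constr ℝ val with hL₀def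
    have hyspan : ∀ n, y n ∈ Submodule.span ℝ (Set.range y) :=
      fun n => Submodule.subset_span (Set.mem_range_self n)
    have hL₀y : ∀ n, L₀ ⟨y n, hyspan n⟩ = val n := by
      intro n
      have hb : b n = ⟨y n, hyspan n⟩ := Module.Basis.span_apply hli n
      rw [hL₀def, ← hb, Module.Basis.constr_basis]
    -- the estimate on the span
    have hL₀bound : ∀ w : Submodule.span ℝ (Set.range y),
        ‖F ↑w - L₀ w‖ ≤ (3 * K + 2 * Cabs) * ‖(w : lp (fun _ : ℕ => ℝ) p)‖ := by
      intro w
      obtain ⟨c, hc⟩ := (Finsupp.mem_span_range_iff_exists_finsupp).mp w.2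
      set N := c.support.sup id + 1 with hNdef
      have hsupp : c.support ⊆ Finset.range N := fun i hi =>
        Finset.mem_range.mpr (Nat.lt_succ_of_le (Finset.le_sup (f := id) hi))
      have hw : (w : lp (fun _ : ℕ => ℝ) p) = ∑ n ∈ Finset.range N, c n • y n := by
        rw [← hc]
        exact Finsupp.sum_of_support_subset c hsupp _ (fun i _ => by simp)
      -- coefficient bound
      have hcoef : ∀ n, |c n| ≤ 2 * ‖(w : lp (fun _ : ℕ => ℝ) p)‖ := by
        intro n
        by_cases hn : n ∈ Finset.range N
        · have h1 : ‖c n • y n‖ ≤ ‖(w : lp (fun _ : ℕ => ℝ) p)‖ := by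
            rw [hw]
            exact aux_coeff p hp0 y hydisj (Finset.range N) (fun m => c m) n hn
          rw [norm_smul, Real.norm_eq_abs] at h1
          have h2 := hynorm n
          nlinarith [abs_nonneg (c n)]
        · have : c n = 0 := Finsupp.notMem_support_iff.mp (fun hc' => hn (hsupp hc'))
          rw [this]
          simp [norm_nonneg]
      -- the difference vectors
      set z : ℕ → lp (fun _ : ℕ => ℝ) p := fun n => c n • d n with hzdef
      have hz : ∀ n, ‖z n‖ ≤ (‖(w : lp (fun _ : ℕ => ℝ) p)‖ / 8) * ((4:ℝ)⁻¹)^n := by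
        intro n
        rw [hzdef]
        simp only
        rw [norm_smul, Real.norm_eq_abs]
        have h1 := hcoef n
        have h2 := hd n
        have h3 : ((4:ℝ)⁻¹)^(n+2) = ((4:ℝ)⁻¹)^n * (1/16) := by
          rw [pow_add]; norm_num
        rw [h3] at h2
        have h4 : (0:ℝ) ≤ ((4:ℝ)⁻¹)^n := by positivity
        nlinarith [abs_nonneg (c n), norm_nonneg (d n), norm_nonneg (w : lp (fun _ : ℕ => ℝ) p)]
      set e := ∑ n ∈ Finset.range N, z n with hedef
      have he : ‖e‖ ≤ ‖(w : lp (fun _ : ℕ => ℝ) p)‖ := by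
        have h1 : ‖e‖ ≤ ∑ n ∈ Finset.range N, ‖z n‖ := norm_sum_le _ _
        have h2 : ∑ n ∈ Finset.range N, ‖z n‖
            ≤ ∑ n ∈ Finset.range N, (‖(w : lp (fun _ : ℕ => ℝ) p)‖ / 8) * ((4:ℝ)⁻¹)^n :=
          Finset.sum_le_sum (fun n _ => hz n)
        have h3 : ∑ n ∈ Finset.range N, ((4:ℝ)⁻¹)^n ≤ (4/3) * 1 := by
          have h := aux_geom N 0
          rw [Nat.zero_add, pow_zero] at h
          rw [Finset.range_eq_Ico]
          exact h
        rw [← Finset.mul_sum] at h2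
        have h4 : (0:ℝ) ≤ ‖(w : lp (fun _ : ℕ => ℝ) p)‖ := norm_nonneg _
        nlinarith
      -- telescoping bound
      have hT3 : ‖F e - ∑ n ∈ Finset.range N, c n • F (d n)‖
          ≤ K * ‖(w : lp (fun _ : ℕ => ℝ) p)‖ := by
        have h1 := aux_tele F hF0 K hK0 hK (‖(w : lp (fun _ : ℕ => ℝ) p)‖ / 8)
          (by positivity) z hz N 0
        simp only [Nat.zero_add, pow_zero, mul_one] at h1
        have h2 : ∑ k ∈ Finset.range N, F (z k) = ∑ n ∈ Finset.range N, c n • F (d n) :=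
          Finset.sum_congr rfl (fun n _ => hhom (c n) (d n))
        rw [← Finset.range_eq_Ico] at h1
        rw [h2, ← hedef] at h1
        refine h1.trans ?_
        nlinarith [norm_nonneg (w : lp (fun _ : ℕ => ℝ) p)]
      -- the element of M
      set TwM : M := ∑ n ∈ Finset.range N, c n • (⟨x n, hxM n⟩ : M) with hTwMdef
      have hTw : ((TwM : lp (fun _ : ℕ => ℝ) p)) = (w : lp (fun _ : ℕ => ℝ) p) + e := by
        have h1 : ((TwM : lp (fun _ : ℕ => ℝ) p)) = ∑ n ∈ Finset.range N, c n • x n := by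
          rw [hTwMdef]
          push_cast
          rfl
        rw [h1, hw, hedef, ← Finset.sum_add_distrib]
        refine Finset.sum_congr rfl (fun n _ => ?_)
        rw [hzdef]
        simp only
        rw [← smul_add, ← hxy n]
      have hwsub : w = ∑ n ∈ Finset.range N, c n • (⟨y n, hyspan n⟩ :
          Submodule.span ℝ (Set.range y)) := by
        apply Subtype.coe_injective
        push_cast
        exact hw
      have hL0w : L₀ w = L TwM - ∑ n ∈ Finset.range N, c n • F (d n) := by
        rw [hwsub, map_sum]
        simp_rw [map_smul, hL₀y, hvaldef]
        rw [hTwMdef, map_sum]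
        simp_rw [map_smul]
        rw [← Finset.sum_sub_distrib]
        refine Finset.sum_congr rfl (fun n _ => ?_)
        rw [smul_sub]
      have hkeyid : F ↑w - L₀ w
          = (F ↑w + F e - F ((w : lp (fun _ : ℕ => ℝ) p) + e))
            + (F ↑TwM - L TwM)
            + ((∑ n ∈ Finset.range N, c n • F (d n)) - F e) := by
        rw [hL0w]
        have : F (↑TwM : lp (fun _ : ℕ => ℝ) p) = F ((w : lp (fun _ : ℕ => ℝ) p) + e) := by
          rw [hTw]
        rw [this]
        abel
      have hb1 : ‖F ↑w + F e - F ((w : lp (fun _ : ℕ => ℝ) p) + e)‖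
          ≤ K * (‖(w : lp (fun _ : ℕ => ℝ) p)‖ + ‖e‖) := by
        rw [← norm_neg]
        have e3 : -(F ↑w + F e - F ((w : lp (fun _ : ℕ => ℝ) p) + e))
            = F ((w : lp (fun _ : ℕ => ℝ) p) + e) - F ↑w - F e := by abel
        rw [e3]
        exact hK _ _
      have hb2 : ‖F ↑TwM - L TwM‖ ≤ Cabs * (‖(w : lp (fun _ : ℕ => ℝ) p)‖ + ‖e‖) := by
        refine (hC' TwM).trans ?_
        have : ‖(TwM : lp (fun _ : ℕ => ℝ) p)‖ ≤ ‖(w : lp (fun _ : ℕ => ℝ) p)‖ + ‖e‖ := by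
          rw [hTw]
          exact norm_add_le _ _
        exact mul_le_mul_of_nonneg_left this hCabs0
      have hb3 : ‖(∑ n ∈ Finset.range N, c n • F (d n)) - F e‖
          ≤ K * ‖(w : lp (fun _ : ℕ => ℝ) p)‖ := by
        rw [norm_sub_rev]
        exact hT3
      rw [hkeyid]
      refine ((norm_add_le _ _).trans (add_le_add_left (norm_add_le _ _) _)).trans ?_
      have hwn : (0:ℝ) ≤ ‖(w : lp (fun _ : ℕ => ℝ) p)‖ := norm_nonneg _
      nlinarith [he, hb1, hb2, hb3, norm_nonneg e]
    obtain ⟨L₁, C₁, hL₁⟩ := aux_dense F hhom K hK0 hK (Submodule.span ℝ (Set.range y)) L₀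
      (3 * K + 2 * Cabs) (by positivity) hL₀bound
    exact ⟨y, hyne, hydisj, L₁, C₁, hL₁⟩
end

section
/- Let 1 ≤ p < ∞, let Y be a Banach space, let F : ℓ_p → Y be a quasi-linear map, and let (u_n) be a sequence of nonzero pairwise disjointly supported vectors in ℓ_p. If there is a constant K such that for all n and all scalars λ₁,…,λ_n one has ‖F(Σⱼλⱼuⱼ) − ΣⱼλⱼF(uⱼ)‖ ≤ K‖Σⱼλⱼuⱼ‖_p, then F is trivial on the closed linear span of (u_n); in particular, F is not singular. -/
open scoped ENNReal

section Aux

variable {p : ℝ≥0∞} [Fact (1 ≤ p)]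

/-- nonzero pairwise disjointly supported vectors are linearly independent. -/
lemma aux_li (u : ℕ → lp (fun _ : ℕ => ℝ) p) (hne : ∀ n, u n ≠ 0)
    (hdisj : ∀ m n, m ≠ n → ∀ k, u m k = 0 ∨ u n k = 0) :
    LinearIndependent ℝ u := by
  rw [linearIndependent_iff']
  intro s g hg i hi
  have h0 : ∃ k, u i k ≠ 0 := by
    by_contra h
    push_neg at h
    exact hne i (lp.ext (funext h))
  obtain ⟨k, hk⟩ := h0
  have := congrArg (fun z : lp (fun _ : ℕ => ℝ) p => z k) hg
  simp only [lp.coeFn_sum, Finset.sum_apply] at this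
  have hsum : (∑ j ∈ s, (g j • u j) k) = g i * u i k := by
    rw [Finset.sum_eq_single i]
    · simp [lp.coeFn_smul]
    · intro j hjs hji
      rcases hdisj j i hji k with h | h
      · simp [lp.coeFn_smul, h]
      · exact absurd h hk
    · exact fun h => absurd hi h
  rw [hsum] at this
  have : g i * u i k = 0 := by simpa using this
  exact (mul_eq_zero.1 this).resolve_right hk

end Aux

set_option maxHeartbeats 1000000 in
set_option synthInstance.maxHeartbeats 200000 in
/-- for `1 ≤ p < ∞`, a quasi-linear map `F : ℓ_p → Y` and a sequence
`(u_n)` of nonzero pairwise disjointly supported vectors in `ℓ_p`: if there is `K` with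
`‖F(Σλⱼuⱼ) − ΣλⱼF(uⱼ)‖ ≤ K‖Σλⱼuⱼ‖_p` for all finite scalar families, then `F` is trivial
on the closed linear span of `(u_n)`; in particular `F` is not singular. -/
theorem stmt16 (p : ℝ≥0∞) [Fact (1 ≤ p)] (hptop : p ≠ ⊤)
    {Y : Type*} [NormedAddCommGroup Y] [NormedSpace ℝ Y] [CompleteSpace Y]
    (F : lp (fun _ : ℕ => ℝ) p → Y)
    -- `F` is homogeneous
    (hhom : ∀ (c : ℝ) (x : lp (fun _ : ℕ => ℝ) p), F (c • x) = c • F x)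
    -- `F` is quasi-linear
    (hql : ∃ M : ℝ, ∀ u v : lp (fun _ : ℕ => ℝ) p,
      ‖F (u + v) - F u - F v‖ ≤ M * (‖u‖ + ‖v‖))
    (u : ℕ → lp (fun _ : ℕ => ℝ) p) (hne : ∀ n, u n ≠ 0)
    (hdisj : ∀ m n, m ≠ n → ∀ k, u m k = 0 ∨ u n k = 0)
    (K : ℝ)
    (hest : ∀ (n : ℕ) (lam : Fin n → ℝ),
      ‖F (∑ j, lam j • u j) - ∑ j, lam j • F (u j)‖ ≤ K * ‖∑ j, lam j • u j‖) :
    -- `F` is trivial on the closed linear span of `(u_n)` …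
    (∃ (L : ((Submodule.span ℝ (Set.range u)).topologicalClosure) →ₗ[ℝ] Y) (C : ℝ),
      ∀ x : ((Submodule.span ℝ (Set.range u)).topologicalClosure),
        ‖F ↑x - L x‖ ≤ C * ‖(x : lp (fun _ : ℕ => ℝ) p)‖) ∧
    -- … and in particular `F` is not singular
    (∃ M : Submodule ℝ (lp (fun _ : ℕ => ℝ) p),
      IsClosed (M : Set (lp (fun _ : ℕ => ℝ) p)) ∧ ¬ FiniteDimensional ℝ M ∧
      ∃ (L : M →ₗ[ℝ] Y) (C : ℝ),
        ∀ x : M, ‖F ↑x - L x‖ ≤ C * ‖(x : lp (fun _ : ℕ => ℝ) p)‖) := by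
  classical
  obtain ⟨M, hM⟩ := hql
  have hF0 : F 0 = 0 := by simpa using hhom 0 0
  have hu0 : (0:ℝ) < ‖u 0‖ := norm_pos_iff.2 (hne 0)
  have hM0 : 0 ≤ M := by
    have := hM (u 0) 0
    simp [hF0] at this
    nlinarith
  have hK0 : 0 ≤ K := by
    have := hest 1 (fun _ => 1)
    simp at this
    nlinarith
  set D := Submodule.span ℝ (Set.range u) with hDdef
  have hli : LinearIndependent ℝ u := aux_li u hne hdisj
  let b : Module.Basis ℕ ℝ D := Module.Basis.span hli
  let L0 : D →ₗ[ℝ] Y := b.constr ℝ (fun n => F (u n))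
  -- the key estimate on the span
  have key : ∀ (z : lp (fun _ : ℕ => ℝ) p) (hz : z ∈ D),
      ‖F z - L0 ⟨z, hz⟩‖ ≤ K * ‖z‖ := by
    intro z hz
    have hz' := hz
    rw [hDdef, Finsupp.mem_span_range_iff_exists_finsupp] at hz'
    obtain ⟨c, hc⟩ := hz'
    set n := (c.support.sup id) + 1 with hn
    have hsub : c.support ⊆ Finset.range n := by
      intro j hj
      exact Finset.mem_range.2 (Nat.lt_succ_of_le (Finset.le_sup (f := id) hj))
    have hzsum : (∑ j : Fin n, c j • u j) = z := by
      rw [Fin.sum_univ_eq_sum_range (fun j => c j • u j) n]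
      rw [← hc, Finsupp.sum]
      refine (Finset.sum_subset hsub ?_).symm
      intro j _ hj
      simp [Finsupp.notMem_support_iff.1 hj]
    have hmem : ∀ j : ℕ, u j ∈ D := fun j =>
      Submodule.subset_span (Set.mem_range_self j)
    have hrep : (⟨z, hz⟩ : D) = ∑ j : Fin n, c j • b j := by
      apply Subtype.ext
      push_cast
      rw [← hzsum]
      refine Finset.sum_congr rfl fun j _ => ?_
      congr 1
      exact (congrArg Subtype.val (Module.Basis.span_apply hli j)).symm
    have hL : L0 ⟨z, hz⟩ = ∑ j : Fin n, c j • F (u j) := by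
      rw [hrep, map_sum]
      refine Finset.sum_congr rfl fun j _ => ?_
      rw [map_smul]
      congr 1
      exact Module.Basis.constr_basis b ℝ (fun n => F (u n)) j
    have := hest n (fun j => c j)
    rw [hzsum] at this
    rw [hL]
    exact this
  -- G : an extension of L0 to all of lp by zero (as a bare function)
  let G : lp (fun _ : ℕ => ℝ) p → Y := fun z => if h : z ∈ D then L0 ⟨z, h⟩ else 0
  have hGD : ∀ (z : lp (fun _ : ℕ => ℝ) p) (h : z ∈ D), G z = L0 ⟨z, h⟩ :=
    fun z h => dif_pos h
  have hGadd : ∀ z w, z ∈ D → w ∈ D → G (z + w) = G z + G w := by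
    intro z w hz hw
    rw [hGD z hz, hGD w hw, hGD (z + w) (Submodule.add_mem D hz hw), ← map_add]
    congr 1
  have hGsmul : ∀ (c : ℝ) z, z ∈ D → G (c • z) = c • G z := by
    intro c z hz
    rw [hGD z hz, hGD (c • z) (Submodule.smul_mem D c hz), ← map_smul]
    congr 1
  have hGkey : ∀ z, z ∈ D → ‖F z - G z‖ ≤ K * ‖z‖ := by
    intro z hz
    rw [hGD z hz]; exact key z hz
  -- approximating sequences
  have hchoice : ∀ x : lp (fun _ : ℕ => ℝ) p, x ∈ closure (D : Set (lp (fun _ : ℕ => ℝ) p)) →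
      ∃ d : ℕ → lp (fun _ : ℕ => ℝ) p, (∀ n, d n ∈ D) ∧
        ∀ n, ‖x - d n‖ ≤ (1/2 : ℝ) ^ n := by
    intro x hx
    have h := fun n : ℕ => Metric.mem_closure_iff.1 hx ((1/2 : ℝ) ^ n) (by positivity)
    choose d hd1 hd2 using h
    exact ⟨d, hd1, fun n => by
      rw [← dist_eq_norm]; exact (hd2 n).le⟩
  set W := D.topologicalClosure with hWdef
  have hWc : ∀ x : W, (x : lp (fun _ : ℕ => ℝ) p) ∈
      closure (D : Set (lp (fun _ : ℕ => ℝ) p)) := by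
    intro x
    have := x.2
    rwa [hWdef, ← Submodule.topologicalClosure_coe] at *
  choose d hd1 hd2 using fun x : W => hchoice x (hWc x)
  have hdlim : ∀ x : W, Filter.Tendsto (d x) Filter.atTop (nhds (x : lp (fun _ : ℕ => ℝ) p)) := by
    intro x
    rw [tendsto_iff_norm_sub_tendsto_zero]
    refine squeeze_zero_norm (a := fun n => (1/2:ℝ)^n) (fun n => ?_) ?_
    · rw [norm_norm, ← norm_neg, neg_sub]; exact hd2 x n
    · exact tendsto_pow_atTop_nhds_zero_of_lt_one (by norm_num) (by norm_num)
  -- the approximating sequence of vectors in Y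
  let a : W → ℕ → Y := fun x n => G (d x n) + F ((x : lp (fun _ : ℕ => ℝ) p) - d x n)
  have hcauchy : ∀ x : W, CauchySeq (a x) := by
    intro x
    apply cauchySeq_of_le_tendsto_0 (fun N => (2*K + 3*M) * (1/2:ℝ)^N)
    · intro m n N hm hn
      rw [dist_eq_norm]
      set w := d x m - d x n with hw
      have hwD : w ∈ D := Submodule.sub_mem D (hd1 x m) (hd1 x n)
      have heq : a x m - a x n =
          (G w - F w) + (F w + F ((x:lp (fun _ : ℕ => ℝ) p) - d x m)
            - F ((x:lp (fun _ : ℕ => ℝ) p) - d x n)) := by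
        have hge : G (d x m) = G w + G (d x n) := by
          rw [← hGadd w (d x n) hwD (hd1 x n)]
          congr 1
          rw [hw]; abel
        simp only [a]
        rw [hge]; abel
      have hq : ‖F ((x:lp (fun _ : ℕ => ℝ) p) - d x n)
          - F ((x:lp (fun _ : ℕ => ℝ) p) - d x m) - F w‖
          ≤ M * (‖(x:lp (fun _ : ℕ => ℝ) p) - d x m‖ + ‖w‖) := by
        have := hM ((x:lp (fun _ : ℕ => ℝ) p) - d x m) w
        have hxw : ((x:lp (fun _ : ℕ => ℝ) p) - d x m) + w
            = (x:lp (fun _ : ℕ => ℝ) p) - d x n := by rw [hw]; abel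
        rwa [hxw] at this
      have hWn : ‖w‖ ≤ 2 * (1/2:ℝ)^N := by
        have h1 : ‖w‖ ≤ ‖(x:lp (fun _ : ℕ => ℝ) p) - d x n‖
            + ‖(x:lp (fun _ : ℕ => ℝ) p) - d x m‖ := by
          rw [hw]
          calc ‖d x m - d x n‖ = ‖((x:lp (fun _ : ℕ => ℝ) p) - d x n)
              - ((x:lp (fun _ : ℕ => ℝ) p) - d x m)‖ := by congr 1; abel
            _ ≤ _ := norm_sub_le _ _
        have h2 := hd2 x n
        have h3 := hd2 x m
        have h4 : ((1:ℝ)/2)^n ≤ (1/2:ℝ)^N := pow_le_pow_of_le_one (by norm_num) (by norm_num) hn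
        have h5 : ((1:ℝ)/2)^m ≤ (1/2:ℝ)^N := pow_le_pow_of_le_one (by norm_num) (by norm_num) hm
        linarith
      have hxm : ‖(x:lp (fun _ : ℕ => ℝ) p) - d x m‖ ≤ (1/2:ℝ)^N :=
        le_trans (hd2 x m) (pow_le_pow_of_le_one (by norm_num) (by norm_num) hm)
      calc ‖a x m - a x n‖ ≤ ‖G w - F w‖ + ‖F w + F ((x:lp (fun _ : ℕ => ℝ) p) - d x m)
            - F ((x:lp (fun _ : ℕ => ℝ) p) - d x n)‖ := by rw [heq]; exact norm_add_le _ _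
        _ ≤ K * ‖w‖ + M * (‖(x:lp (fun _ : ℕ => ℝ) p) - d x m‖ + ‖w‖) := by
            refine add_le_add ?_ ?_
            · rw [← norm_neg, neg_sub]; exact hGkey w hwD
            · have habel : F w + F ((x:lp (fun _ : ℕ => ℝ) p) - d x m)
                  - F ((x:lp (fun _ : ℕ => ℝ) p) - d x n)
                  = -(F ((x:lp (fun _ : ℕ => ℝ) p) - d x n)
                    - F ((x:lp (fun _ : ℕ => ℝ) p) - d x m) - F w) := by abel
              rw [habel, norm_neg]; exact hq
        _ ≤ K * (2 * (1/2:ℝ)^N) + M * ((1/2:ℝ)^N + 2 * (1/2:ℝ)^N) := by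
            have hwnn : (0:ℝ) ≤ ‖w‖ := norm_nonneg _
            refine add_le_add (mul_le_mul_of_nonneg_left hWn hK0)
              (mul_le_mul_of_nonneg_left (add_le_add hxm hWn) hM0)
        _ = (2*K + 3*M) * (1/2:ℝ)^N := by ring
    · have : Filter.Tendsto (fun N : ℕ => ((1:ℝ)/2)^N) Filter.atTop (nhds 0) :=
        tendsto_pow_atTop_nhds_zero_of_lt_one (by norm_num) (by norm_num)
      simpa using this.const_mul (2*K + 3*M)
  choose Φ hΦ using fun x : W => cauchySeq_tendsto_of_complete (hcauchy x)
  -- the main lemma: any approximating sequence computes Φ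
  have hC : ∀ (x : W) (e : ℕ → lp (fun _ : ℕ => ℝ) p), (∀ n, e n ∈ D) →
      Filter.Tendsto e Filter.atTop (nhds (x : lp (fun _ : ℕ => ℝ) p)) →
      Filter.Tendsto (fun n => G (e n) + F ((x : lp (fun _ : ℕ => ℝ) p) - e n))
        Filter.atTop (nhds (Φ x)) := by
    intro x e he1 he2
    have hdiff : Filter.Tendsto
        (fun n => (G (e n) + F ((x:lp (fun _ : ℕ => ℝ) p) - e n)) - a x n)
        Filter.atTop (nhds 0) := by
      have hwlim : Filter.Tendsto (fun n => e n - d x n) Filter.atTop (nhds 0) := by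
        have h := Filter.Tendsto.sub he2 (hdlim x)
        rwa [sub_self] at h
      refine squeeze_zero_norm (f := fun n =>
        (G (e n) + F ((x:lp (fun _ : ℕ => ℝ) p) - e n)) - a x n)
        (a := fun n => K * ‖e n - d x n‖ +
          M * (‖(x:lp (fun _ : ℕ => ℝ) p) - e n‖ + ‖e n - d x n‖)) (fun n => ?_) ?_
      · set w := e n - d x n with hw
        have hwD : w ∈ D := Submodule.sub_mem D (he1 n) (hd1 x n)
        have heq : (G (e n) + F ((x:lp (fun _ : ℕ => ℝ) p) - e n)) - a x n =
            (G w - F w) + (F w + F ((x:lp (fun _ : ℕ => ℝ) p) - e n)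
              - F ((x:lp (fun _ : ℕ => ℝ) p) - d x n)) := by
          have hge : G (e n) = G w + G (d x n) := by
            rw [← hGadd w (d x n) hwD (hd1 x n)]
            congr 1
            rw [hw]; abel
          simp only [a]
          rw [hge]; abel
        have hq : ‖F ((x:lp (fun _ : ℕ => ℝ) p) - d x n)
            - F ((x:lp (fun _ : ℕ => ℝ) p) - e n) - F w‖
            ≤ M * (‖(x:lp (fun _ : ℕ => ℝ) p) - e n‖ + ‖w‖) := by
          have := hM ((x:lp (fun _ : ℕ => ℝ) p) - e n) w
          have hxw : ((x:lp (fun _ : ℕ => ℝ) p) - e n) + w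
              = (x:lp (fun _ : ℕ => ℝ) p) - d x n := by rw [hw]; abel
          rwa [hxw] at this
        calc ‖(G (e n) + F ((x:lp (fun _ : ℕ => ℝ) p) - e n)) - a x n‖
            ≤ ‖G w - F w‖ + ‖F w + F ((x:lp (fun _ : ℕ => ℝ) p) - e n)
              - F ((x:lp (fun _ : ℕ => ℝ) p) - d x n)‖ := by
              rw [heq]; exact norm_add_le _ _
          _ ≤ K * ‖w‖ + M * (‖(x:lp (fun _ : ℕ => ℝ) p) - e n‖ + ‖w‖) := by
              refine add_le_add ?_ ?_
              · rw [← norm_neg, neg_sub]; exact hGkey w hwD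
              · have habel : F w + F ((x:lp (fun _ : ℕ => ℝ) p) - e n)
                    - F ((x:lp (fun _ : ℕ => ℝ) p) - d x n)
                    = -(F ((x:lp (fun _ : ℕ => ℝ) p) - d x n)
                      - F ((x:lp (fun _ : ℕ => ℝ) p) - e n) - F w) := by abel
                rw [habel, norm_neg]; exact hq
          _ = K * ‖e n - d x n‖ + M * (‖(x:lp (fun _ : ℕ => ℝ) p) - e n‖ + ‖e n - d x n‖) := rfl
      · have h1 : Filter.Tendsto (fun n => ‖e n - d x n‖) Filter.atTop (nhds 0) := by
          simpa using hwlim.norm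
        have h2 : Filter.Tendsto (fun n => ‖(x:lp (fun _ : ℕ => ℝ) p) - e n‖)
            Filter.atTop (nhds 0) := by
          have : Filter.Tendsto (fun n => (x:lp (fun _ : ℕ => ℝ) p) - e n)
              Filter.atTop (nhds 0) := by
            simpa using (he2.const_sub (x:lp (fun _ : ℕ => ℝ) p))
          simpa using this.norm
        have := (h1.const_mul K).add ((h2.add h1).const_mul M)
        simpa using this
    have := (hΦ x).add hdiff
    simp only [add_zero] at this
    convert this using 2 with n
    · abel
  -- linearity of Φ
  have hadd : ∀ x y : W, Φ (x + y) = Φ x + Φ y := by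
    intro x y
    have he1 : ∀ n, d x n + d y n ∈ D := fun n => Submodule.add_mem D (hd1 x n) (hd1 y n)
    have he2 : Filter.Tendsto (fun n => d x n + d y n) Filter.atTop
        (nhds ((x + y : W) : lp (fun _ : ℕ => ℝ) p)) := by
      have := (hdlim x).add (hdlim y)
      simpa using this
    have h1 := hC (x + y) (fun n => d x n + d y n) he1 he2
    have h2 : Filter.Tendsto (fun n => G (d x n + d y n)
        + F (((x + y : W) : lp (fun _ : ℕ => ℝ) p) - (d x n + d y n)))
        Filter.atTop (nhds (Φ x + Φ y)) := by
      have hsplit : Filter.Tendsto (fun n => (a x n + a y n) +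
          (F (((x + y : W) : lp (fun _ : ℕ => ℝ) p) - (d x n + d y n))
            - F ((x:lp (fun _ : ℕ => ℝ) p) - d x n) - F ((y:lp (fun _ : ℕ => ℝ) p) - d y n)))
          Filter.atTop (nhds (Φ x + Φ y)) := by
        have ht : Filter.Tendsto (fun n =>
            F (((x + y : W) : lp (fun _ : ℕ => ℝ) p) - (d x n + d y n))
            - F ((x:lp (fun _ : ℕ => ℝ) p) - d x n) - F ((y:lp (fun _ : ℕ => ℝ) p) - d y n))
            Filter.atTop (nhds 0) := by
          refine squeeze_zero_norm (a := fun n =>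
              M * (‖(x:lp (fun _ : ℕ => ℝ) p) - d x n‖ + ‖(y:lp (fun _ : ℕ => ℝ) p) - d y n‖))
              (fun n => ?_) ?_
          · show _ ≤ M * (‖(x:lp (fun _ : ℕ => ℝ) p) - d x n‖ + ‖(y:lp (fun _ : ℕ => ℝ) p) - d y n‖)
            have := hM ((x:lp (fun _ : ℕ => ℝ) p) - d x n) ((y:lp (fun _ : ℕ => ℝ) p) - d y n)
            have hrw : ((x:lp (fun _ : ℕ => ℝ) p) - d x n) + ((y:lp (fun _ : ℕ => ℝ) p) - d y n)
                = ((x + y : W) : lp (fun _ : ℕ => ℝ) p) - (d x n + d y n) := by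
              push_cast; abel
            rwa [hrw] at this
          · have h1 : Filter.Tendsto (fun n => ‖(x:lp (fun _ : ℕ => ℝ) p) - d x n‖)
                Filter.atTop (nhds 0) := by
              refine squeeze_zero_norm (a := fun n => (1/2:ℝ)^n)
                (fun n => by rw [norm_norm]; exact hd2 x n) ?_
              exact tendsto_pow_atTop_nhds_zero_of_lt_one (by norm_num) (by norm_num)
            have h2 : Filter.Tendsto (fun n => ‖(y:lp (fun _ : ℕ => ℝ) p) - d y n‖)
                Filter.atTop (nhds 0) := by
              refine squeeze_zero_norm (a := fun n => (1/2:ℝ)^n)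
                (fun n => by rw [norm_norm]; exact hd2 y n) ?_
              exact tendsto_pow_atTop_nhds_zero_of_lt_one (by norm_num) (by norm_num)
            have := (h1.add h2).const_mul M
            simpa using this
        have := ((hΦ x).add (hΦ y)).add ht
        simpa using this
      convert hsplit using 2 with n
      have hg : G (d x n + d y n) = G (d x n) + G (d y n) := hGadd _ _ (hd1 x n) (hd1 y n)
      simp only [a]
      rw [hg]; abel
    exact tendsto_nhds_unique h1 h2
  have hsmul : ∀ (c : ℝ) (x : W), Φ (c • x) = c • Φ x := by
    intro c x
    have he1 : ∀ n, c • d x n ∈ D := fun n => Submodule.smul_mem D c (hd1 x n)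
    have he2 : Filter.Tendsto (fun n => c • d x n) Filter.atTop
        (nhds ((c • x : W) : lp (fun _ : ℕ => ℝ) p)) := by
      have := (hdlim x).const_smul c
      simpa using this
    have h1 := hC (c • x) (fun n => c • d x n) he1 he2
    have h2 : Filter.Tendsto (fun n => G (c • d x n)
        + F (((c • x : W) : lp (fun _ : ℕ => ℝ) p) - c • d x n))
        Filter.atTop (nhds (c • Φ x)) := by
      have := (hΦ x).const_smul c
      convert this using 2 with n
      have hrw : ((c • x : W) : lp (fun _ : ℕ => ℝ) p) - c • d x n
          = c • ((x:lp (fun _ : ℕ => ℝ) p) - d x n) := by push_cast; rw [smul_sub]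
      rw [hGsmul c _ (hd1 x n), hrw, hhom]
      simp only [a, smul_add]
    exact tendsto_nhds_unique h1 h2
  -- the bound
  have hbound : ∀ x : W, ‖F ↑x - Φ x‖ ≤ (M + K) * ‖(x : lp (fun _ : ℕ => ℝ) p)‖ := by
    intro x
    have hlim1 : Filter.Tendsto (fun n => ‖F ↑x - a x n‖) Filter.atTop
        (nhds ‖F ↑x - Φ x‖) := (((hΦ x).const_sub (F ↑x)).norm)
    have hlim2 : Filter.Tendsto (fun n =>
        M * (‖(x:lp (fun _ : ℕ => ℝ) p) - d x n‖ + ‖d x n‖) + K * ‖d x n‖) Filter.atTop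
        (nhds ((M + K) * ‖(x : lp (fun _ : ℕ => ℝ) p)‖)) := by
      have h1 : Filter.Tendsto (fun n => ‖(x:lp (fun _ : ℕ => ℝ) p) - d x n‖)
          Filter.atTop (nhds 0) := by
        refine squeeze_zero_norm (a := fun n => (1/2:ℝ)^n)
          (fun n => by rw [norm_norm]; exact hd2 x n) ?_
        exact tendsto_pow_atTop_nhds_zero_of_lt_one (by norm_num) (by norm_num)
      have h2 : Filter.Tendsto (fun n => ‖d x n‖) Filter.atTop
          (nhds ‖(x : lp (fun _ : ℕ => ℝ) p)‖) := (hdlim x).norm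
      have := ((h1.add h2).const_mul M).add (h2.const_mul K)
      simpa [add_mul] using this
    refine le_of_tendsto_of_tendsto' hlim1 hlim2 (fun n => ?_)
    have heq : F ↑x - a x n = (F ↑x - F ((x:lp (fun _ : ℕ => ℝ) p) - d x n) - F (d x n))
        + (F (d x n) - G (d x n)) := by
      simp only [a]; abel
    calc ‖F ↑x - a x n‖ ≤ ‖F ↑x - F ((x:lp (fun _ : ℕ => ℝ) p) - d x n) - F (d x n)‖
          + ‖F (d x n) - G (d x n)‖ := by rw [heq]; exact norm_add_le _ _
      _ ≤ M * (‖(x:lp (fun _ : ℕ => ℝ) p) - d x n‖ + ‖d x n‖) + K * ‖d x n‖ := by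
          refine add_le_add ?_ (hGkey _ (hd1 x n))
          have := hM ((x:lp (fun _ : ℕ => ℝ) p) - d x n) (d x n)
          have hx2 : (x:lp (fun _ : ℕ => ℝ) p) - d x n + d x n
              = (x:lp (fun _ : ℕ => ℝ) p) := by abel
          rwa [hx2] at this
  -- assemble the linear map
  let L : W →ₗ[ℝ] Y :=
    { toFun := Φ
      map_add' := hadd
      map_smul' := hsmul }
  have main : ∀ x : W, ‖F ↑x - L x‖ ≤ (M + K) * ‖(x : lp (fun _ : ℕ => ℝ) p)‖ := hbound
  refine ⟨⟨L, M + K, main⟩, W, Submodule.isClosed_topologicalClosure D, ?_, L, M + K, main⟩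
  -- W is infinite-dimensional
  intro hfin
  have humem : ∀ n, u n ∈ W := fun n =>
    D.le_topologicalClosure (Submodule.subset_span (Set.mem_range_self n))
  have hliW : LinearIndependent ℝ (fun n => (⟨u n, humem n⟩ : W)) := by
    have : u = (W.subtype) ∘ (fun n => (⟨u n, humem n⟩ : W)) := rfl
    rw [this] at hli
    exact LinearIndependent.of_comp W.subtype hli
  exact absurd hliW.finite (by simp [not_finite_iff_infinite]; infer_instance)
end
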